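/- arXiv:1102.2551 — 8 statements merged into one kernel-verified Lean document; each statement's English description precedes it below -/
import Mathlib

section
/- Let r : [0,1] → ℝ be concave, let (Ω, P) be a probability space and Q : Ω → ℝ^A an integrable random vector (A a finite set). For n = 1,…,N let s_n : ℝ^A → [0,1] and i_n : ℝ^A → [0,1]^A be measurable functions with s_n(q) + Σ_{a∈A} i_{n,a}(q) ≤ 1 for all q. Define the averaged controls s̄ = (1/N) Σ_{n=1}^N s_n and ī_a = (1/N) Σ_{n=1}^N i_{n,a}. Then s̄(q) + Σ_{a∈A} ī_a(q) ≤ 1 for all q, E[ī_a(Q)] = (1/N) Σ_{n=1}^N E[i_{n,a}(Q)] for each a ∈ A, and Σ_{n=1}^N E[ r(s_n(Q)) + Σ_{a∈A} i_{n,a}(Q)·Q_a ] ≤ N · E[ r(s̄(Q)) + Σ_{a∈A} ī_a(Q)·Q_a ]. -/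
open Set MeasureTheory

/-- A concave function on `Icc 0 1` is bounded there. -/
lemma concave_bdd (r : ℝ → ℝ) (hr : ConcaveOn ℝ (Icc 0 1) r) :
    ∃ C : ℝ, ∀ x ∈ Icc (0:ℝ) 1, |r x| ≤ C := by
  set m : ℝ := min (r 0) (r 1) with hm
  have h0 : (0:ℝ) ∈ Icc (0:ℝ) 1 := by constructor <;> norm_num
  have h1 : (1:ℝ) ∈ Icc (0:ℝ) 1 := by constructor <;> norm_num
  have hlow : ∀ x ∈ Icc (0:ℝ) 1, m ≤ r x := by
    intro x hx
    have := hr.2 h0 h1 (by linarith [hx.2] : (0:ℝ) ≤ 1 - x) hx.1 (by ring)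
    have hmin0 : m ≤ r 0 := min_le_left _ _
    have hmin1 : m ≤ r 1 := min_le_right _ _
    simp only [smul_eq_mul, mul_zero, mul_one, zero_add] at this
    nlinarith [hx.1, hx.2]
  refine ⟨|2 * r (1/2) - m| + |m|, fun x hx => ?_⟩
  have hx' : (1 - x) ∈ Icc (0:ℝ) 1 := ⟨by linarith [hx.2], by linarith [hx.1]⟩
  have hj := hr.2 (x := x) (y := 1 - x) hx hx' (by norm_num : (0:ℝ) ≤ 1/2)
    (by norm_num : (0:ℝ) ≤ 1/2) (by norm_num)
  simp only [smul_eq_mul] at hj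
  have hxx : (1/2 : ℝ) * x + 1/2 * (1 - x) = 1/2 := by ring
  rw [hxx] at hj
  have h2 := hlow _ hx'
  have h3 := hlow _ hx
  rw [abs_le]
  have ha1 := abs_nonneg (2 * r (1/2) - m)
  have ha2 := abs_nonneg m
  constructor
  · have := neg_abs_le m
    linarith
  · have := le_abs_self (2 * r (1/2) - m)
    have := neg_abs_le m
    linarith

/-- Composition of a concave function with a measurable `[0,1]`-valued map is measurable. -/
lemma concave_comp_measurable {Ω : Type*} [MeasurableSpace Ω]
    (r : ℝ → ℝ) (hr : ConcaveOn ℝ (Icc 0 1) r)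
    (f : Ω → ℝ) (hf : Measurable f) (hf01 : ∀ ω, f ω ∈ Icc (0:ℝ) 1) :
    Measurable fun ω => r (f ω) := by
  have hrc : ContinuousOn r (Ioo (0:ℝ) 1) :=
    (hr.subset Ioo_subset_Icc_self (convex_Ioo 0 1)).continuousOn isOpen_Ioo
  -- measurable extension of r from Ioo
  have hmeasIoo : MeasurableSet (Ioo (0:ℝ) 1) := measurableSet_Ioo
  set g : ℝ → ℝ := Function.extend (Subtype.val : Ioo (0:ℝ) 1 → ℝ)
      (fun x => r x.val) (fun _ => 0) with hg
  have hgmeas : Measurable g := by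
    apply (MeasurableEmbedding.subtype_coe hmeasIoo).measurable_extend
    · exact (continuousOn_iff_continuous_restrict.mp hrc).measurable
    · exact measurable_const
  have hgeq : ∀ x ∈ Ioo (0:ℝ) 1, g x = r x := by
    intro x hx
    have := (MeasurableEmbedding.subtype_coe hmeasIoo).injective.extend_apply
      (fun y : Ioo (0:ℝ) 1 => r y.val) (fun _ => 0) ⟨x, hx⟩
    simpa [hg] using this
  have : (fun ω => r (f ω)) =
      fun ω => if f ω = 0 then r 0 else if f ω = 1 then r 1 else g (f ω) := by
    funext ω
    by_cases h0 : f ω = 0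
    · simp [h0]
    · by_cases h1 : f ω = 1
      · simp [h0, h1]
      · have hmem : f ω ∈ Ioo (0:ℝ) 1 :=
          ⟨lt_of_le_of_ne (hf01 ω).1 (Ne.symm h0), lt_of_le_of_ne (hf01 ω).2 h1⟩
        simp [h0, h1, hgeq _ hmem]
  rw [this]
  apply Measurable.ite (hf (measurableSet_singleton 0)) measurable_const
  exact Measurable.ite (hf (measurableSet_singleton 1)) measurable_const (hgmeas.comp hf)

/-- Averaging per-impression controls preserves feasibility, preserves the
expected capacity usage, and weakly increases the (concave) objective of the deterministic
approximation problem. -/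
theorem stmt_4 {Ω : Type*} [MeasurableSpace Ω] (μ : Measure Ω) [IsProbabilityMeasure μ]
    {A : Type*} [Fintype A]
    (r : ℝ → ℝ) (hr_conc : ConcaveOn ℝ (Icc 0 1) r)
    (Q : Ω → A → ℝ) (hQmeas : Measurable Q)
    (hQint : ∀ a : A, Integrable (fun ω => Q ω a) μ)
    (N : ℕ) (hN : 0 < N)
    (s : Fin N → (A → ℝ) → ℝ) (i : Fin N → A → (A → ℝ) → ℝ)
    (hsmeas : ∀ n, Measurable (s n)) (himeas : ∀ n a, Measurable (i n a))
    (hs01 : ∀ n q, s n q ∈ Icc (0:ℝ) 1)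
    (hi01 : ∀ n a q, i n a q ∈ Icc (0:ℝ) 1)
    (hfeas : ∀ n q, s n q + ∑ a : A, i n a q ≤ 1) :
    (∀ q : A → ℝ,
        (1 / (N:ℝ)) * ∑ n : Fin N, s n q + ∑ a : A, (1 / (N:ℝ)) * ∑ n : Fin N, i n a q ≤ 1) ∧
    (∀ a : A,
        ∫ ω, (1 / (N:ℝ)) * ∑ n : Fin N, i n a (Q ω) ∂μ
          = (1 / (N:ℝ)) * ∑ n : Fin N, ∫ ω, i n a (Q ω) ∂μ) ∧
    (∑ n : Fin N, ∫ ω, (r (s n (Q ω)) + ∑ a : A, i n a (Q ω) * Q ω a) ∂μ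
        ≤ (N:ℝ) * ∫ ω, (r ((1 / (N:ℝ)) * ∑ n : Fin N, s n (Q ω))
            + ∑ a : A, ((1 / (N:ℝ)) * ∑ n : Fin N, i n a (Q ω)) * Q ω a) ∂μ) := by
  have hNpos : (0:ℝ) < N := Nat.cast_pos.mpr hN
  have hNne : (N:ℝ) ≠ 0 := ne_of_gt hNpos
  -- Part 1: feasibility of the average
  have part1 : ∀ q : A → ℝ,
      (1 / (N:ℝ)) * ∑ n : Fin N, s n q + ∑ a : A, (1 / (N:ℝ)) * ∑ n : Fin N, i n a q ≤ 1 := by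
    intro q
    have key : ∑ n : Fin N, (s n q + ∑ a : A, i n a q) ≤ (N:ℝ) := by
      calc ∑ n : Fin N, (s n q + ∑ a : A, i n a q)
          ≤ ∑ _n : Fin N, (1:ℝ) := Finset.sum_le_sum fun n _ => hfeas n q
        _ = (N:ℝ) := by simp
    have expand : (1 / (N:ℝ)) * ∑ n : Fin N, s n q
        + ∑ a : A, (1 / (N:ℝ)) * ∑ n : Fin N, i n a q
        = (1 / (N:ℝ)) * ∑ n : Fin N, (s n q + ∑ a : A, i n a q) := by
      rw [Finset.sum_add_distrib, mul_add, ← Finset.mul_sum, Finset.sum_comm]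
    rw [expand]
    rw [div_mul_eq_mul_div, one_mul, div_le_one hNpos]
    exact key
  -- basic integrability facts
  have hiQmeas : ∀ n a, Measurable fun ω => i n a (Q ω) := fun n a => (himeas n a).comp hQmeas
  have hsQmeas : ∀ n, Measurable fun ω => s n (Q ω) := fun n => (hsmeas n).comp hQmeas
  have hiQint : ∀ n a, Integrable (fun ω => i n a (Q ω)) μ := by
    intro n a
    refine (integrable_const (1:ℝ)).mono' (hiQmeas n a).aestronglyMeasurable ?_
    filter_upwards with ω
    rw [Real.norm_eq_abs, abs_le]
    exact ⟨by linarith [(hi01 n a (Q ω)).1], (hi01 n a (Q ω)).2⟩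
  have hiQQint : ∀ n a, Integrable (fun ω => i n a (Q ω) * Q ω a) μ := by
    intro n a
    apply Integrable.bdd_mul (c := 1) (hQint a) (hiQmeas n a).aestronglyMeasurable
    filter_upwards with ω
    rw [Real.norm_eq_abs, abs_le]
    exact ⟨by linarith [(hi01 n a (Q ω)).1], (hi01 n a (Q ω)).2⟩
  -- Part 2
  have part2 : ∀ a : A,
      ∫ ω, (1 / (N:ℝ)) * ∑ n : Fin N, i n a (Q ω) ∂μ
        = (1 / (N:ℝ)) * ∑ n : Fin N, ∫ ω, i n a (Q ω) ∂μ := by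
    intro a
    rw [integral_const_mul, integral_finset_sum _ fun n _ => hiQint n a]
  -- Part 3
  obtain ⟨C, hC⟩ := concave_bdd r hr_conc
  have hrint : ∀ (f : Ω → ℝ), Measurable f → (∀ ω, f ω ∈ Icc (0:ℝ) 1) →
      Integrable (fun ω => r (f ω)) μ := by
    intro f hf hf01
    refine (integrable_const C).mono'
      (concave_comp_measurable r hr_conc f hf hf01).aestronglyMeasurable ?_
    filter_upwards with ω
    exact hC _ (hf01 ω)
  -- averaged controls
  set sbar : Ω → ℝ := fun ω => (1 / (N:ℝ)) * ∑ n : Fin N, s n (Q ω) with hsbar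
  have hsbar_mem : ∀ ω, sbar ω ∈ Icc (0:ℝ) 1 := by
    intro ω
    simp only [hsbar]
    constructor
    · apply mul_nonneg (by positivity)
      exact Finset.sum_nonneg fun n _ => (hs01 n (Q ω)).1
    · rw [div_mul_eq_mul_div, one_mul, div_le_one hNpos]
      calc ∑ n : Fin N, s n (Q ω) ≤ ∑ _n : Fin N, (1:ℝ) :=
            Finset.sum_le_sum fun n _ => (hs01 n (Q ω)).2
        _ = (N:ℝ) := by simp
  have hsbar_meas : Measurable sbar :=
    (measurable_const.mul (Finset.measurable_sum _ fun n _ => hsQmeas n))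
  have hibarQQint : ∀ a, Integrable
      (fun ω => ((1 / (N:ℝ)) * ∑ n : Fin N, i n a (Q ω)) * Q ω a) μ := by
    intro a
    have : (fun ω => ((1 / (N:ℝ)) * ∑ n : Fin N, i n a (Q ω)) * Q ω a)
        = fun ω => (1 / (N:ℝ)) * ∑ n : Fin N, (i n a (Q ω) * Q ω a) := by
      funext ω; rw [mul_assoc, Finset.sum_mul]
    rw [this]
    exact (integrable_finset_sum _ fun n _ => hiQQint n a).const_mul _
  -- integrands
  set G : Ω → ℝ := fun ω => r (sbar ω)
      + ∑ a : A, ((1 / (N:ℝ)) * ∑ n : Fin N, i n a (Q ω)) * Q ω a with hG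
  have hGint : Integrable G μ :=
    (hrint sbar hsbar_meas hsbar_mem).add (integrable_finset_sum _ fun a _ => hibarQQint a)
  have hgnint : ∀ n : Fin N, Integrable
      (fun ω => r (s n (Q ω)) + ∑ a : A, i n a (Q ω) * Q ω a) μ := by
    intro n
    exact (hrint _ (hsQmeas n) fun ω => hs01 n (Q ω)).add
      (integrable_finset_sum _ fun a _ => hiQQint n a)
  -- pointwise Jensen
  have hpoint : ∀ ω, ∑ n : Fin N, (r (s n (Q ω)) + ∑ a : A, i n a (Q ω) * Q ω a)
      ≤ (N:ℝ) * G ω := by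
    intro ω
    have hjensen : ∑ n : Fin N, (1 / (N:ℝ)) * r (s n (Q ω)) ≤ r (sbar ω) := by
      have := hr_conc.le_map_sum (t := Finset.univ) (w := fun _ : Fin N => 1 / (N:ℝ))
        (p := fun n => s n (Q ω)) (fun n _ => by positivity)
        (by simp [Finset.sum_const, hNne])
        (fun n _ => hs01 n (Q ω))
      simp only [smul_eq_mul] at this
      have heq : ∑ n : Fin N, (1 / (N:ℝ)) * s n (Q ω)
          = (1 / (N:ℝ)) * ∑ n : Fin N, s n (Q ω) := by rw [Finset.mul_sum]
      rw [heq] at this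
      exact this
    have hlin : ∑ n : Fin N, ∑ a : A, i n a (Q ω) * Q ω a
        = (N:ℝ) * ∑ a : A, ((1 / (N:ℝ)) * ∑ n : Fin N, i n a (Q ω)) * Q ω a := by
      rw [Finset.mul_sum, Finset.sum_comm]
      congr 1
      funext a
      rw [mul_assoc, mul_comm ((N:ℝ)), mul_assoc, Finset.sum_mul]
      field_simp
      exact Finset.sum_congr rfl fun _ _ => mul_comm _ _
    rw [Finset.sum_add_distrib, hG, mul_add, hlin]
    have : ∑ n : Fin N, r (s n (Q ω)) ≤ (N:ℝ) * r (sbar ω) := by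
      have h2 : ∑ n : Fin N, (1 / (N:ℝ)) * r (s n (Q ω))
          = (1 / (N:ℝ)) * ∑ n : Fin N, r (s n (Q ω)) := by rw [Finset.mul_sum]
      rw [h2] at hjensen
      calc ∑ n : Fin N, r (s n (Q ω))
          = (N:ℝ) * ((1 / (N:ℝ)) * ∑ n : Fin N, r (s n (Q ω))) := by field_simp
        _ ≤ (N:ℝ) * r (sbar ω) := by
            exact mul_le_mul_of_nonneg_left hjensen (le_of_lt hNpos)
    linarith
  -- integrate
  have part3 : ∑ n : Fin N, ∫ ω, (r (s n (Q ω)) + ∑ a : A, i n a (Q ω) * Q ω a) ∂μ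
      ≤ (N:ℝ) * ∫ ω, G ω ∂μ := by
    rw [← integral_finset_sum _ fun n _ => hgnint n, ← integral_const_mul]
    exact integral_mono (integrable_finset_sum _ fun n _ => hgnint n)
      (hGint.const_mul _) hpoint
  exact ⟨part1, part2, part3⟩
end

section
/- Let r : [0,1] → ℝ be a regular revenue function with value function R(c) = max_{s∈[0,1]}(r(s) + (1−s)c). Let Q : Ω → ℝ^A be an integrable random vector on a probability space, extended by Q_0 ≡ 0, let ρ_a ∈ (0,1) for a in the finite set A, and let v ∈ ℝ^A be extended by v_0 = 0. Then for every measurable pair s : Ω → [0,1], i : Ω → [0,1]^A with s + Σ_{a∈A} i_a ≤ 1 almost surely and E[i_a] = ρ_a for every a ∈ A, one has E[ r(s) + Σ_{a∈A} i_a · Q_a ] ≤ E[ R( max_{a∈A₀} (Q_a − v_a) ) ] + Σ_{a∈A} v_a ρ_a, where A₀ = {0} ∪ A. -/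
open Set MeasureTheory

/-- Weak duality for the deterministic approximation problem: any feasible
control pair `(s, i)` satisfying the capacity constraints `E[i_a] = ρ_a` has objective value
at most the Lagrangian dual objective `E[R(max_{a ∈ A₀} (Q_a - v_a))] + Σ_a v_a ρ_a`,
where `A₀ = {0} ∪ A` with `Q_0 ≡ 0` and `v_0 = 0`. -/
theorem stmt_5 {Ω : Type*} [MeasurableSpace Ω] (μ : Measure Ω) [IsProbabilityMeasure μ]
    {A : Type*} [Fintype A]
    (r R : ℝ → ℝ)
    (hr_cont : ContinuousOn r (Icc 0 1))
    (hr_conc : ConcaveOn ℝ (Icc 0 1) r)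
    (hr_nonneg : ∀ u ∈ Icc (0:ℝ) 1, 0 ≤ r u)
    (hr_bdd : ∃ M : ℝ, ∀ u ∈ Icc (0:ℝ) 1, r u ≤ M)
    (hr_zero : r 0 = 0)
    (hR : ∀ c : ℝ, IsGreatest ((fun u => r u + (1 - u) * c) '' Icc (0:ℝ) 1) (R c))
    (Q : Ω → A → ℝ) (hQmeas : Measurable Q)
    (hQint : ∀ a : A, Integrable (fun ω => Q ω a) μ)
    (ρ : A → ℝ) (hρ : ∀ a, ρ a ∈ Ioo (0:ℝ) 1)
    (v : A → ℝ)
    (s : Ω → ℝ) (i : A → Ω → ℝ)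
    (hsmeas : Measurable s) (himeas : ∀ a, Measurable (i a))
    (hs01 : ∀ ω, s ω ∈ Icc (0:ℝ) 1)
    (hi01 : ∀ a ω, i a ω ∈ Icc (0:ℝ) 1)
    (hfeas : ∀ᵐ ω ∂μ, s ω + ∑ a : A, i a ω ≤ 1)
    (hcap : ∀ a, ∫ ω, i a ω ∂μ = ρ a) :
    ∫ ω, (r (s ω) + ∑ a : A, i a ω * Q ω a) ∂μ
      ≤ (∫ ω, R (Finset.univ.sup' Finset.univ_nonempty
            (fun o : Option A => o.elim 0 (fun a => Q ω a - v a))) ∂μ)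
        + ∑ a : A, v a * ρ a := by
  classical
  obtain ⟨M, hM⟩ := hr_bdd
  set c : Ω → ℝ := fun ω => Finset.univ.sup' Finset.univ_nonempty
      (fun o : Option A => o.elim 0 (fun a => Q ω a - v a)) with hcdef
  have hQa : ∀ a, Measurable fun ω => Q ω a := fun a =>
    (measurable_pi_apply a).comp hQmeas
  have hc0 : ∀ ω, 0 ≤ c ω := fun ω =>
    Finset.le_sup'
      (fun o : Option A => o.elim 0 (fun a => Q ω a - v a)) (Finset.mem_univ none)
  have hcge : ∀ a ω, Q ω a - v a ≤ c ω := fun a ω =>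
    Finset.le_sup'
      (fun o : Option A => o.elim 0 (fun a => Q ω a - v a)) (Finset.mem_univ (some a))
  have hcmeas : Measurable c := by
    have h : Measurable ((Finset.univ : Finset (Option A)).sup' Finset.univ_nonempty
        (fun o (ω : Ω) => o.elim 0 (fun a => Q ω a - v a))) := by
      apply Finset.measurable_sup'
      intro o _
      cases o with
      | none => exact measurable_const
      | some a => exact (hQa a).sub measurable_const
    have hceq : c = (Finset.univ : Finset (Option A)).sup' Finset.univ_nonempty
        (fun o (ω : Ω) => o.elim 0 (fun a => Q ω a - v a)) := by
      funext ω
      rw [hcdef, Finset.sup'_apply]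
    rw [hceq]
    exact h
  -- bounds on R
  have hRub : ∀ x : ℝ, ∀ u ∈ Icc (0:ℝ) 1, r u + (1 - u) * x ≤ R x := fun x u hu =>
    (hR x).2 ⟨u, hu, rfl⟩
  have hR0 : ∀ x : ℝ, 0 ≤ R x := by
    intro x
    have h1 : (1:ℝ) ∈ Icc (0:ℝ) 1 := by norm_num
    have := hRub x 1 h1
    have := hr_nonneg 1 h1
    nlinarith
  have hRle : ∀ x : ℝ, R x ≤ M + |x| := by
    intro x
    obtain ⟨u, hu, hux⟩ := (hR x).1
    have h1 := hM u hu
    have h2 : (1 - u) * x ≤ |x| := by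
      calc (1 - u) * x ≤ |(1 - u) * x| := le_abs_self _
        _ = (1 - u) * |x| := by rw [abs_mul, abs_of_nonneg (by linarith [hu.2] : (0:ℝ) ≤ 1 - u)]
        _ ≤ 1 * |x| := by nlinarith [abs_nonneg x, hu.1]
        _ = |x| := one_mul _
    rw [← hux]
    simp only []
    linarith
  have hRmono : Monotone R := by
    intro x y hxy
    obtain ⟨u, hu, hux⟩ := (hR x).1
    have : r u + (1 - u) * x ≤ r u + (1 - u) * y := by nlinarith [hu.1, hu.2]
    calc R x = r u + (1 - u) * x := hux.symm
      _ ≤ r u + (1 - u) * y := this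
      _ ≤ R y := hRub y u hu
  -- measurability of r ∘ s
  have hrs_meas : Measurable fun ω => r (s ω) := by
    have : Continuous ((Icc (0:ℝ) 1).restrict r) := hr_cont.restrict
    have : Measurable fun ω => (Icc (0:ℝ) 1).restrict r ⟨s ω, hs01 ω⟩ :=
      this.measurable.comp (hsmeas.subtype_mk)
    exact this
  -- integrabilities
  have hint_rs : Integrable (fun ω => r (s ω)) μ := by
    refine Integrable.mono' (integrable_const M) hrs_meas.aestronglyMeasurable ?_
    filter_upwards with ω
    rw [Real.norm_eq_abs, abs_of_nonneg (hr_nonneg _ (hs01 ω))]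
    exact hM _ (hs01 ω)
  have hint_i : ∀ a, Integrable (i a) μ := by
    intro a
    refine Integrable.mono' (integrable_const 1) (himeas a).aestronglyMeasurable ?_
    filter_upwards with ω
    rw [Real.norm_eq_abs, abs_of_nonneg (hi01 a ω).1]
    exact (hi01 a ω).2
  have hint_iQ : ∀ a, Integrable (fun ω => i a ω * Q ω a) μ := by
    intro a
    refine Integrable.mono' ((hQint a).abs) ((himeas a).mul (hQa a)).aestronglyMeasurable ?_
    filter_upwards with ω
    rw [Real.norm_eq_abs, abs_mul]
    have h1 := (hi01 a ω).1
    have h2 := (hi01 a ω).2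
    have := abs_nonneg (Q ω a)
    calc |i a ω| * |Q ω a| = i a ω * |Q ω a| := by rw [abs_of_nonneg h1]
      _ ≤ 1 * |Q ω a| := by nlinarith
      _ = |Q ω a| := one_mul _
  have hint_Rc : Integrable (fun ω => R (c ω)) μ := by
    refine Integrable.mono'
      (g := fun ω => M + ∑ a : A, |Q ω a - v a|) ?_
      ((hRmono.measurable.comp hcmeas).aestronglyMeasurable) ?_
    · exact (integrable_const M).add
        (integrable_finset_sum _ fun a _ => ((hQint a).sub (integrable_const (v a))).abs)
    · filter_upwards with ω
      rw [Real.norm_eq_abs, abs_of_nonneg (hR0 _)]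
      have hcb : c ω ≤ ∑ a : A, |Q ω a - v a| := by
        apply Finset.sup'_le
        intro o _
        cases o with
        | none =>
          simpa using Finset.sum_nonneg fun a _ => abs_nonneg (Q ω a - v a)
        | some a =>
          calc (Option.some a).elim 0 (fun a => Q ω a - v a) = Q ω a - v a := rfl
            _ ≤ |Q ω a - v a| := le_abs_self _
            _ ≤ ∑ b : A, |Q ω b - v b| :=
              Finset.single_le_sum (f := fun b => |Q ω b - v b|)
                (fun b _ => abs_nonneg _) (Finset.mem_univ a)
      calc R (c ω) ≤ M + |c ω| := hRle _
        _ = M + c ω := by rw [abs_of_nonneg (hc0 ω)]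
        _ ≤ M + ∑ a : A, |Q ω a - v a| := by linarith
  have hint_lhs : Integrable (fun ω => r (s ω) + ∑ a : A, i a ω * Q ω a) μ :=
    hint_rs.add (integrable_finset_sum _ fun a _ => hint_iQ a)
  have hint_rhs : Integrable (fun ω => R (c ω) + ∑ a : A, v a * i a ω) μ :=
    hint_Rc.add (integrable_finset_sum _ fun a _ => (hint_i a).const_mul (v a))
  -- pointwise key inequality
  have key : ∀ᵐ ω ∂μ, r (s ω) + ∑ a : A, i a ω * Q ω a
      ≤ R (c ω) + ∑ a : A, v a * i a ω := by
    filter_upwards [hfeas] with ω hω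
    have h1 : ∀ a : A, i a ω * Q ω a ≤ i a ω * c ω + v a * i a ω := by
      intro a
      have := hcge a ω
      have := (hi01 a ω).1
      nlinarith
    have h2 : ∑ a : A, i a ω * Q ω a ≤ (∑ a : A, i a ω) * c ω + ∑ a : A, v a * i a ω := by
      rw [Finset.sum_mul, ← Finset.sum_add_distrib]
      exact Finset.sum_le_sum fun a _ => h1 a
    have h3 : (∑ a : A, i a ω) * c ω ≤ (1 - s ω) * c ω := by
      have := hc0 ω
      nlinarith
    have h4 : r (s ω) + (1 - s ω) * c ω ≤ R (c ω) := hRub _ _ (hs01 ω)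
    linarith
  calc ∫ ω, (r (s ω) + ∑ a : A, i a ω * Q ω a) ∂μ
      ≤ ∫ ω, (R (c ω) + ∑ a : A, v a * i a ω) ∂μ :=
        integral_mono_ae hint_lhs hint_rhs key
    _ = (∫ ω, R (c ω) ∂μ) + ∑ a : A, v a * ρ a := by
        rw [integral_add hint_Rc (integrable_finset_sum _ fun a _ => (hint_i a).const_mul (v a)),
          integral_finset_sum _ fun a _ => (hint_i a).const_mul (v a)]
        congr 1
        refine Finset.sum_congr rfl fun a _ => ?_
        rw [integral_const_mul, hcap a]
end

section
/- Let r : [0,1] → ℝ be a regular revenue function such that for every c ∈ ℝ the maximizer s*(c) of s ↦ r(s)+(1−s)c over [0,1] is unique, and let R(c) = max_{s∈[0,1]}(r(s)+(1−s)c). Let Q : Ω → ℝ^A be an integrable random vector extended by Q_0 ≡ 0, ρ ∈ ℝ^A, v ∈ ℝ^A with v_0 = 0, and ψ(v) = E[R(max_{a∈A₀}(Q_a − v_a))] + Σ_{a∈A} v_a ρ_a, where A₀ = {0} ∪ A. Then for every nonempty subset α ⊆ A, the one-sided directional derivative of ψ at v in the direction 1_α exists and equals −E[ (1 − s*(max_{a∈A₀}(Q_a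 − v_a))) · 1{ max_{a∈α}(Q_a − v_a) > max_{a∈A₀∖α}(Q_a − v_a) } ] + Σ_{a∈α} ρ_a; i.e., (ψ(v + t·1_α) − ψ(v))/t converges to that value as t → 0⁺. -/
open Set MeasureTheory

section aux
variable {r sstar R : ℝ → ℝ}
  (hr_cont : ContinuousOn r (Icc 0 1))
  (hsstar_mem : ∀ c : ℝ, sstar c ∈ Icc (0:ℝ) 1)
  (hsstar_max : ∀ c : ℝ, ∀ t ∈ Icc (0:ℝ) 1,
    r t + (1 - t) * c ≤ r (sstar c) + (1 - sstar c) * c)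
  (hsstar_uniq : ∀ c : ℝ, ∀ t ∈ Icc (0:ℝ) 1,
    (∀ u ∈ Icc (0:ℝ) 1, r u + (1 - u) * c ≤ r t + (1 - t) * c) → t = sstar c)
  (hR : ∀ c : ℝ, R c = r (sstar c) + (1 - sstar c) * c)

include hsstar_mem hsstar_max hR in
lemma R_bounds {a b : ℝ} (hab : a ≤ b) :
    (1 - sstar a) * (b - a) ≤ R b - R a ∧ R b - R a ≤ (1 - sstar b) * (b - a) := by
  have h1 := hsstar_max b (sstar a) (hsstar_mem a)
  have h2 := hsstar_max a (sstar b) (hsstar_mem b)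
  rw [hR a, hR b]
  constructor <;> nlinarith

include hsstar_mem hsstar_max hR in
lemma R_lip {a b : ℝ} : |R b - R a| ≤ |b - a| := by
  rcases le_total a b with h | h
  · obtain ⟨h1, h2⟩ := R_bounds hsstar_mem hsstar_max hR h
    have ha := hsstar_mem a; have hb := hsstar_mem b
    simp only [mem_Icc] at ha hb
    rw [abs_of_nonneg (by nlinarith), abs_of_nonneg (by linarith)]
    nlinarith
  · obtain ⟨h1, h2⟩ := R_bounds hsstar_mem hsstar_max hR h
    have ha := hsstar_mem a; have hb := hsstar_mem b
    simp only [mem_Icc] at ha hb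
    rw [abs_of_nonpos (by nlinarith), abs_of_nonpos (by linarith)]
    nlinarith

include hr_cont hsstar_mem hsstar_max hsstar_uniq hR in
lemma sstar_cont : Continuous sstar := by
  rw [continuous_iff_continuousAt]
  intro c
  rw [Metric.continuousAt_iff]
  intro ε hε
  by_cases hK : ∃ u, u ∈ Icc (0:ℝ) 1 ∩ {u | ε ≤ |u - sstar c|}
  · set K : Set ℝ := Icc (0:ℝ) 1 ∩ {u | ε ≤ |u - sstar c|} with hKdef
    have hKcl : IsClosed {u : ℝ | ε ≤ |u - sstar c|} :=
      isClosed_le continuous_const ((continuous_id.sub continuous_const).abs)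
    have hKc : IsCompact K := isCompact_Icc.inter_right hKcl
    have hgc : ContinuousOn (fun u => r u + (1 - u) * c) K :=
      (hr_cont.add (((continuous_const.sub continuous_id).mul continuous_const).continuousOn)).mono inter_subset_left
    obtain ⟨u0, hu0K, hu0max⟩ := hKc.exists_isMaxOn hK hgc
    have hu0I : u0 ∈ Icc (0:ℝ) 1 := hu0K.1
    have hle : r u0 + (1 - u0) * c ≤ r (sstar c) + (1 - sstar c) * c :=
      hsstar_max c u0 hu0I
    have hne : r u0 + (1 - u0) * c ≠ r (sstar c) + (1 - sstar c) * c := by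
      intro heq
      have : u0 = sstar c := by
        refine hsstar_uniq c u0 hu0I (fun u hu => ?_)
        rw [heq]; exact hsstar_max c u hu
      have h2 := hu0K.2
      rw [this] at h2
      simp only [Set.mem_setOf_eq, sub_self, abs_zero] at h2
      linarith
    have hgap : 0 < (r (sstar c) + (1 - sstar c) * c) - (r u0 + (1 - u0) * c) :=
      lt_of_le_of_ne (by linarith) (by intro h; exact hne (by linarith))
    set gap := (r (sstar c) + (1 - sstar c) * c) - (r u0 + (1 - u0) * c)
    refine ⟨gap / 3, div_pos hgap (by norm_num), fun {c'} hc' => ?_⟩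
    rw [Real.dist_eq] at hc' ⊢
    by_contra hcon
    push_neg at hcon
    have hKmem : sstar c' ∈ K := ⟨hsstar_mem c', hcon⟩
    have hmaxK : r (sstar c') + (1 - sstar c') * c ≤ r u0 + (1 - u0) * c := hu0max hKmem
    have h1 := hsstar_max c' (sstar c) (hsstar_mem c)
    have hsc := hsstar_mem c; have hsc' := hsstar_mem c'
    simp only [mem_Icc] at hsc hsc'
    have habs := abs_lt.1 hc'
    nlinarith
  · push_neg at hK
    refine ⟨1, one_pos, fun {c'} _ => ?_⟩
    rw [Real.dist_eq]
    have h := hK (sstar c')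
    simp only [Set.mem_inter_iff, Set.mem_setOf_eq, not_and, not_le] at h
    exact h (hsstar_mem c')

include hr_cont hsstar_mem hsstar_max hsstar_uniq hR in
lemma R_left_deriv (c : ℝ) :
    Filter.Tendsto (fun t : ℝ => (R c - R (c - t)) / t) (nhdsWithin 0 (Ioi 0))
      (nhds (1 - sstar c)) := by
  have hcont : Filter.Tendsto (fun t : ℝ => 1 - sstar (c - t)) (nhdsWithin 0 (Ioi 0))
      (nhds (1 - sstar c)) := by
    have : Filter.Tendsto (fun t : ℝ => c - t) (nhdsWithin 0 (Ioi 0)) (nhds c) := by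
      have h : Filter.Tendsto (fun t : ℝ => c - t) (nhds 0) (nhds (c - 0)) :=
        tendsto_const_nhds.sub Filter.tendsto_id
      simpa using h.mono_left nhdsWithin_le_nhds
    exact (continuous_const.sub
      (sstar_cont hr_cont hsstar_mem hsstar_max hsstar_uniq hR)).tendsto c |>.comp this
  refine tendsto_of_tendsto_of_tendsto_of_le_of_le' hcont tendsto_const_nhds ?_ ?_
  · filter_upwards [self_mem_nhdsWithin] with t ht
    have ht0 : (0:ℝ) < t := ht
    have := (R_bounds hsstar_mem hsstar_max hR (by linarith : c - t ≤ c)).1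
    rw [le_div_iff₀ ht0]
    nlinarith
  · filter_upwards [self_mem_nhdsWithin] with t ht
    have ht0 : (0:ℝ) < t := ht
    have := (R_bounds hsstar_mem hsstar_max hR (by linarith : c - t ≤ c)).2
    rw [div_le_iff₀ ht0]
    nlinarith

end aux

/-- One-sided directional derivative of the dual objective
`ψ(v) = E[R(max_{a ∈ A₀}(Q_a - v_a))] + Σ_a v_a ρ_a` at `v` in the direction `1_α`, for a
nonempty subset `α ⊆ A`: the difference quotient along `t → 0⁺` converges to
`-E[(1 - s*(max_{a∈A₀}(Q_a - v_a))) · 1{max_{a∈α}(Q_a-v_a) > max_{a∈A₀∖α}(Q_a-v_a)}] + Σ_{a∈α} ρ_a`.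
Here `A₀ = {0} ∪ A`, `Q_0 ≡ 0`, `v_0 = 0`, `r` is a regular revenue function, `s*(c)` is its
unique maximizer and `R(c) = r(s*(c)) + (1 - s*(c))·c`. -/
theorem stmt_7 {Ω : Type*} [MeasurableSpace Ω] (μ : Measure Ω) [IsProbabilityMeasure μ]
    {A : Type*} [Fintype A] [DecidableEq A]
    (r sstar R : ℝ → ℝ)
    (hr_cont : ContinuousOn r (Icc 0 1))
    (hr_conc : ConcaveOn ℝ (Icc 0 1) r)
    (hr_nonneg : ∀ u ∈ Icc (0:ℝ) 1, 0 ≤ r u)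
    (hr_bdd : ∃ M : ℝ, ∀ u ∈ Icc (0:ℝ) 1, r u ≤ M)
    (hr_zero : r 0 = 0)
    (hsstar_mem : ∀ c : ℝ, sstar c ∈ Icc (0:ℝ) 1)
    (hsstar_max : ∀ c : ℝ, ∀ t ∈ Icc (0:ℝ) 1,
      r t + (1 - t) * c ≤ r (sstar c) + (1 - sstar c) * c)
    (hsstar_uniq : ∀ c : ℝ, ∀ t ∈ Icc (0:ℝ) 1,
      (∀ u ∈ Icc (0:ℝ) 1, r u + (1 - u) * c ≤ r t + (1 - t) * c) → t = sstar c)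
    (hR : ∀ c : ℝ, R c = r (sstar c) + (1 - sstar c) * c)
    (Q : Ω → A → ℝ) (hQmeas : Measurable Q)
    (hQint : ∀ a : A, Integrable (fun ω => Q ω a) μ)
    (ρ : A → ℝ) (v : A → ℝ)
    (α : Finset A) (hα : α.Nonempty) :
    let ψ : (A → ℝ) → ℝ := fun w =>
      (∫ ω, R (Finset.univ.sup' Finset.univ_nonempty
          (fun o : Option A => o.elim 0 (fun a => Q ω a - w a))) ∂μ)
        + ∑ a : A, w a * ρ a
    Filter.Tendsto
      (fun t : ℝ => (ψ (v + t • (fun a : A => if a ∈ α then (1:ℝ) else 0)) - ψ v) / t)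
      (nhdsWithin 0 (Set.Ioi 0))
      (nhds (-(∫ ω, (1 - sstar (Finset.univ.sup' Finset.univ_nonempty
              (fun o : Option A => o.elim 0 (fun a => Q ω a - v a))))
            * Set.indicator
                {ω' : Ω | ∀ o : Option A, o ∉ α.image some →
                  o.elim 0 (fun a => Q ω' a - v a)
                    < α.sup' hα (fun a => Q ω' a - v a)}
                1 ω ∂μ)
        + ∑ a ∈ α, ρ a)) := by
  intro ψ
  classical
  have hψ : ∀ w, ψ w = (∫ ω, R (Finset.univ.sup' Finset.univ_nonempty
      (fun o : Option A => o.elim 0 (fun a => Q ω a - w a))) ∂μ) + ∑ a : A, w a * ρ a :=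
    fun w => rfl
  set χ : A → ℝ := fun a => if a ∈ α then (1:ℝ) else 0 with hχdef
  set β : Finset (Option A) := α.image some with hβdef
  have hβ : β.Nonempty := hα.image some
  have hnone : (none : Option A) ∈ Finset.univ \ β := by simp [hβdef]
  have hrest : (Finset.univ \ β).Nonempty := ⟨none, hnone⟩
  have hQa : ∀ a, Measurable fun ω => Q ω a := fun a => (measurable_pi_apply a).comp hQmeas
  set N : Ω → ℝ := fun ω =>
    (Finset.univ \ β).sup' hrest (fun o : Option A => o.elim 0 (fun a => Q ω a - v a)) with hNdef
  set P : Ω → ℝ := fun ω => α.sup' hα (fun a => Q ω a - v a) with hPdef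
  set M : Ω → ℝ := fun ω => max (N ω) (P ω) with hMdef
  -- splitting the sup
  have hsplit : ∀ (w : A → ℝ) (ω : Ω),
      Finset.univ.sup' Finset.univ_nonempty
          (fun o : Option A => o.elim 0 (fun a => Q ω a - w a))
        = max ((Finset.univ \ β).sup' hrest
              (fun o : Option A => o.elim 0 (fun a => Q ω a - w a)))
            (α.sup' hα (fun a => Q ω a - w a)) := by
    intro w ω
    have hu : (Finset.univ \ β) ∪ β = (Finset.univ : Finset (Option A)) :=
      Finset.sdiff_union_of_subset (Finset.subset_univ β)
    have h1 : Finset.univ.sup' Finset.univ_nonempty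
        (fun o : Option A => o.elim 0 (fun a => Q ω a - w a))
        = ((Finset.univ \ β) ∪ β).sup' (hrest.mono Finset.subset_union_left)
            (fun o : Option A => o.elim 0 (fun a => Q ω a - w a)) := by
      exact Finset.sup'_congr _ hu.symm (fun _ _ => rfl)
    rw [h1, Finset.sup'_union hrest hβ]
    congr 1
    exact Finset.sup'_image hβ (fun o : Option A => o.elim 0 (fun a => Q ω a - w a))
  -- shifted sup
  have hshift : ∀ (t : ℝ) (ω : Ω),
      Finset.univ.sup' Finset.univ_nonempty
          (fun o : Option A => o.elim 0 (fun a => Q ω a - (v + t • χ) a))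
        = max (N ω) (P ω - t) := by
    intro t ω
    rw [hsplit (v + t • χ) ω]
    congr 1
    · refine Finset.sup'_congr _ rfl (fun o ho => ?_)
      rcases o with _ | a
      · rfl
      · have ha : a ∉ α := by
          rw [Finset.mem_sdiff, hβdef] at ho
          intro hmem
          exact ho.2 (Finset.mem_image_of_mem some hmem)
        simp [hχdef, ha]
    · have h1 : α.sup' hα (fun a => Q ω a - (v + t • χ) a)
          = α.sup' hα (fun a => (Q ω a - v a) - t) := by
        refine Finset.sup'_congr _ rfl (fun a ha => ?_)
        simp [hχdef, ha]
        ring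
      rw [h1]
      exact (Finset.comp_sup'_eq_sup'_comp hα (fun x => x - t)
        (fun x y => (max_sub_sub_right x y t).symm)).symm
  have hMv : ∀ ω, Finset.univ.sup' Finset.univ_nonempty
      (fun o : Option A => o.elim 0 (fun a => Q ω a - v a)) = M ω := fun ω => hsplit v ω
  -- measurability
  have hN_meas : Measurable N := by
    have h := Finset.measurable_sup' (s := Finset.univ \ β) hrest
      (f := fun o (ω : Ω) => (o.elim 0 (fun a => Q ω a - v a) : ℝ))
      (fun o _ => by rcases o with _ | a
                     · exact measurable_const
                     · exact (hQa a).sub measurable_const)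
    have : N = fun ω => ((Finset.univ \ β).sup' hrest
        (fun o (ω : Ω) => (o.elim 0 (fun a => Q ω a - v a) : ℝ))) ω := by
      funext ω; rw [Finset.sup'_apply]
    rw [this]
    exact h.comp measurable_id |>.mono le_rfl le_rfl
  have hP_meas : Measurable P := by
    have h := Finset.measurable_sup' (s := α) hα
      (f := fun a (ω : Ω) => Q ω a - v a)
      (fun a _ => (hQa a).sub measurable_const)
    have : P = fun ω => (α.sup' hα (fun a (ω : Ω) => Q ω a - v a)) ω := by
      funext ω; rw [Finset.sup'_apply]
    rw [this]
    exact h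
  have hM_meas : Measurable M := hN_meas.max hP_meas
  -- R is continuous
  have hRlip : ∀ a b : ℝ, |R b - R a| ≤ |b - a| := fun a b => R_lip hsstar_mem hsstar_max hR
  have hR_cont : Continuous R := by
    have : LipschitzWith 1 R := LipschitzWith.of_dist_le_mul (fun a b => by
      simp only [NNReal.coe_one, one_mul, Real.dist_eq]; exact hRlip b a)
    exact this.continuous
  -- bounds on N, P
  set C : Ω → ℝ := fun ω => ∑ a, (|Q ω a| + |v a|) with hCdef
  have hC0 : ∀ ω, 0 ≤ C ω := fun ω =>
    Finset.sum_nonneg (fun a _ => add_nonneg (abs_nonneg _) (abs_nonneg _))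
  have hterm : ∀ ω (a : A), Q ω a - v a ≤ C ω := by
    intro ω a
    have h1 : Q ω a - v a ≤ |Q ω a| + |v a| := by
      have := abs_nonneg (Q ω a); have := le_abs_self (Q ω a); have := neg_abs_le (v a)
      linarith [le_abs_self (Q ω a), neg_abs_le (v a)]
    refine h1.trans ?_
    simp only [hCdef]
    exact Finset.single_le_sum (f := fun a => |Q ω a| + |v a|)
      (fun a _ => add_nonneg (abs_nonneg _) (abs_nonneg _)) (Finset.mem_univ a)
  have hN0 : ∀ ω, 0 ≤ N ω := by
    intro ω
    exact Finset.le_sup' (fun o : Option A => o.elim 0 (fun a => Q ω a - v a)) hnone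
  have hNC : ∀ ω, N ω ≤ C ω := by
    intro ω
    refine Finset.sup'_le _ _ (fun o _ => ?_)
    rcases o with _ | a
    · exact hC0 ω
    · exact hterm ω a
  have hPC : ∀ ω, P ω ≤ C ω := fun ω => Finset.sup'_le _ _ (fun a _ => hterm ω a)
  have hCint : Integrable C μ := by
    refine integrable_finset_sum _ (fun a _ => ?_)
    exact (hQint a).abs.add (integrable_const _)
  -- integrability of R ∘ (max N (P - t))
  have hint : ∀ t : ℝ, Integrable (fun ω => R (max (N ω) (P ω - t))) μ := by
    intro t
    have hmeas : Measurable fun ω => R (max (N ω) (P ω - t)) :=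
      hR_cont.measurable.comp (hN_meas.max (hP_meas.sub measurable_const))
    refine Integrable.mono' ((integrable_const (|R 0| + |t|)).add hCint)
      hmeas.aestronglyMeasurable (ae_of_all _ (fun ω => ?_))
    have hxb : |max (N ω) (P ω - t)| ≤ C ω + |t| := by
      rw [abs_le]
      constructor
      · have := hN0 ω; have := le_max_left (N ω) (P ω - t); have := hC0 ω
        have := abs_nonneg t
        linarith
      · refine max_le ?_ ?_
        · have := abs_nonneg t; linarith [hNC ω]
        · have := neg_abs_le t; linarith [hPC ω]
    have h1 : |R (max (N ω) (P ω - t))| ≤ |R 0| + |max (N ω) (P ω - t)| := by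
      have h2 := hRlip 0 (max (N ω) (P ω - t))
      rw [sub_zero] at h2
      calc |R (max (N ω) (P ω - t))|
          = |(R (max (N ω) (P ω - t)) - R 0) + R 0| := by ring_nf
        _ ≤ |R (max (N ω) (P ω - t)) - R 0| + |R 0| := abs_add_le _ _
        _ ≤ |max (N ω) (P ω - t)| + |R 0| := by linarith
        _ = |R 0| + |max (N ω) (P ω - t)| := by ring
    rw [Real.norm_eq_abs]
    calc |R (max (N ω) (P ω - t))| ≤ |R 0| + |max (N ω) (P ω - t)| := h1
      _ ≤ |R 0| + (C ω + |t|) := by linarith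
      _ = |R 0| + |t| + C ω := by ring
  have hintM : Integrable (fun ω => R (M ω)) μ := by
    have := hint 0
    simpa using this
  -- the difference quotient formula
  have hsum : ∀ t : ℝ, (∑ a : A, (v a + t * χ a) * ρ a) - ∑ a : A, v a * ρ a
      = t * ∑ a ∈ α, ρ a := by
    intro t
    rw [← Finset.sum_sub_distrib]
    have h : ∀ a : A, (v a + t * χ a) * ρ a - v a * ρ a = if a ∈ α then t * ρ a else 0 := by
      intro a
      by_cases ha : a ∈ α <;> simp [hχdef, ha] <;> ring
    simp_rw [h]
    rw [Finset.sum_ite_mem, Finset.univ_inter, Finset.mul_sum]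
  set G : ℝ → Ω → ℝ := fun t ω => R (max (N ω) (P ω - t)) - R (M ω) with hGdef
  have hquot : ∀ t ∈ Ioi (0:ℝ),
      (ψ (v + t • χ) - ψ v) / t = (∫ ω, G t ω / t ∂μ) + ∑ a ∈ α, ρ a := by
    intro t ht
    have ht0 : (0:ℝ) < t := ht
    rw [hψ, hψ]
    have e1 : (∫ ω, R (Finset.univ.sup' Finset.univ_nonempty
        (fun o : Option A => o.elim 0 (fun a => Q ω a - (v + t • χ) a))) ∂μ)
        = ∫ ω, R (max (N ω) (P ω - t)) ∂μ := by
      exact integral_congr_ae (ae_of_all _ (fun ω => congrArg R (hshift t ω)))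
    have e2 : (∫ ω, R (Finset.univ.sup' Finset.univ_nonempty
        (fun o : Option A => o.elim 0 (fun a => Q ω a - v a))) ∂μ)
        = ∫ ω, R (M ω) ∂μ := by
      exact integral_congr_ae (ae_of_all _ (fun ω => congrArg R (hMv ω)))
    rw [e1, e2]
    have e3 : ∀ a : A, (v + t • χ) a = v a + t * χ a := fun a => rfl
    simp_rw [e3]
    have e4 : (∫ ω, R (max (N ω) (P ω - t)) ∂μ) - ∫ ω, R (M ω) ∂μ = ∫ ω, G t ω ∂μ := by
      rw [hGdef, ← integral_sub (hint t) hintM]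
    have e5 : (∫ ω, G t ω / t ∂μ) = (∫ ω, G t ω ∂μ) / t := integral_div t _
    have key : ((∫ ω, R (max (N ω) (P ω - t)) ∂μ) + ∑ a : A, (v a + t * χ a) * ρ a)
        - ((∫ ω, R (M ω) ∂μ) + ∑ a : A, v a * ρ a)
        = (∫ ω, G t ω ∂μ) + t * ∑ a ∈ α, ρ a := by
      linarith [e4, hsum t]
    rw [e5, key, add_div, mul_div_cancel_left₀ _ (ne_of_gt ht0)]
  -- the indicator set
  set S : Set Ω := {ω' : Ω | ∀ o : Option A, o ∉ β →
      o.elim 0 (fun a => Q ω' a - v a) < α.sup' hα (fun a => Q ω' a - v a)} with hSdef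
  have hSiff : ∀ ω, ω ∈ S ↔ N ω < P ω := by
    intro ω
    simp only [hSdef, Set.mem_setOf_eq, hNdef, hPdef]
    constructor
    · intro h
      rw [Finset.sup'_lt_iff]
      intro o ho
      rw [Finset.mem_sdiff] at ho
      exact h o ho.2
    · intro h o ho
      rw [Finset.sup'_lt_iff] at h
      exact h o (Finset.mem_sdiff.2 ⟨Finset.mem_univ o, ho⟩)
  -- pointwise limit
  have h_lim : ∀ ω, Filter.Tendsto (fun t => G t ω / t) (nhdsWithin 0 (Ioi 0))
      (nhds (-((1 - sstar (M ω)) * S.indicator 1 ω))) := by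
    intro ω
    rcases lt_or_ge (N ω) (P ω) with hlt | hle
    · have hMP : M ω = P ω := max_eq_right hlt.le
      have hmem : ω ∈ S := (hSiff ω).2 hlt
      rw [Set.indicator_of_mem hmem, Pi.one_apply, mul_one]
      have hbase := (R_left_deriv hr_cont hsstar_mem hsstar_max hsstar_uniq hR (M ω)).neg
      refine hbase.congr' ?_
      have hmemI : (0:ℝ) ∈ Ico 0 (P ω - N ω) := ⟨le_rfl, by linarith⟩
      filter_upwards [Ioo_mem_nhdsGT_of_mem hmemI] with t ht
      have h1 : max (N ω) (P ω - t) = P ω - t := max_eq_right (by linarith [ht.2])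
      simp only [hGdef]
      rw [h1, hMP]
      ring
    · have hMN : M ω = N ω := max_eq_left hle
      have hnot : ω ∉ S := fun hmem => absurd ((hSiff ω).1 hmem) (not_lt.2 hle)
      rw [Set.indicator_of_notMem hnot, mul_zero, neg_zero]
      refine Filter.Tendsto.congr' ?_ tendsto_const_nhds
      filter_upwards [self_mem_nhdsWithin] with t ht
      have ht0 : (0:ℝ) < t := ht
      have h1 : max (N ω) (P ω - t) = N ω := max_eq_left (by linarith)
      simp only [hGdef]
      rw [h1, hMN, sub_self, zero_div]
  -- dominated convergence
  have hDCT : Filter.Tendsto (fun t : ℝ => ∫ ω, G t ω / t ∂μ) (nhdsWithin 0 (Ioi 0))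
      (nhds (∫ ω, -((1 - sstar (M ω)) * S.indicator 1 ω) ∂μ)) := by
    refine MeasureTheory.tendsto_integral_filter_of_dominated_convergence
      (fun _ => (1:ℝ)) ?_ ?_ (integrable_const 1) (ae_of_all _ h_lim)
    · filter_upwards [self_mem_nhdsWithin] with t ht
      have : Integrable (fun ω => G t ω / t) μ := by
        simp only [hGdef]
        exact ((hint t).sub hintM).div_const t
      exact this.aestronglyMeasurable
    · filter_upwards [self_mem_nhdsWithin] with t ht
      refine ae_of_all _ (fun ω => ?_)
      have ht0 : (0:ℝ) < t := ht
      have hle1 : max (N ω) (P ω - t) ≤ M ω := by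
        rw [hMdef]
        exact max_le_max le_rfl (by linarith)
      have hle2 : M ω - t ≤ max (N ω) (P ω - t) := by
        rw [hMdef]
        simp only []
        rw [← max_sub_sub_right]
        exact max_le_max (by linarith) le_rfl
      have hG : |G t ω| ≤ t := by
        simp only [hGdef]
        have h2 := hRlip (M ω) (max (N ω) (P ω - t))
        have habs : |max (N ω) (P ω - t) - M ω| ≤ t := abs_le.2 ⟨by linarith, by linarith⟩
        linarith
      rw [Real.norm_eq_abs, abs_div, abs_of_pos ht0, div_le_one ht0]
      exact hG
  -- identify the limit value
  have hfinal_val : (∫ ω, -((1 - sstar (M ω)) * S.indicator 1 ω) ∂μ)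
      = -(∫ ω, (1 - sstar (Finset.univ.sup' Finset.univ_nonempty
          (fun o : Option A => o.elim 0 (fun a => Q ω a - v a))))
          * S.indicator 1 ω ∂μ) := by
    rw [← integral_neg]
    refine integral_congr_ae (ae_of_all _ (fun ω => ?_))
    show -((1 - sstar (M ω)) * S.indicator 1 ω)
        = -((1 - sstar (Finset.univ.sup' Finset.univ_nonempty
            (fun o : Option A => o.elim 0 (fun a => Q ω a - v a)))) * S.indicator 1 ω)
    rw [hMv ω]
  have hmain := (hDCT.add_const (∑ a ∈ α, ρ a))
  rw [hfinal_val] at hmain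
  refine Filter.Tendsto.congr' ?_ hmain
  filter_upwards [self_mem_nhdsWithin] with t ht
  exact (hquot t ht).symm
end

section
/- Let r : [0,1] → ℝ be a regular revenue function such that for every c ∈ ℝ the maximizer s*(c) of s ↦ r(s)+(1−s)c over [0,1] is unique, and let R(c) = max_{s∈[0,1]}(r(s)+(1−s)c). Let Q : Ω → ℝ^A be an integrable random vector extended by Q_0 ≡ 0, let ρ_a ∈ (0,1) for a in the finite set A, and suppose v ∈ ℝ^A (extended by v_0 = 0) minimizes ψ(v) = E[R(max_{a∈A₀}(Q_a − v_a))] + Σ_{a∈A} v_a ρ_a over ℝ^A, where A₀ = {0} ∪ A. If ties occur with probability zero, i.e. P{Q_a − v_a = Q_{a′} − v_{a′}} = 0 for all distinct a, a′ ∈ A₀, then for every a ∈ A: E[ (1 − s*(Q_a − v_a)) · 1{ Q_a − v_a > Q_{a′} − v_{a′} for all a′ ∈ A₀, a′ ≠ a } ] = ρ_a. -/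
open Set MeasureTheory
open Filter Topology

section helpers
variable {r sstar R : ℝ → ℝ}

lemma sstar_antitone
    (hsstar_mem : ∀ c : ℝ, sstar c ∈ Icc (0:ℝ) 1)
    (hsstar_max : ∀ c : ℝ, ∀ t ∈ Icc (0:ℝ) 1,
      r t + (1 - t) * c ≤ r (sstar c) + (1 - sstar c) * c) :
    Antitone sstar := by
  intro c c' hcc'
  rcases eq_or_lt_of_le hcc' with h | h
  · subst h; exact le_rfl
  · by_contra hlt
    push_neg at hlt
    have A := hsstar_max c (sstar c') (hsstar_mem c')
    have B := hsstar_max c' (sstar c) (hsstar_mem c)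
    nlinarith [mul_pos (sub_pos.2 hlt) (sub_pos.2 h)]

lemma sstar_tendsto_right
    (hr_cont : ContinuousOn r (Icc 0 1))
    (hsstar_mem : ∀ c : ℝ, sstar c ∈ Icc (0:ℝ) 1)
    (hsstar_max : ∀ c : ℝ, ∀ t ∈ Icc (0:ℝ) 1,
      r t + (1 - t) * c ≤ r (sstar c) + (1 - sstar c) * c)
    (hsstar_uniq : ∀ c : ℝ, ∀ t ∈ Icc (0:ℝ) 1,
      (∀ u ∈ Icc (0:ℝ) 1, r u + (1 - u) * c ≤ r t + (1 - t) * c) → t = sstar c)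
    (c : ℝ) :
    Tendsto (fun n : ℕ => sstar (c + 1 / (n + 1))) atTop (𝓝 (sstar c)) := by
  have hanti := sstar_antitone hsstar_mem hsstar_max
  set s : ℕ → ℝ := fun n => sstar (c + 1 / (n + 1)) with hs
  have hupos : ∀ n : ℕ, (0:ℝ) < 1 / (n + 1) := fun n => by positivity
  have hu : Tendsto (fun n : ℕ => (1:ℝ) / (n + 1)) atTop (𝓝 0) :=
    tendsto_one_div_add_atTop_nhds_zero_nat
  have hcn : Tendsto (fun n : ℕ => c + 1 / (n + 1)) atTop (𝓝 c) := by
    simpa using tendsto_const_nhds.add hu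
  have hmono : Monotone s := by
    intro m n hmn
    apply hanti
    have : (1:ℝ) / (n + 1) ≤ 1 / (m + 1) := by
      apply one_div_le_one_div_of_le (by positivity)
      have := (Nat.cast_le (α := ℝ)).2 hmn; linarith
    linarith
  have hmem : ∀ n, s n ∈ Icc (0:ℝ) 1 := fun n => hsstar_mem _
  have hbdd : BddAbove (Set.range s) := ⟨1, by rintro x ⟨n, rfl⟩; exact (hmem n).2⟩
  set L : ℝ := ⨆ n, s n with hL
  have htend : Tendsto s atTop (𝓝 L) := tendsto_atTop_ciSup hmono hbdd
  have hLmem : L ∈ Icc (0:ℝ) 1 := by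
    constructor
    · exact le_trans (hmem 0).1 (le_ciSup hbdd 0)
    · exact ciSup_le fun n => (hmem n).2
  have hrs : Tendsto (fun n => r (s n)) atTop (𝓝 (r L)) := by
    have h1 : Tendsto s atTop (𝓝[Icc (0:ℝ) 1] L) :=
      tendsto_nhdsWithin_of_tendsto_nhds_of_eventually_within s htend
        (Eventually.of_forall hmem)
    exact (hr_cont L hLmem).tendsto.comp h1
  have hkey : ∀ t ∈ Icc (0:ℝ) 1, r t + (1 - t) * c ≤ r L + (1 - L) * c := by
    intro t ht
    have h1 : Tendsto (fun n : ℕ => r t + (1 - t) * (c + 1 / (n + 1))) atTop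
        (𝓝 (r t + (1 - t) * c)) := tendsto_const_nhds.add (tendsto_const_nhds.mul hcn)
    have h2 : Tendsto (fun n : ℕ => r (s n) + (1 - s n) * (c + 1 / (n + 1))) atTop
        (𝓝 (r L + (1 - L) * c)) :=
      hrs.add ((tendsto_const_nhds.sub htend).mul hcn)
    exact le_of_tendsto_of_tendsto' h1 h2 fun n => hsstar_max _ t ht
  have : L = sstar c := hsstar_uniq c L hLmem hkey
  rwa [this] at htend

lemma sstar_tendsto_left
    (hr_cont : ContinuousOn r (Icc 0 1))
    (hsstar_mem : ∀ c : ℝ, sstar c ∈ Icc (0:ℝ) 1)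
    (hsstar_max : ∀ c : ℝ, ∀ t ∈ Icc (0:ℝ) 1,
      r t + (1 - t) * c ≤ r (sstar c) + (1 - sstar c) * c)
    (hsstar_uniq : ∀ c : ℝ, ∀ t ∈ Icc (0:ℝ) 1,
      (∀ u ∈ Icc (0:ℝ) 1, r u + (1 - u) * c ≤ r t + (1 - t) * c) → t = sstar c)
    (c : ℝ) :
    Tendsto (fun n : ℕ => sstar (c - 1 / (n + 1))) atTop (𝓝 (sstar c)) := by
  have hanti := sstar_antitone hsstar_mem hsstar_max
  set s : ℕ → ℝ := fun n => sstar (c - 1 / (n + 1)) with hs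
  have hu : Tendsto (fun n : ℕ => (1:ℝ) / (n + 1)) atTop (𝓝 0) :=
    tendsto_one_div_add_atTop_nhds_zero_nat
  have hcn : Tendsto (fun n : ℕ => c - 1 / (n + 1)) atTop (𝓝 c) := by
    simpa using tendsto_const_nhds.sub hu
  have hmono : Antitone s := by
    intro m n hmn
    apply hanti
    have : (1:ℝ) / (n + 1) ≤ 1 / (m + 1) := by
      apply one_div_le_one_div_of_le (by positivity)
      have := (Nat.cast_le (α := ℝ)).2 hmn; linarith
    linarith
  have hmem : ∀ n, s n ∈ Icc (0:ℝ) 1 := fun n => hsstar_mem _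
  have hbdd : BddBelow (Set.range s) := ⟨0, by rintro x ⟨n, rfl⟩; exact (hmem n).1⟩
  set L : ℝ := ⨅ n, s n with hL
  have htend : Tendsto s atTop (𝓝 L) := tendsto_atTop_ciInf hmono hbdd
  have hLmem : L ∈ Icc (0:ℝ) 1 := by
    constructor
    · exact le_ciInf fun n => (hmem n).1
    · exact le_trans (ciInf_le hbdd 0) (hmem 0).2
  have hrs : Tendsto (fun n => r (s n)) atTop (𝓝 (r L)) := by
    have h1 : Tendsto s atTop (𝓝[Icc (0:ℝ) 1] L) :=
      tendsto_nhdsWithin_of_tendsto_nhds_of_eventually_within s htend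
        (Eventually.of_forall hmem)
    exact (hr_cont L hLmem).tendsto.comp h1
  have hkey : ∀ t ∈ Icc (0:ℝ) 1, r t + (1 - t) * c ≤ r L + (1 - L) * c := by
    intro t ht
    have h1 : Tendsto (fun n : ℕ => r t + (1 - t) * (c - 1 / (n + 1))) atTop
        (𝓝 (r t + (1 - t) * c)) := tendsto_const_nhds.add (tendsto_const_nhds.mul hcn)
    have h2 : Tendsto (fun n : ℕ => r (s n) + (1 - s n) * (c - 1 / (n + 1))) atTop
        (𝓝 (r L + (1 - L) * c)) :=
      hrs.add ((tendsto_const_nhds.sub htend).mul hcn)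
    exact le_of_tendsto_of_tendsto' h1 h2 fun n => hsstar_max _ t ht
  have : L = sstar c := hsstar_uniq c L hLmem hkey
  rwa [this] at htend

end helpers


section helpers2
variable {r sstar R : ℝ → ℝ}

lemma R_ge_sub
    (hsstar_mem : ∀ c : ℝ, sstar c ∈ Icc (0:ℝ) 1)
    (hsstar_max : ∀ c : ℝ, ∀ t ∈ Icc (0:ℝ) 1,
      r t + (1 - t) * c ≤ r (sstar c) + (1 - sstar c) * c)
    (hR : ∀ c : ℝ, R c = r (sstar c) + (1 - sstar c) * c)
    (c h : ℝ) : R c + (1 - sstar c) * h ≤ R (c + h) := by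
  have := hsstar_max (c + h) (sstar c) (hsstar_mem c)
  rw [hR c, hR (c + h)]; nlinarith [this]

lemma R_le_sub
    (hsstar_mem : ∀ c : ℝ, sstar c ∈ Icc (0:ℝ) 1)
    (hsstar_max : ∀ c : ℝ, ∀ t ∈ Icc (0:ℝ) 1,
      r t + (1 - t) * c ≤ r (sstar c) + (1 - sstar c) * c)
    (hR : ∀ c : ℝ, R c = r (sstar c) + (1 - sstar c) * c)
    (c h : ℝ) : R (c + h) ≤ R c + (1 - sstar (c + h)) * h := by
  have := hsstar_max c (sstar (c + h)) (hsstar_mem (c + h))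
  rw [hR c, hR (c + h)]; nlinarith [this]

lemma R_lip_s8
    (hsstar_mem : ∀ c : ℝ, sstar c ∈ Icc (0:ℝ) 1)
    (hsstar_max : ∀ c : ℝ, ∀ t ∈ Icc (0:ℝ) 1,
      r t + (1 - t) * c ≤ r (sstar c) + (1 - sstar c) * c)
    (hR : ∀ c : ℝ, R c = r (sstar c) + (1 - sstar c) * c)
    (x y : ℝ) : |R x - R y| ≤ |x - y| := by
  have h1 := R_ge_sub hsstar_mem hsstar_max hR y (x - y)
  have h2 := R_le_sub hsstar_mem hsstar_max hR y (x - y)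
  rw [add_sub_cancel] at h1 h2
  have hy := hsstar_mem y
  have hx := hsstar_mem x
  have hx' := hsstar_mem (y + (x - y))
  rw [abs_le]
  rcases le_total (x - y) 0 with hs | hs
  · rw [abs_of_nonpos hs]
    constructor
    · nlinarith [mul_nonpos_of_nonneg_of_nonpos hy.1 hs]
    · nlinarith [mul_nonpos_of_nonneg_of_nonpos (sub_nonneg.2 hx.2) hs]
  · rw [abs_of_nonneg hs]
    constructor
    · nlinarith [mul_nonneg (sub_nonneg.2 hy.2) hs]
    · nlinarith [mul_nonneg hx.1 hs]

/-- right difference quotient tends to 1 - sstar c -/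
lemma quot_right
    (hr_cont : ContinuousOn r (Icc 0 1))
    (hsstar_mem : ∀ c : ℝ, sstar c ∈ Icc (0:ℝ) 1)
    (hsstar_max : ∀ c : ℝ, ∀ t ∈ Icc (0:ℝ) 1,
      r t + (1 - t) * c ≤ r (sstar c) + (1 - sstar c) * c)
    (hsstar_uniq : ∀ c : ℝ, ∀ t ∈ Icc (0:ℝ) 1,
      (∀ u ∈ Icc (0:ℝ) 1, r u + (1 - u) * c ≤ r t + (1 - t) * c) → t = sstar c)
    (hR : ∀ c : ℝ, R c = r (sstar c) + (1 - sstar c) * c)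
    (c : ℝ) :
    Tendsto (fun n : ℕ => (R (c + 1 / (n + 1)) - R c) / (1 / (n + 1))) atTop
      (𝓝 (1 - sstar c)) := by
  have hupos : ∀ n : ℕ, (0:ℝ) < 1 / (n + 1) := fun n => by positivity
  have hupper : Tendsto (fun n : ℕ => 1 - sstar (c + 1 / (n + 1))) atTop (𝓝 (1 - sstar c)) :=
    tendsto_const_nhds.sub (sstar_tendsto_right hr_cont hsstar_mem hsstar_max hsstar_uniq c)
  refine tendsto_of_tendsto_of_tendsto_of_le_of_le
    tendsto_const_nhds hupper (fun n => ?_) (fun n => ?_)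
  · have := R_ge_sub hsstar_mem hsstar_max hR c (1 / (n + 1))
    show (1:ℝ) - sstar c ≤ _
    rw [le_div_iff₀ (hupos n)]
    linarith
  · have := R_le_sub hsstar_mem hsstar_max hR c (1 / (n + 1))
    show _ ≤ (1:ℝ) - sstar (c + 1 / (n + 1))
    rw [div_le_iff₀ (hupos n)]
    linarith

/-- left difference quotient tends to 1 - sstar c -/
lemma quot_left
    (hr_cont : ContinuousOn r (Icc 0 1))
    (hsstar_mem : ∀ c : ℝ, sstar c ∈ Icc (0:ℝ) 1)
    (hsstar_max : ∀ c : ℝ, ∀ t ∈ Icc (0:ℝ) 1,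
      r t + (1 - t) * c ≤ r (sstar c) + (1 - sstar c) * c)
    (hsstar_uniq : ∀ c : ℝ, ∀ t ∈ Icc (0:ℝ) 1,
      (∀ u ∈ Icc (0:ℝ) 1, r u + (1 - u) * c ≤ r t + (1 - t) * c) → t = sstar c)
    (hR : ∀ c : ℝ, R c = r (sstar c) + (1 - sstar c) * c)
    (c : ℝ) :
    Tendsto (fun n : ℕ => (R (c - 1 / (n + 1)) - R c) / (-(1 / (n + 1)))) atTop
      (𝓝 (1 - sstar c)) := by
  have hupos : ∀ n : ℕ, (0:ℝ) < 1 / (n + 1) := fun n => by positivity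
  have hlower : Tendsto (fun n : ℕ => 1 - sstar (c - 1 / (n + 1))) atTop (𝓝 (1 - sstar c)) :=
    tendsto_const_nhds.sub (sstar_tendsto_left hr_cont hsstar_mem hsstar_max hsstar_uniq c)
  refine tendsto_of_tendsto_of_tendsto_of_le_of_le
    hlower tendsto_const_nhds (fun n => ?_) (fun n => ?_)
  · have h2 := R_le_sub hsstar_mem hsstar_max hR c (-(1 / (n + 1)))
    have heq : c + -(1 / (n + 1)) = c - 1 / ((n:ℝ) + 1) := by ring
    rw [heq] at h2
    show (1:ℝ) - sstar (c - 1 / (n + 1)) ≤ _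
    rw [le_div_iff_of_neg (neg_neg_iff_pos.mpr (hupos n))]
    nlinarith [h2]
  · have h1 := R_ge_sub hsstar_mem hsstar_max hR c (-(1 / (n + 1)))
    have heq : c + -(1 / (n + 1)) = c - 1 / ((n:ℝ) + 1) := by ring
    rw [heq] at h1
    show _ ≤ (1:ℝ) - sstar c
    rw [div_le_iff_of_neg (neg_neg_iff_pos.mpr (hupos n))]
    nlinarith [h1]

end helpers2



/-- Theorem 1 of the paper. If `v` minimizes the dual objective
`ψ(w) = E[R(max_{a∈A₀}(Q_a - w_a))] + Σ_a w_a ρ_a` and ties occur with probability zero, then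
for each advertiser `a`, `E[(1 - s*(Q_a - v_a)) · 1{Q_a - v_a > Q_{a'} - v_{a'} ∀ a' ≠ a}] = ρ_a`.
Here `A₀ = {0} ∪ A`, `Q_0 ≡ 0`, `v_0 = 0`, `r` is a regular revenue function, `s*(c)` is its
unique maximizer and `R(c) = r(s*(c)) + (1 - s*(c))·c`. -/
theorem stmt_8 {Ω : Type*} [MeasurableSpace Ω] (μ : Measure Ω) [IsProbabilityMeasure μ]
    {A : Type*} [Fintype A]
    (r sstar R : ℝ → ℝ)
    (hr_cont : ContinuousOn r (Icc 0 1))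
    (hr_conc : ConcaveOn ℝ (Icc 0 1) r)
    (hr_nonneg : ∀ u ∈ Icc (0:ℝ) 1, 0 ≤ r u)
    (hr_bdd : ∃ M : ℝ, ∀ u ∈ Icc (0:ℝ) 1, r u ≤ M)
    (hr_zero : r 0 = 0)
    (hsstar_mem : ∀ c : ℝ, sstar c ∈ Icc (0:ℝ) 1)
    (hsstar_max : ∀ c : ℝ, ∀ t ∈ Icc (0:ℝ) 1,
      r t + (1 - t) * c ≤ r (sstar c) + (1 - sstar c) * c)
    (hsstar_uniq : ∀ c : ℝ, ∀ t ∈ Icc (0:ℝ) 1,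
      (∀ u ∈ Icc (0:ℝ) 1, r u + (1 - u) * c ≤ r t + (1 - t) * c) → t = sstar c)
    (hR : ∀ c : ℝ, R c = r (sstar c) + (1 - sstar c) * c)
    (Q : Ω → A → ℝ) (hQmeas : Measurable Q)
    (hQint : ∀ a : A, Integrable (fun ω => Q ω a) μ)
    (ρ : A → ℝ) (hρ : ∀ a, ρ a ∈ Ioo (0:ℝ) 1)
    (v : A → ℝ)
    (hopt : ∀ w : A → ℝ,
      (∫ ω, R (Finset.univ.sup' Finset.univ_nonempty
          (fun o : Option A => o.elim 0 (fun a => Q ω a - v a))) ∂μ)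
        + ∑ a : A, v a * ρ a
      ≤ (∫ ω, R (Finset.univ.sup' Finset.univ_nonempty
          (fun o : Option A => o.elim 0 (fun a => Q ω a - w a))) ∂μ)
        + ∑ a : A, w a * ρ a)
    (hties : ∀ o o' : Option A, o ≠ o' →
      μ {ω | o.elim 0 (fun a => Q ω a - v a) = o'.elim 0 (fun a => Q ω a - v a)} = 0) :
    ∀ a : A,
      ∫ ω, (1 - sstar (Q ω a - v a))
          * Set.indicator
              {ω' : Ω | ∀ o : Option A, o ≠ some a →
                o.elim 0 (fun b => Q ω' b - v b) < Q ω' a - v a}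
              1 ω ∂μ = ρ a := by
  intro a
  classical
  -- basic abbreviations
  set val : Option A → Ω → ℝ := fun o ω => o.elim 0 fun b => Q ω b - v b with hval
  set c : Ω → ℝ := fun ω => Q ω a - v a with hc
  set Ef : Finset (Option A) := Finset.univ.erase (some a) with hEf
  have hEne : Ef.Nonempty := ⟨none, Finset.mem_erase.2 ⟨by simp, Finset.mem_univ _⟩⟩
  set M : Ω → ℝ := fun ω => Ef.sup' hEne fun o => val o ω with hM
  set f : ℝ → Ω → ℝ := fun t ω => R (max (M ω) (c ω - t)) with hf
  set S : Set Ω := {ω' : Ω | ∀ o : Option A, o ≠ some a →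
                o.elim 0 (fun b => Q ω' b - v b) < Q ω' a - v a} with hS
  set φ : Ω → ℝ := fun ω => -((1 - sstar (Q ω a - v a)) * Set.indicator S 1 ω) with hφ
  set u : ℕ → ℝ := fun n => 1 / ((n:ℝ) + 1) with hu
  have hupos : ∀ n : ℕ, (0:ℝ) < u n := fun n => by positivity
  have hu0 : Tendsto u atTop (𝓝 0) := tendsto_one_div_add_atTop_nhds_zero_nat
  -- decomposition of sup over Option A
  have hsup_dec : ∀ g : Option A → ℝ,
      Finset.univ.sup' Finset.univ_nonempty g = max (Ef.sup' hEne g) (g (some a)) := by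
    intro g
    apply le_antisymm
    · apply Finset.sup'_le
      intro o _
      by_cases h : o = some a
      · subst h; exact le_max_right _ _
      · exact le_trans (Finset.le_sup' g (Finset.mem_erase.2 ⟨h, Finset.mem_univ _⟩))
          (le_max_left _ _)
    · apply max_le
      · exact Finset.sup'_le hEne g fun o _ => Finset.le_sup' g (Finset.mem_univ o)
      · exact Finset.le_sup' g (Finset.mem_univ _)
  -- the optimality inequality specialized to coordinate perturbations
  have hineq : ∀ t : ℝ, ∫ ω, f 0 ω ∂μ ≤ (∫ ω, f t ω ∂μ) + t * ρ a := by
    intro t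
    have h := hopt (Function.update v a (v a + t))
    have eL : (fun ω => R (Finset.univ.sup' Finset.univ_nonempty
        (fun o : Option A => o.elim 0 (fun b => Q ω b - v b)))) = f 0 := by
      funext ω
      rw [hsup_dec]
      have h1 : f 0 ω = R (max (M ω) (c ω)) := by rw [hf]; norm_num
      rw [h1]
      rfl
    have eR : (fun ω => R (Finset.univ.sup' Finset.univ_nonempty
        (fun o : Option A => o.elim 0
          (fun b => Q ω b - Function.update v a (v a + t) b)))) = f t := by
      funext ω
      rw [hsup_dec]
      have e1 : Ef.sup' hEne (fun o : Option A => o.elim 0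
          (fun b => Q ω b - Function.update v a (v a + t) b))
          = Ef.sup' hEne (fun o => val o ω) := by
        apply Finset.sup'_congr hEne rfl
        intro o ho
        have hne := (Finset.mem_erase.1 ho).1
        match o with
        | none => rfl
        | some b =>
          have hb : b ≠ a := fun hba => hne (by rw [hba])
          simp only [Option.elim, hval]
          rw [Function.update_of_ne hb]
      have e2 : (Option.some a).elim 0
          (fun b => Q ω b - Function.update v a (v a + t) b) = c ω - t := by
        simp only [Option.elim, Function.update_self, hc]
        ring
      rw [e1, e2]
    have hsum : ∑ b : A, Function.update v a (v a + t) b * ρ b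
        = (∑ b : A, v b * ρ b) + t * ρ a := by
      have hpt : ∀ b : A, Function.update v a (v a + t) b * ρ b
          = v b * ρ b + (if b = a then t * ρ a else 0) := by
        intro b
        rcases eq_or_ne b a with rfl | hb
        · rw [Function.update_self, if_pos rfl]; ring
        · rw [Function.update_of_ne hb, if_neg hb]; ring
      rw [Finset.sum_congr rfl fun b _ => hpt b, Finset.sum_add_distrib]
      simp
    rw [eL, eR, hsum] at h
    linarith
  -- measurability
  have hRlip : ∀ x y : ℝ, |R x - R y| ≤ |x - y| := R_lip_s8 hsstar_mem hsstar_max hR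
  have hRcont : Continuous R := by
    have hlip : LipschitzWith 1 R := by
      apply LipschitzWith.of_dist_le_mul
      intro x y
      rw [Real.dist_eq, Real.dist_eq, NNReal.coe_one, one_mul]
      exact hRlip x y
    exact hlip.continuous
  have hval_meas : ∀ o : Option A, Measurable (val o) := by
    rintro (_ | b)
    · exact measurable_const
    · exact ((measurable_pi_apply b).comp hQmeas).sub measurable_const
  have hM_meas : Measurable M := by
    have h := Finset.measurable_sup' hEne fun o (_ : o ∈ Ef) => hval_meas o
    have heq : M = Ef.sup' hEne val := funext fun ω => (Finset.sup'_apply hEne val ω).symm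
    rwa [heq]
  have hc_meas : Measurable c := hval_meas (some a)
  have hf_meas : ∀ t : ℝ, Measurable (f t) :=
    fun t => hRcont.measurable.comp (hM_meas.max (hc_meas.sub measurable_const))
  -- integrability
  have hval_int : ∀ o : Option A, Integrable (val o) μ := by
    rintro (_ | b)
    · exact integrable_const 0
    · exact (hQint b).sub (integrable_const (v b))
  have hc_int : Integrable c μ := hval_int (some a)
  have hS_int : Integrable (fun ω => ∑ o ∈ Ef, |val o ω|) μ :=
    integrable_finset_sum _ fun o _ => (hval_int o).abs
  have hSnn : ∀ ω, 0 ≤ ∑ o ∈ Ef, |val o ω| :=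
    fun ω => Finset.sum_nonneg fun o _ => abs_nonneg _
  have hMle : ∀ ω, M ω ≤ ∑ o ∈ Ef, |val o ω| := by
    intro ω
    apply Finset.sup'_le
    intro o ho
    exact le_trans (le_abs_self _) (Finset.single_le_sum
      (fun o (_ : o ∈ Ef) => abs_nonneg (val o ω)) ho)
  have hMnn : ∀ ω, 0 ≤ M ω := by
    intro ω
    have h0 : (fun o => val o ω) none ≤ M ω :=
      Finset.le_sup' (fun o => val o ω) (Finset.mem_erase.2 ⟨by simp, Finset.mem_univ _⟩)
    simpa [hval] using h0
  have hf_int : ∀ t : ℝ, Integrable (f t) μ := by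
    intro t
    apply Integrable.mono'
      (g := fun ω => |R 0| + |t| + |c ω| + ∑ o ∈ Ef, |val o ω|)
    · exact ((integrable_const (|R 0| + |t|)).add hc_int.abs).add hS_int
    · exact (hf_meas t).aestronglyMeasurable
    · refine ae_of_all _ fun ω => ?_
      rw [Real.norm_eq_abs]
      have hx : |max (M ω) (c ω - t)| ≤ |t| + |c ω| + ∑ o ∈ Ef, |val o ω| := by
        rw [abs_le]
        constructor
        · have : (0:ℝ) ≤ max (M ω) (c ω - t) := le_trans (hMnn ω) (le_max_left _ _)
          have hnn : (0:ℝ) ≤ |t| + |c ω| + ∑ o ∈ Ef, |val o ω| := by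
            have := hSnn ω; positivity
          linarith
        · apply max_le
          · have := hMle ω; have := abs_nonneg t; have := abs_nonneg (c ω); linarith
          · have h1 : c ω - t ≤ |c ω| + |t| := by
              have := le_abs_self (c ω); have := neg_abs_le t; linarith
            have := hSnn ω; linarith
      have hfb : |f t ω| ≤ |R 0| + |max (M ω) (c ω - t)| := by
        have := hRlip (max (M ω) (c ω - t)) 0
        rw [sub_zero] at this
        have h4 := abs_sub_abs_le_abs_sub (f t ω) (R 0)
        have : |f t ω - R 0| ≤ |max (M ω) (c ω - t)| := this
        calc |f t ω| ≤ |R 0| + |f t ω - R 0| := by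
              have := abs_sub_abs_le_abs_sub (f t ω) (R 0); linarith
          _ ≤ |R 0| + |max (M ω) (c ω - t)| := by linarith
      linarith
  -- the difference quotient
  set D : ℝ → Ω → ℝ := fun t ω => (f t ω - f 0 ω) / t with hD
  have hD_meas : ∀ t : ℝ, Measurable (D t) :=
    fun t => ((hf_meas t).sub (hf_meas 0)).div_const t
  have hdiff_bound : ∀ t : ℝ, ∀ ω, |f t ω - f 0 ω| ≤ |t| := by
    intro t ω
    have h1 : |f t ω - f 0 ω| ≤ |max (M ω) (c ω - t) - max (M ω) (c ω - 0)| :=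
      hRlip _ _
    have h2 : |max (M ω) (c ω - t) - max (M ω) (c ω - 0)| ≤ |(c ω - t) - (c ω - 0)| := by
      rw [max_comm (M ω) (c ω - t), max_comm (M ω) (c ω - 0)]
      exact abs_max_sub_max_le_abs _ _ _
    have h3 : |(c ω - t) - (c ω - 0)| = |t| := by
      rw [show (c ω - t) - (c ω - 0) = -t by ring, abs_neg]
    exact le_trans h1 (h3 ▸ h2)
  have hD_int_eq : ∀ t : ℝ, ∫ ω, D t ω ∂μ = ((∫ ω, f t ω ∂μ) - ∫ ω, f 0 ω ∂μ) / t := by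
    intro t
    rw [← integral_sub (hf_int t) (hf_int 0), ← integral_div]
  have hD_lb : ∀ n : ℕ, -ρ a ≤ ∫ ω, D (u n) ω ∂μ := by
    intro n
    rw [hD_int_eq (u n), le_div_iff₀ (hupos n)]
    have := hineq (u n)
    nlinarith [this]
  have hD_ub : ∀ n : ℕ, ∫ ω, D (-(u n)) ω ∂μ ≤ -ρ a := by
    intro n
    rw [hD_int_eq (-(u n)), div_le_iff_of_neg (neg_neg_iff_pos.mpr (hupos n))]
    have := hineq (-(u n))
    nlinarith [this]
  -- ties have measure zero
  have hT : ∀ᵐ ω ∂μ, M ω ≠ c ω := by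
    have hsub : {ω | M ω = c ω} ⊆ ⋃ o ∈ (Ef : Set (Option A)), {ω | val o ω = c ω} := by
      intro ω hω
      obtain ⟨o, ho, hsup⟩ := Finset.exists_mem_eq_sup' hEne (fun o => val o ω)
      refine Set.mem_biUnion ho ?_
      show val o ω = c ω
      rw [← hsup]
      exact hω
    have h0 : μ (⋃ o ∈ (Ef : Set (Option A)), {ω | val o ω = c ω}) = 0 := by
      refine (measure_biUnion_null_iff (Ef : Set (Option A)).to_countable).2 ?_
      intro o ho
      have hne : o ≠ some a := (Finset.mem_erase.1 ho).1
      exact hties o (some a) hne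
    have hnull : μ {ω | M ω = c ω} = 0 := measure_mono_null hsub h0
    rw [ae_iff]
    simpa [not_not] using hnull
  -- pointwise convergence
  have hconv_pos : ∀ᵐ ω ∂μ, Tendsto (fun n => D (u n) ω) atTop (𝓝 (φ ω)) := by
    filter_upwards [hT] with ω hω
    rcases lt_or_gt_of_ne hω with hlt | hgt
    · -- M ω < c ω : the indicator is 1
      have hmemS : ω ∈ S := by
        intro o ho
        have h1 : (fun o => val o ω) o ≤ M ω :=
          Finset.le_sup' (fun o => val o ω) (Finset.mem_erase.2 ⟨ho, Finset.mem_univ _⟩)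
        exact lt_of_le_of_lt h1 hlt
      have hφω : φ ω = -(1 - sstar (c ω)) := by
        simp only [hφ]
        rw [Set.indicator_of_mem hmemS]
        simp [hc]
      have hev : ∀ᶠ n in atTop, D (u n) ω = (R (c ω - u n) - R (c ω)) / (u n) := by
        have hevlt : ∀ᶠ n in atTop, u n < c ω - M ω :=
          hu0.eventually_lt_const (by linarith)
        filter_upwards [hevlt] with n hn
        have hmax1 : max (M ω) (c ω - u n) = c ω - u n := max_eq_right (by linarith)
        have hmax0 : max (M ω) (c ω - 0) = c ω - 0 := by
          rw [sub_zero]; exact max_eq_right (le_of_lt hlt)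
        simp only [hD, hf]
        rw [hmax1, hmax0, sub_zero]
      have hq := quot_left hr_cont hsstar_mem hsstar_max hsstar_uniq hR (c ω)
      have hq2 : Tendsto (fun n : ℕ => (R (c ω - u n) - R (c ω)) / (u n)) atTop
          (𝓝 (-(1 - sstar (c ω)))) := by
        refine hq.neg.congr fun n => ?_
        rw [hu]
        rw [div_neg, neg_neg]
      rw [hφω]
      exact hq2.congr' (hev.mono fun n h => h.symm)
    · -- M ω > c ω : the indicator is 0
      have hnotS : ω ∉ S := by
        obtain ⟨o, ho, hsup⟩ := Finset.exists_mem_eq_sup' hEne (fun o => val o ω)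
        intro hmem
        have h1 : val o ω < c ω := hmem o (Finset.mem_erase.1 ho).1
        have h2 : M ω = val o ω := hsup
        linarith
      have hφω : φ ω = 0 := by
        simp only [hφ]
        rw [Set.indicator_of_notMem hnotS]
        ring
      have hev : ∀ᶠ n in atTop, D (u n) ω = 0 := by
        have hevlt : ∀ᶠ n in atTop, u n < M ω - c ω :=
          hu0.eventually_lt_const (by linarith)
        filter_upwards [hevlt] with n hn
        have hmax1 : max (M ω) (c ω - u n) = M ω := max_eq_left (by linarith [hupos n])
        have hmax0 : max (M ω) (c ω - 0) = M ω := by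
          rw [sub_zero]; exact max_eq_left (le_of_lt hgt)
        simp only [hD, hf]
        rw [hmax1, hmax0, sub_self, zero_div]
      rw [hφω]
      exact tendsto_const_nhds.congr' (hev.mono fun n h => h.symm)
  have hconv_neg : ∀ᵐ ω ∂μ, Tendsto (fun n => D (-(u n)) ω) atTop (𝓝 (φ ω)) := by
    filter_upwards [hT] with ω hω
    rcases lt_or_gt_of_ne hω with hlt | hgt
    · have hmemS : ω ∈ S := by
        intro o ho
        have h1 : (fun o => val o ω) o ≤ M ω :=
          Finset.le_sup' (fun o => val o ω) (Finset.mem_erase.2 ⟨ho, Finset.mem_univ _⟩)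
        exact lt_of_le_of_lt h1 hlt
      have hφω : φ ω = -(1 - sstar (c ω)) := by
        simp only [hφ]
        rw [Set.indicator_of_mem hmemS]
        simp [hc]
      have hev : ∀ᶠ n in atTop, D (-(u n)) ω = (R (c ω + u n) - R (c ω)) / (-(u n)) := by
        refine Eventually.of_forall fun n => ?_
        have hmax1 : max (M ω) (c ω - -(u n)) = c ω + u n := by
          rw [sub_neg_eq_add]
          exact max_eq_right (by linarith [hupos n])
        have hmax0 : max (M ω) (c ω - 0) = c ω - 0 := by
          rw [sub_zero]; exact max_eq_right (le_of_lt hlt)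
        simp only [hD, hf]
        rw [hmax1, hmax0, sub_zero]
      have hq := quot_right hr_cont hsstar_mem hsstar_max hsstar_uniq hR (c ω)
      have hq2 : Tendsto (fun n : ℕ => (R (c ω + u n) - R (c ω)) / (-(u n))) atTop
          (𝓝 (-(1 - sstar (c ω)))) := by
        refine hq.neg.congr fun n => ?_
        rw [hu]
        rw [div_neg]
      rw [hφω]
      exact hq2.congr' (hev.mono fun n h => h.symm)
    · have hnotS : ω ∉ S := by
        obtain ⟨o, ho, hsup⟩ := Finset.exists_mem_eq_sup' hEne (fun o => val o ω)
        intro hmem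
        have h1 : val o ω < c ω := hmem o (Finset.mem_erase.1 ho).1
        have h2 : M ω = val o ω := hsup
        linarith
      have hφω : φ ω = 0 := by
        simp only [hφ]
        rw [Set.indicator_of_notMem hnotS]
        ring
      have hev : ∀ᶠ n in atTop, D (-(u n)) ω = 0 := by
        have hevlt : ∀ᶠ n in atTop, u n < M ω - c ω :=
          hu0.eventually_lt_const (by linarith)
        filter_upwards [hevlt] with n hn
        have hmax1 : max (M ω) (c ω - -(u n)) = M ω := by
          rw [sub_neg_eq_add]
          exact max_eq_left (by linarith)
        have hmax0 : max (M ω) (c ω - 0) = M ω := by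
          rw [sub_zero]; exact max_eq_left (le_of_lt hgt)
        simp only [hD, hf]
        rw [hmax1, hmax0, sub_self, zero_div]
      rw [hφω]
      exact tendsto_const_nhds.congr' (hev.mono fun n h => h.symm)
  -- dominated convergence
  have hbound : ∀ (t : ℝ), t ≠ 0 → ∀ᵐ ω ∂μ, ‖D t ω‖ ≤ (1:ℝ) := by
    intro t ht
    refine ae_of_all _ fun ω => ?_
    have h1 := hdiff_bound t ω
    rw [Real.norm_eq_abs, hD, abs_div]
    rw [div_le_one (abs_pos.2 ht)]
    exact h1
  have hDCT_pos : Tendsto (fun n => ∫ ω, D (u n) ω ∂μ) atTop (𝓝 (∫ ω, φ ω ∂μ)) :=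
    tendsto_integral_of_dominated_convergence (fun _ => (1:ℝ))
      (fun n => (hD_meas (u n)).aestronglyMeasurable) (integrable_const 1)
      (fun n => hbound (u n) (ne_of_gt (hupos n))) hconv_pos
  have hDCT_neg : Tendsto (fun n => ∫ ω, D (-(u n)) ω ∂μ) atTop (𝓝 (∫ ω, φ ω ∂μ)) :=
    tendsto_integral_of_dominated_convergence (fun _ => (1:ℝ))
      (fun n => (hD_meas (-(u n))).aestronglyMeasurable) (integrable_const 1)
      (fun n => hbound (-(u n)) (by simpa using ne_of_gt (hupos n))) hconv_neg
  have hphi_ge : -ρ a ≤ ∫ ω, φ ω ∂μ :=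
    ge_of_tendsto hDCT_pos (Eventually.of_forall hD_lb)
  have hphi_le : ∫ ω, φ ω ∂μ ≤ -ρ a :=
    le_of_tendsto hDCT_neg (Eventually.of_forall hD_ub)
  have hphi : ∫ ω, φ ω ∂μ = -ρ a := le_antisymm hphi_le hphi_ge
  have : ∫ ω, φ ω ∂μ = -∫ ω, (1 - sstar (Q ω a - v a)) * Set.indicator S 1 ω ∂μ := by
    rw [hφ]; exact integral_neg _
  rw [this] at hphi
  linarith
end

section
/- Let Q : Ω → ℝ^A be an integrable random vector on a probability space, extended by Q_0 ≡ 0, let ρ_a ∈ (0,1) for a in the finite set A, and suppose v ∈ ℝ^A (extended by v_0 = 0) minimizes ψ(v) = E[ max_{a∈A₀} (Q_a − v_a) ] + Σ_{a∈A} v_a ρ_a over ℝ^A, where A₀ = {0} ∪ A. If P{Q_a − v_a = Q_{a′} − v_{a′}} = 0 for all distinct a, a′ ∈ A₀, then for each a ∈ A: P{ Q_a − v_a > Q_{a′} − v_{a′} for all a′ ∈ A₀ with a′ ≠ a } = ρ_a. -/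
open Set MeasureTheory

/-- The no-exchange special case of the dual optimality conditions. If `v`
minimizes `ψ(w) = E[max_{a∈A₀}(Q_a - w_a)] + Σ_a w_a ρ_a` and ties occur with probability
zero, then for each `a ∈ A`,
`P{Q_a - v_a > Q_{a'} - v_{a'} for all a' ∈ A₀, a' ≠ a} = ρ_a`.
Here `A₀ = {0} ∪ A`, `Q_0 ≡ 0` and `v_0 = 0`. -/
theorem stmt_9 {Ω : Type*} [MeasurableSpace Ω] (μ : Measure Ω) [IsProbabilityMeasure μ]
    {A : Type*} [Fintype A]
    (Q : Ω → A → ℝ) (hQmeas : Measurable Q)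
    (hQint : ∀ a : A, Integrable (fun ω => Q ω a) μ)
    (ρ : A → ℝ) (hρ : ∀ a, ρ a ∈ Ioo (0:ℝ) 1)
    (v : A → ℝ)
    (hopt : ∀ w : A → ℝ,
      (∫ ω, Finset.univ.sup' Finset.univ_nonempty
          (fun o : Option A => o.elim 0 (fun a => Q ω a - v a)) ∂μ)
        + ∑ a : A, v a * ρ a
      ≤ (∫ ω, Finset.univ.sup' Finset.univ_nonempty
          (fun o : Option A => o.elim 0 (fun a => Q ω a - w a)) ∂μ)
        + ∑ a : A, w a * ρ a)
    (hties : ∀ o o' : Option A, o ≠ o' →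
      μ {ω | o.elim 0 (fun a => Q ω a - v a) = o'.elim 0 (fun a => Q ω a - v a)} = 0) :
    ∀ a : A,
      (μ {ω | ∀ o : Option A, o ≠ some a →
          o.elim 0 (fun b => Q ω b - v b) < Q ω a - v a}).toReal = ρ a := by
  classical
  intro a
  -- abbreviations
  have hEne : (Finset.univ.erase (some a) : Finset (Option A)).Nonempty :=
    ⟨none, Finset.mem_erase.mpr ⟨by simp, Finset.mem_univ _⟩⟩
  set val : Option A → Ω → ℝ := fun o ω => o.elim 0 (fun b => Q ω b - v b) with hvaldef
  set X : Ω → ℝ := fun ω => Q ω a - v a with hXdef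
  set M : Ω → ℝ := fun ω =>
    (Finset.univ.erase (some a)).sup' hEne (fun o => val o ω) with hMdef
  -- measurability
  have hQb : ∀ b : A, Measurable fun ω => Q ω b := fun b => (measurable_pi_apply b).comp hQmeas
  have hvalm : ∀ o : Option A, Measurable (val o) := by
    rintro (_ | b)
    · exact measurable_const
    · exact (hQb b).sub measurable_const
  have hXm : Measurable X := (hQb a).sub measurable_const
  have hMm : Measurable M := by
    have h := Finset.measurable_sup' hEne (fun o (_ : o ∈ Finset.univ.erase (some a)) => hvalm o)
    have heq : (Finset.univ.erase (some a)).sup' hEne val = M := by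
      funext ω; rw [Finset.sup'_apply]
    rwa [heq] at h
  -- sup decomposition
  have hsup : ∀ f : Option A → ℝ, Finset.univ.sup' Finset.univ_nonempty f
      = max (f (some a)) ((Finset.univ.erase (some a)).sup' hEne f) := by
    intro f
    apply le_antisymm
    · refine Finset.sup'_le _ _ fun o _ => ?_
      by_cases h : o = some a
      · subst h; exact le_max_left _ _
      · exact le_trans (Finset.le_sup' f (Finset.mem_erase.mpr ⟨h, Finset.mem_univ _⟩))
          (le_max_right _ _)
    · exact max_le (Finset.le_sup' f (Finset.mem_univ _))
        (Finset.sup'_le _ _ fun o _ => Finset.le_sup' f (Finset.mem_univ _))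
  have hsup_v : ∀ ω, Finset.univ.sup' Finset.univ_nonempty
      (fun o : Option A => o.elim 0 (fun b => Q ω b - v b)) = max (X ω) (M ω) := by
    intro ω; exact hsup (fun o => val o ω)
  have hsup_t : ∀ (s : ℝ) (ω : Ω), Finset.univ.sup' Finset.univ_nonempty
      (fun o : Option A => o.elim 0 (fun b => Q ω b - Function.update v a (v a + s) b))
      = max (X ω - s) (M ω) := by
    intro s ω
    rw [hsup]
    have h1 : ((some a).elim 0 (fun b => Q ω b - Function.update v a (v a + s) b) : ℝ)
        = X ω - s := by
      show Q ω a - Function.update v a (v a + s) a = X ω - s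
      rw [Function.update_self]
      show Q ω a - (v a + s) = (Q ω a - v a) - s
      ring
    rw [h1]
    congr 1
    refine Finset.sup'_congr hEne rfl fun o ho => ?_
    rcases o with _ | b
    · rfl
    · have hb : b ≠ a := fun h => (Finset.mem_erase.mp ho).1 (by rw [h])
      simp only [Option.elim, Function.update_of_ne hb, hvaldef]
  -- integrability
  have hg : Integrable (fun ω => ∑ b : A, |Q ω b - v b|) μ :=
    integrable_finset_sum _ fun b _ => ((hQint b).sub (integrable_const _)).abs
  have habsle : ∀ ω, |max (X ω) (M ω)| ≤ ∑ b : A, |Q ω b - v b| := by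
    intro ω
    have h0 : (0 : ℝ) ≤ max (X ω) (M ω) :=
      le_max_of_le_right (Finset.le_sup' (fun o => val o ω)
        (Finset.mem_erase.mpr ⟨(by simp : (none : Option A) ≠ some a), Finset.mem_univ _⟩))
    rw [abs_of_nonneg h0]
    refine max_le ?_ (Finset.sup'_le _ _ fun o _ => ?_)
    · exact le_trans (le_abs_self _)
        (Finset.single_le_sum (f := fun b => |Q ω b - v b|) (fun b _ => abs_nonneg _)
          (Finset.mem_univ a))
    · rcases o with _ | b
      · exact Finset.sum_nonneg fun b _ => abs_nonneg _
      · exact le_trans (le_abs_self _)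
          (Finset.single_le_sum (f := fun c => |Q ω c - v c|) (fun c _ => abs_nonneg _)
            (Finset.mem_univ b))
  have hIv : Integrable (fun ω => max (X ω) (M ω)) μ :=
    hg.mono' (hXm.max hMm).aestronglyMeasurable
      (Filter.Eventually.of_forall fun ω => by
        simpa [Real.norm_eq_abs] using habsle ω)
  -- difference function
  set D : ℝ → Ω → ℝ := fun s ω => max (X ω - s) (M ω) - max (X ω) (M ω) with hDdef
  have hDabs : ∀ s ω, |D s ω| ≤ |s| := by
    intro s ω
    have h := abs_max_sub_max_le_abs (X ω - s) (X ω) (M ω)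
    have h2 : X ω - s - X ω = -s := by ring
    rwa [h2, abs_neg] at h
  have hDm : ∀ s, Measurable (D s) := fun s =>
    ((hXm.sub measurable_const).max hMm).sub (hXm.max hMm)
  have hDi : ∀ s, Integrable (D s) μ := fun s =>
    (integrable_const |s|).mono' (hDm s).aestronglyMeasurable
      (Filter.Eventually.of_forall fun ω => by
        simpa [Real.norm_eq_abs] using hDabs s ω)
  -- key inequality from optimality
  have hkey : ∀ s : ℝ, 0 ≤ (∫ ω, D s ω ∂μ) + s * ρ a := by
    intro s
    have h := hopt (Function.update v a (v a + s))
    have hsum : ∑ b : A, Function.update v a (v a + s) b * ρ b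
        = (∑ b : A, v b * ρ b) + s * ρ a := by
      have h1 : (fun b => Function.update v a (v a + s) b * ρ b)
          = Function.update (fun b => v b * ρ b) a ((v a + s) * ρ a) := by
        funext b
        by_cases hb : b = a
        · subst hb; simp
        · simp [Function.update_of_ne hb]
      rw [h1, Finset.sum_update_of_mem (Finset.mem_univ a),
        Finset.sdiff_singleton_eq_erase,
        ← Finset.add_sum_erase Finset.univ (fun b => v b * ρ b) (Finset.mem_univ a)]
      ring
    rw [hsum] at h
    have hi1 : (∫ ω, Finset.univ.sup' Finset.univ_nonempty
        (fun o : Option A => o.elim 0 (fun b => Q ω b - v b)) ∂μ)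
        = ∫ ω, max (X ω) (M ω) ∂μ := by
      exact integral_congr_ae (Filter.Eventually.of_forall fun ω => hsup_v ω)
    have hi2 : (∫ ω, Finset.univ.sup' Finset.univ_nonempty
        (fun o : Option A => o.elim 0 (fun b => Q ω b - Function.update v a (v a + s) b)) ∂μ)
        = (∫ ω, max (X ω) (M ω) ∂μ) + ∫ ω, D s ω ∂μ := by
      rw [← integral_add hIv (hDi s)]
      refine integral_congr_ae (Filter.Eventually.of_forall fun ω => ?_)
      beta_reduce
      rw [hsup_t s ω]; simp [hDdef]
    rw [hi1, hi2] at h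
    linarith
  -- the winning set
  set S : Set Ω := {ω | M ω < X ω} with hSdef
  have hSmeas : MeasurableSet S := measurableSet_lt hMm hXm
  -- ties are null
  have htie : μ {ω | X ω = M ω} = 0 := by
    have hsub : {ω | X ω = M ω} ⊆
        ⋃ (o : Option A) (_ : o ≠ some a), {ω | val o ω = X ω} := by
      intro ω hω
      obtain ⟨o, ho, hoe⟩ := Finset.exists_mem_eq_sup' hEne (fun o => val o ω)
      have hne : o ≠ some a := (Finset.mem_erase.mp ho).1
      refine Set.mem_iUnion.mpr ⟨o, Set.mem_iUnion.mpr ⟨hne, ?_⟩⟩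
      have : M ω = val o ω := hoe
      exact (this.symm.trans (Set.mem_setOf_eq ▸ hω).symm)
    refine measure_mono_null hsub (measure_iUnion_null fun o => measure_iUnion_null fun ho => ?_)
    simpa [hvaldef, hXdef] using hties o (some a) ho
  have haeX : ∀ᵐ ω ∂μ, X ω ≠ M ω := by
    rw [ae_iff]
    simpa using htie
  -- sequence
  set t : ℕ → ℝ := fun n => 1 / (n + 1) with htdef
  have htpos : ∀ n, 0 < t n := fun n => by positivity
  have ht0 : Filter.Tendsto t Filter.atTop (nhds 0) := tendsto_one_div_add_atTop_nhds_zero_nat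
  -- Claim 1 : toReal ≤ ρ a
  have hclaim1 : (μ S).toReal ≤ ρ a := by
    have hF : ∀ n, -ρ a ≤ ∫ ω, D (t n) ω / t n ∂μ := by
      intro n
      rw [integral_div, le_div_iff₀ (htpos n)]
      nlinarith [hkey (t n)]
    have hlim : ∀ᵐ ω ∂μ, Filter.Tendsto (fun n => D (t n) ω / t n) Filter.atTop
        (nhds (Set.indicator S (fun _ => (-1 : ℝ)) ω)) := by
      filter_upwards [haeX] with ω hω
      rcases lt_or_gt_of_ne hω with hlt | hgt
      · have hωS : ω ∉ S := by simp only [hSdef, Set.mem_setOf_eq, not_lt]; exact le_of_lt hlt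
        rw [Set.indicator_of_notMem hωS]
        have hz : ∀ n, D (t n) ω / t n = 0 := by
          intro n
          have h1 : max (X ω - t n) (M ω) = M ω := max_eq_right (by linarith [htpos n])
          have h2 : max (X ω) (M ω) = M ω := max_eq_right (le_of_lt hlt)
          simp [hDdef, h1, h2]
        exact Filter.Tendsto.congr (fun n => (hz n).symm) tendsto_const_nhds
      · have hωS : ω ∈ S := hgt
        rw [Set.indicator_of_mem hωS]
        have hev : ∀ᶠ n in Filter.atTop, D (t n) ω / t n = -1 := by
          have hcp : (0 : ℝ) < X ω - M ω := by linarith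
          filter_upwards [ht0.eventually (gt_mem_nhds hcp)] with n hn
          have h1 : max (X ω - t n) (M ω) = X ω - t n := max_eq_left (by linarith)
          have h2 : max (X ω) (M ω) = X ω := max_eq_left (le_of_lt hgt)
          have h3 : D (t n) ω = -(t n) := by rw [hDdef]; simp only []; rw [h1, h2]; ring
          rw [h3, neg_div, div_self (ne_of_gt (htpos n))]
        exact Filter.Tendsto.congr' (hev.mono fun n h => h.symm) tendsto_const_nhds
    have hDCT : Filter.Tendsto (fun n => ∫ ω, D (t n) ω / t n ∂μ) Filter.atTop
        (nhds (∫ ω, Set.indicator S (fun _ => (-1 : ℝ)) ω ∂μ)) := by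
      refine tendsto_integral_of_dominated_convergence (fun _ => (1 : ℝ))
        (fun n => ((hDm (t n)).div_const _).aestronglyMeasurable)
        (integrable_const 1)
        (fun n => Filter.Eventually.of_forall fun ω => ?_) hlim
      rw [Real.norm_eq_abs, abs_div, abs_of_pos (htpos n)]
      exact div_le_one_of_le₀ (le_trans (hDabs _ ω) (le_of_eq (abs_of_pos (htpos n))))
        (le_of_lt (htpos n))
    have hint : (∫ ω, Set.indicator S (fun _ => (-1 : ℝ)) ω ∂μ) = -(μ S).toReal := by
      rw [integral_indicator_const (-1 : ℝ) hSmeas]; simp [measureReal_def]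
    rw [hint] at hDCT
    have := ge_of_tendsto hDCT (Filter.Eventually.of_forall hF)
    linarith
  -- Claim 2 : ρ a ≤ toReal
  have hclaim2 : ρ a ≤ (μ S).toReal := by
    have hF : ∀ n, ρ a ≤ ∫ ω, D (-(t n)) ω / t n ∂μ := by
      intro n
      rw [integral_div, le_div_iff₀ (htpos n)]
      nlinarith [hkey (-(t n))]
    have hlim : ∀ᵐ ω ∂μ, Filter.Tendsto (fun n => D (-(t n)) ω / t n) Filter.atTop
        (nhds (Set.indicator S (fun _ => (1 : ℝ)) ω)) := by
      filter_upwards [haeX] with ω hω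
      rcases lt_or_gt_of_ne hω with hlt | hgt
      · have hωS : ω ∉ S := by simp only [hSdef, Set.mem_setOf_eq, not_lt]; exact le_of_lt hlt
        rw [Set.indicator_of_notMem hωS]
        have hev : ∀ᶠ n in Filter.atTop, D (-(t n)) ω / t n = 0 := by
          have hcp : (0 : ℝ) < M ω - X ω := by linarith
          filter_upwards [ht0.eventually (gt_mem_nhds hcp)] with n hn
          have h1 : max (X ω - -(t n)) (M ω) = M ω := max_eq_right (by linarith)
          have h2 : max (X ω) (M ω) = M ω := max_eq_right (le_of_lt hlt)
          have h3 : D (-(t n)) ω = 0 := by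
            rw [hDdef]; simp only []; rw [h1, h2]; ring
          rw [h3, zero_div]
        exact Filter.Tendsto.congr' (hev.mono fun n h => h.symm) tendsto_const_nhds
      · have hωS : ω ∈ S := hgt
        rw [Set.indicator_of_mem hωS]
        have hz : ∀ n, D (-(t n)) ω / t n = 1 := by
          intro n
          have h1 : max (X ω - -(t n)) (M ω) = X ω + t n :=
            by rw [sub_neg_eq_add]; exact max_eq_left (by linarith [htpos n])
          have h2 : max (X ω) (M ω) = X ω := max_eq_left (le_of_lt hgt)
          have h3 : D (-(t n)) ω = t n := by
            rw [hDdef]; simp only []; rw [h1, h2]; ring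
          rw [h3, div_self (ne_of_gt (htpos n))]
        exact Filter.Tendsto.congr (fun n => (hz n).symm) tendsto_const_nhds
    have hDCT : Filter.Tendsto (fun n => ∫ ω, D (-(t n)) ω / t n ∂μ) Filter.atTop
        (nhds (∫ ω, Set.indicator S (fun _ => (1 : ℝ)) ω ∂μ)) := by
      refine tendsto_integral_of_dominated_convergence (fun _ => (1 : ℝ))
        (fun n => ((hDm (-(t n))).div_const _).aestronglyMeasurable)
        (integrable_const 1)
        (fun n => Filter.Eventually.of_forall fun ω => ?_) hlim
      rw [Real.norm_eq_abs, abs_div, abs_of_pos (htpos n)]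
      refine div_le_one_of_le₀ (le_trans (hDabs _ ω) ?_) (le_of_lt (htpos n))
      rw [abs_neg, abs_of_pos (htpos n)]
    have hint : (∫ ω, Set.indicator S (fun _ => (1 : ℝ)) ω ∂μ) = (μ S).toReal := by
      rw [integral_indicator_const (1 : ℝ) hSmeas]; simp [measureReal_def]
    rw [hint] at hDCT
    exact ge_of_tendsto hDCT (Filter.Eventually.of_forall hF)
  -- identify the set
  have hset : {ω | ∀ o : Option A, o ≠ some a →
      o.elim 0 (fun b => Q ω b - v b) < Q ω a - v a} = S := by
    ext ω
    simp only [Set.mem_setOf_eq, hSdef]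
    constructor
    · intro h
      exact (Finset.sup'_lt_iff hEne).mpr fun o ho => h o (Finset.mem_erase.mp ho).1
    · intro h o ho
      exact lt_of_le_of_lt
        (Finset.le_sup' (fun o => val o ω) (Finset.mem_erase.mpr ⟨ho, Finset.mem_univ o⟩)) h
  rw [hset]
  exact le_antisymm hclaim1 hclaim2
end

section
/- Let A₀ = {0, 1, …, A} and let ρ_a > 0 with Σ_{a∈A₀} ρ_a = 1. Let N be a positive integer such that C_a := ρ_a·N is a positive integer for every a ∈ A₀, and let (X_n)_{n≥1} be i.i.d. A₀-valued random variables with P(X_n = a) = ρ_a. For each a, let N_a = inf{ n ≥ 1 : #{ i ≤ n : X_i = a } = C_a } and N* = min_{a∈A₀} N_a. Then E[N*] ≥ N − √N · K(ρ), where K(ρ) = √( (A/(A+1)) · Σ_{a∈A₀} (1 − ρ_a)/ρ_a ). -/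
open Finset

lemma aven_pointwise {n : ℕ} (hn : 0 < n) (y : Fin n → ℝ) (j : Fin n) :
    y j ≤ (∑ a, y a) / n +
      Real.sqrt (∑ a, (y a - (∑ b, y b) / n) ^ 2) * Real.sqrt ((n - 1 : ℝ) / n) := by
  set m : ℝ := (∑ b, y b) / n with hm
  set S2 : ℝ := ∑ a, (y a - m) ^ 2 with hS2
  have hnR : (0 : ℝ) < n := by exact_mod_cast hn
  have hsum0 : ∑ a, (y a - m) = 0 := by
    simp only [Finset.sum_sub_distrib, Finset.sum_const, card_univ, Fintype.card_fin, nsmul_eq_mul]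
    rw [hm]; field_simp; ring
  have hcard : (univ.erase j).card = n - 1 := by
    rw [Finset.card_erase_of_mem (mem_univ j), card_univ, Fintype.card_fin]
  have hterase : ∑ a ∈ univ.erase j, (y a - m) = -(y j - m) := by
    have := Finset.sum_erase_add univ (fun a => y a - m) (mem_univ j)
    linarith
  have hS2split : ∑ a ∈ univ.erase j, (y a - m) ^ 2 = S2 - (y j - m) ^ 2 := by
    have := Finset.sum_erase_add univ (fun a => (y a - m) ^ 2) (mem_univ j)
    rw [hS2]; linarith
  have hCS : (∑ a ∈ univ.erase j, (y a - m)) ^ 2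
      ≤ (univ.erase j).card * ∑ a ∈ univ.erase j, (y a - m) ^ 2 :=
    sq_sum_le_card_mul_sum_sq
  rw [hterase, hS2split, hcard, neg_pow] at hCS
  have hkey : (n : ℝ) * (y j - m) ^ 2 ≤ ((n : ℝ) - 1) * S2 := by
    have hc : ((n - 1 : ℕ) : ℝ) = (n : ℝ) - 1 := by
      have : 1 ≤ n := hn
      push_cast [this]; ring
    rw [hc] at hCS
    nlinarith [sq_nonneg (y j - m)]
  have hS2nonneg : 0 ≤ S2 := Finset.sum_nonneg fun a _ => sq_nonneg _
  rcases le_or_gt (y j - m) 0 with ht | ht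
  · have : 0 ≤ Real.sqrt S2 * Real.sqrt ((n - 1 : ℝ) / n) := by positivity
    linarith
  · have h1 : (y j - m) ^ 2 ≤ S2 * (((n : ℝ) - 1) / n) := by
      rw [mul_div_assoc'] at *
      rw [le_div_iff₀ hnR]
      nlinarith
    have h2 : y j - m ≤ Real.sqrt (S2 * (((n : ℝ) - 1) / n)) := by
      calc y j - m = Real.sqrt ((y j - m) ^ 2) := (Real.sqrt_sq ht.le).symm
        _ ≤ _ := Real.sqrt_le_sqrt h1
    rw [Real.sqrt_mul hS2nonneg] at h2
    linarith

open Finset MeasureTheory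

lemma integral_sqrt_le {Ω : Type*} [MeasurableSpace Ω] (μ : Measure Ω) [IsProbabilityMeasure μ]
    (S : Ω → ℝ) (hSnn : ∀ ω, 0 ≤ S ω)
    (hS1 : Integrable S μ) (hS2 : Integrable (fun ω => S ω ^ 2) μ) :
    ∫ ω, S ω ∂μ ≤ Real.sqrt (∫ ω, S ω ^ 2 ∂μ) := by
  set m : ℝ := ∫ ω, S ω ∂μ with hm
  have hm0 : 0 ≤ m := integral_nonneg fun ω => hSnn ω
  have h0 : (0 : ℝ) ≤ ∫ ω, (S ω - m) ^ 2 ∂μ := integral_nonneg fun ω => sq_nonneg _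
  have hint : Integrable (fun ω => S ω ^ 2 - 2 * m * S ω) μ :=
    hS2.sub (hS1.const_mul (2 * m))
  have hexp : ∫ ω, (S ω - m) ^ 2 ∂μ = (∫ ω, S ω ^ 2 ∂μ) - m ^ 2 := by
    have : (fun ω => (S ω - m) ^ 2) = fun ω => (S ω ^ 2 - 2 * m * S ω) + m ^ 2 := by
      funext ω; ring
    rw [this, integral_add hint (integrable_const _), integral_sub hS2 (hS1.const_mul (2 * m)),
      integral_const, probReal_univ, smul_eq_mul, one_mul,
      integral_const_mul]
    rw [← hm]; ring
  rw [hexp] at h0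
  calc m = Real.sqrt (m ^ 2) := (Real.sqrt_sq hm0).symm
    _ ≤ _ := Real.sqrt_le_sqrt (by linarith)

lemma sum_sub_mean_sq_le {n : ℕ} (y : Fin n → ℝ) :
    ∑ a, (y a - (∑ b, y b) / n) ^ 2 ≤ ∑ a, y a ^ 2 := by
  rcases Nat.eq_zero_or_pos n with h | h
  · subst h; simp
  have hnR : (0 : ℝ) < n := by exact_mod_cast h
  set m : ℝ := (∑ b, y b) / n with hm
  have hsum : ∑ b, y b = n * m := by rw [hm]; field_simp
  have hexpand : ∑ a, (y a - m) ^ 2 = (∑ a, y a ^ 2) - 2 * m * (∑ b, y b) + n * m ^ 2 := by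
    calc ∑ a, (y a - m) ^ 2 = ∑ a, (y a ^ 2 - 2 * m * y a + m ^ 2) := by
          apply Finset.sum_congr rfl; intros; ring
      _ = _ := by
          rw [Finset.sum_add_distrib, Finset.sum_sub_distrib, ← Finset.mul_sum,
            Finset.sum_const, card_univ, Fintype.card_fin, nsmul_eq_mul]
  rw [hexpand, hsum]
  nlinarith [sq_nonneg m]

lemma aven_expect {Ω : Type*} [MeasurableSpace Ω] (μ : Measure Ω) [IsProbabilityMeasure μ]
    {n : ℕ} (hne : (Finset.univ : Finset (Fin n)).Nonempty) (Y : Fin n → Ω → ℝ)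
    (hYmeas : ∀ a, Measurable (Y a))
    (hYint : ∀ a, Integrable (Y a) μ)
    (hYsq : ∀ a, Integrable (fun ω => (Y a ω) ^ 2) μ)
    (hYmean : ∀ a, ∫ ω, Y a ω ∂μ = 0) :
    ∫ ω, (Finset.univ.sup' hne (fun a => Y a ω)) ∂μ
      ≤ Real.sqrt (((n : ℝ) - 1) / n * ∑ a, ∫ ω, (Y a ω) ^ 2 ∂μ) := by
  have hn : 0 < n := by
    rcases hne with ⟨a, _⟩; exact a.pos
  have hnR : (0 : ℝ) < n := by exact_mod_cast hn
  set M : Ω → ℝ := fun ω => (∑ b, Y b ω) / n with hM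
  set S : Ω → ℝ := fun ω => Real.sqrt (∑ a, (Y a ω - M ω) ^ 2) with hS
  set c : ℝ := Real.sqrt (((n : ℝ) - 1) / n) with hc
  have hc0 : 0 ≤ c := Real.sqrt_nonneg _
  -- pointwise bound on sup'
  have hpt : ∀ ω, Finset.univ.sup' hne (fun a => Y a ω) ≤ M ω + S ω * c := by
    intro ω
    apply Finset.sup'_le
    intro a _
    exact aven_pointwise hn (fun b => Y b ω) a
  -- measurability
  have hMmeas : Measurable M := (Finset.measurable_sum _ fun b _ => hYmeas b).div_const _
  have hSmeas : Measurable S := by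
    apply Measurable.sqrt
    exact Finset.measurable_sum _ fun a _ => ((hYmeas a).sub hMmeas).pow_const 2
  have hZmeas : Measurable (fun ω => Finset.univ.sup' hne (fun a => Y a ω)) := by
    have h := Finset.measurable_sup' hne (fun a (_ : a ∈ Finset.univ) => hYmeas a)
    have he : (Finset.univ.sup' hne Y) = fun ω => Finset.univ.sup' hne fun a => Y a ω :=
      funext fun ω => Finset.sup'_apply hne Y ω
    rwa [he] at h
  -- integrability
  have hsqsum : Integrable (fun ω => ∑ a, Y a ω ^ 2) μ :=
    integrable_finset_sum _ fun a _ => hYsq a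
  have hS2_le : ∀ ω, S ω ^ 2 ≤ ∑ a, Y a ω ^ 2 := by
    intro ω
    rw [hS]
    rw [Real.sq_sqrt (Finset.sum_nonneg fun a _ => sq_nonneg _)]
    exact sum_sub_mean_sq_le (fun a => Y a ω)
  have hSnn : ∀ ω, 0 ≤ S ω := fun ω => Real.sqrt_nonneg _
  have hS2int : Integrable (fun ω => S ω ^ 2) μ := by
    apply Integrable.mono' hsqsum ((hSmeas.pow_const 2).aestronglyMeasurable)
    filter_upwards with ω
    rw [Real.norm_eq_abs, abs_of_nonneg (sq_nonneg (S ω))]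
    exact hS2_le ω
  have hS1int : Integrable S μ := by
    apply Integrable.mono' ((integrable_const (1:ℝ)).add hS2int) hSmeas.aestronglyMeasurable
    filter_upwards with ω
    rw [Real.norm_eq_abs, abs_of_nonneg (hSnn ω)]
    simp only [Pi.add_apply]
    rcases le_or_gt (S ω) 1 with h | h
    · nlinarith [sq_nonneg (S ω)]
    · nlinarith
  have hMint : Integrable M μ := (integrable_finset_sum _ fun b _ => hYint b).div_const _
  have habs : Integrable (fun ω => ∑ a, |Y a ω|) μ :=
    integrable_finset_sum _ fun a _ => (hYint a).abs
  have hZint : Integrable (fun ω => Finset.univ.sup' hne (fun a => Y a ω)) μ := by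
    apply Integrable.mono' habs hZmeas.aestronglyMeasurable
    filter_upwards with ω
    rw [Real.norm_eq_abs, abs_le]
    constructor
    · obtain ⟨a, _⟩ := hne
      refine le_trans ?_ (Finset.le_sup' (fun b => Y b ω) (Finset.mem_univ a))
      have h1 : |Y a ω| ≤ ∑ b, |Y b ω| :=
        Finset.single_le_sum (f := fun b => |Y b ω|) (fun b _ => abs_nonneg _) (Finset.mem_univ a)
      linarith [neg_abs_le (Y a ω)]
    · apply Finset.sup'_le
      intro a _
      exact le_trans (le_abs_self _)
        (Finset.single_le_sum (f := fun b => |Y b ω|) (fun b _ => abs_nonneg _) (Finset.mem_univ a))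
  -- mean of M is zero
  have hMmean : ∫ ω, M ω ∂μ = 0 := by
    rw [hM]
    simp only [integral_div]
    rw [integral_finset_sum _ fun b _ => hYint b]
    simp [hYmean]
  -- main chain
  have h1 : ∫ ω, Finset.univ.sup' hne (fun a => Y a ω) ∂μ
      ≤ ∫ ω, (M ω + S ω * c) ∂μ :=
    integral_mono hZint (hMint.add (hS1int.mul_const c)) hpt
  have h2 : ∫ ω, (M ω + S ω * c) ∂μ = c * ∫ ω, S ω ∂μ := by
    rw [integral_add hMint (hS1int.mul_const c), hMmean, integral_mul_const]
    ring
  have h3 : ∫ ω, S ω ∂μ ≤ Real.sqrt (∫ ω, S ω ^ 2 ∂μ) :=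
    integral_sqrt_le μ S hSnn hS1int hS2int
  have h4 : ∫ ω, S ω ^ 2 ∂μ ≤ ∑ a, ∫ ω, Y a ω ^ 2 ∂μ := by
    rw [← integral_finset_sum _ fun a _ => hYsq a]
    exact integral_mono hS2int hsqsum hS2_le
  calc ∫ ω, Finset.univ.sup' hne (fun a => Y a ω) ∂μ
      ≤ c * ∫ ω, S ω ∂μ := by rw [← h2]; exact h1
    _ ≤ c * Real.sqrt (∑ a, ∫ ω, Y a ω ^ 2 ∂μ) := by
        apply mul_le_mul_of_nonneg_left _ hc0
        exact le_trans h3 (Real.sqrt_le_sqrt h4)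
    _ = Real.sqrt (((n : ℝ) - 1) / n * ∑ a, ∫ ω, (Y a ω) ^ 2 ∂μ) := by
        have hfrac : (0:ℝ) ≤ ((n:ℝ) - 1) / n := by
          apply div_nonneg _ hnR.le
          have h1 : (1:ℝ) ≤ (n:ℝ) := by exact_mod_cast hn
          linarith
        rw [hc, ← Real.sqrt_mul hfrac]


open Finset MeasureTheory

section Binom

variable {Ω : Type*} [MeasurableSpace Ω] {μ : Measure Ω} [IsProbabilityMeasure μ]
variable {A : ℕ} {X : ℕ → Ω → Fin (A + 1)}

/-- the count of occurrences of `a` among the first `n` variables -/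
def cnt (X : ℕ → Ω → Fin (A + 1)) (a : Fin (A + 1)) (n : ℕ) (ω : Ω) : ℕ :=
  ((Finset.range n).filter (fun m => X m ω = a)).card

lemma cnt_succ (a : Fin (A + 1)) (n : ℕ) (ω : Ω) :
    cnt X a (n + 1) ω = cnt X a n ω + (if X n ω = a then 1 else 0) := by
  unfold cnt
  rw [Finset.range_add_one, Finset.filter_insert]
  by_cases h : X n ω = a
  · rw [if_pos h, if_pos h, Finset.card_insert_of_notMem (by simp)]
  · rw [if_neg h, if_neg h, add_zero]

lemma cnt_mono (a : Fin (A + 1)) {m n : ℕ} (h : m ≤ n) (ω : Ω) :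
    cnt X a m ω ≤ cnt X a n ω :=
  Finset.card_le_card (Finset.filter_subset_filter _ (Finset.range_subset_range.2 h))

lemma measurable_cnt (hXmeas : ∀ n, Measurable (X n)) (a : Fin (A + 1)) (n : ℕ) :
    Measurable (cnt X a n) := by
  have : cnt X a n = fun ω => ∑ m ∈ Finset.range n, (if X m ω = a then 1 else 0) := by
    funext ω; unfold cnt; rw [Finset.card_filter]
  rw [this]
  exact Finset.measurable_sum _ fun m _ =>
    Measurable.ite (hXmeas m (measurableSet_singleton a)) measurable_const measurable_const

lemma measurableSet_cnt_eq (hXmeas : ∀ n, Measurable (X n)) (a : Fin (A + 1)) (n k : ℕ) :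
    MeasurableSet {ω | cnt X a n ω = k} :=
  measurable_cnt hXmeas a n (measurableSet_singleton k)

lemma indep_cnt_event (hXmeas : ∀ n, Measurable (X n))
    (hXindep : ProbabilityTheory.iIndepFun X μ)
    (a b : Fin (A + 1)) (n k : ℕ) :
    μ ({ω | cnt X a n ω = k} ∩ {ω | X n ω = b})
      = μ {ω | cnt X a n ω = k} * μ {ω | X n ω = b} := by
  have hST : Disjoint (Finset.range n) ({n} : Finset ℕ) := by simp
  have hIF := hXindep.indepFun_finset (Finset.range n) {n} hST hXmeas
  rw [ProbabilityTheory.indepFun_iff_measure_inter_preimage_eq_mul] at hIF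
  set g : ((i : (Finset.range n : Finset ℕ)) → Fin (A + 1)) → ℕ :=
    fun v => ((Finset.range n).attach.filter (fun i => v i = a)).card with hg
  set s : Set ((i : (Finset.range n : Finset ℕ)) → Fin (A + 1)) := g ⁻¹' {k} with hs
  set t : Set ((i : (({n} : Finset ℕ) : Finset ℕ)) → Fin (A + 1)) :=
    {v | v ⟨n, by simp⟩ = b} with ht
  have h := hIF s t (Set.toFinite s).measurableSet (Set.toFinite t).measurableSet
  have hpre1 : (fun ω (i : (Finset.range n : Finset ℕ)) => X i ω) ⁻¹' s
      = {ω | cnt X a n ω = k} := by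
    ext ω
    simp only [Set.mem_preimage, hs, Set.mem_singleton_iff, Set.mem_setOf_eq, hg]
    constructor <;> intro hh <;> rw [← hh] <;> unfold cnt <;>
      rw [Finset.card_filter, Finset.card_filter] <;>
      exact (Finset.sum_attach (Finset.range n) fun m => if X m ω = a then 1 else 0).symm ▸ rfl
  have hpre2 : (fun ω (i : (({n} : Finset ℕ) : Finset ℕ)) => X i ω) ⁻¹' t
      = {ω | X n ω = b} := by
    ext ω
    simp only [Set.mem_preimage, ht, Set.mem_setOf_eq]
  rwa [hpre1, hpre2] at h

end Binom

section Binom2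

variable {Ω : Type*} [MeasurableSpace Ω] {μ : Measure Ω} [IsProbabilityMeasure μ]
variable {A : ℕ} {X : ℕ → Ω → Fin (A + 1)} {ρ : Fin (A + 1) → ℝ}

lemma indep_cnt_event_ne (hXmeas : ∀ n, Measurable (X n))
    (hXindep : ProbabilityTheory.iIndepFun X μ)
    (hρpos : ∀ b, 0 < ρ b) {a : Fin (A + 1)} (hρle1 : ρ a ≤ 1)
    (hXdist : ∀ n b, μ {ω | X n ω = b} = ENNReal.ofReal (ρ b))
    (n k : ℕ) :
    μ ({ω | cnt X a n ω = k} ∩ {ω | X n ω ≠ a})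
      = μ {ω | cnt X a n ω = k} * ENNReal.ofReal (1 - ρ a) := by
  have hmeasa : MeasurableSet {ω | X n ω = a} := hXmeas n (measurableSet_singleton a)
  have hEmeas : MeasurableSet {ω | cnt X a n ω = k} := measurableSet_cnt_eq hXmeas a n k
  have hdisj : Disjoint ({ω | cnt X a n ω = k} ∩ {ω | X n ω ≠ a})
      ({ω | cnt X a n ω = k} ∩ {ω | X n ω = a}) :=
    Set.disjoint_left.mpr (fun ω h1 h2 => h1.2 h2.2)
  have hunion : ({ω | cnt X a n ω = k} ∩ {ω | X n ω ≠ a})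
      ∪ ({ω | cnt X a n ω = k} ∩ {ω | X n ω = a}) = {ω | cnt X a n ω = k} := by
    ext ω
    by_cases h : X n ω = a <;> simp [h]
  have hprod := indep_cnt_event hXmeas hXindep a a n k
  rw [hXdist n a] at hprod
  have hsplit2 : μ ({ω | cnt X a n ω = k} ∩ {ω | X n ω ≠ a})
      + μ {ω | cnt X a n ω = k} * ENNReal.ofReal (ρ a) = μ {ω | cnt X a n ω = k} := by
    rw [← hprod, ← measure_union hdisj (hEmeas.inter hmeasa), hunion]
  have hsplit3 : μ {ω | cnt X a n ω = k} * ENNReal.ofReal (1 - ρ a)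
      + μ {ω | cnt X a n ω = k} * ENNReal.ofReal (ρ a) = μ {ω | cnt X a n ω = k} := by
    rw [← mul_add, ← ENNReal.ofReal_add (by linarith) (hρpos a).le, sub_add_cancel,
      ENNReal.ofReal_one, mul_one]
  have hfin : μ {ω | cnt X a n ω = k} * ENNReal.ofReal (ρ a) ≠ ⊤ :=
    ENNReal.mul_ne_top (measure_ne_top μ _) ENNReal.ofReal_ne_top
  exact (ENNReal.add_left_inj hfin).mp (hsplit2.trans hsplit3.symm)

lemma binom_dist (hXmeas : ∀ n, Measurable (X n))
    (hXindep : ProbabilityTheory.iIndepFun X μ)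
    (hρpos : ∀ b, 0 < ρ b) {a : Fin (A + 1)} (hρle1 : ρ a ≤ 1)
    (hXdist : ∀ n b, μ {ω | X n ω = b} = ENNReal.ofReal (ρ b)) :
    ∀ n k, μ {ω | cnt X a n ω = k}
      = ENNReal.ofReal ((n.choose k : ℝ) * ρ a ^ k * (1 - ρ a) ^ (n - k)) := by
  have hq0 : 0 ≤ 1 - ρ a := by linarith
  have hterm : ∀ m j : ℕ, 0 ≤ (m.choose j : ℝ) * ρ a ^ j * (1 - ρ a) ^ (m - j) := fun m j =>
    mul_nonneg (mul_nonneg (Nat.cast_nonneg _) (pow_nonneg (hρpos a).le _))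
      (pow_nonneg hq0 _)
  intro n
  induction n with
  | zero =>
    intro k
    cases k with
    | zero => simp [cnt]
    | succ k =>
      have : {ω : Ω | cnt X a 0 ω = k + 1} = ∅ := by
        ext ω; simp [cnt]
      rw [this]
      simp
  | succ n ih =>
    intro k
    cases k with
    | zero =>
      have hset : {ω | cnt X a (n + 1) ω = 0} = {ω | cnt X a n ω = 0} ∩ {ω | X n ω ≠ a} := by
        ext ω
        simp only [Set.mem_setOf_eq, Set.mem_inter_iff, cnt_succ]
        by_cases h : X n ω = a <;> simp [h]
      rw [hset, indep_cnt_event_ne hXmeas hXindep hρpos hρle1 hXdist n 0, ih 0,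
        ← ENNReal.ofReal_mul (hterm n 0)]
      congr 1
      simp [pow_succ]
    | succ k =>
      have hset : {ω | cnt X a (n + 1) ω = k + 1}
          = ({ω | cnt X a n ω = k + 1} ∩ {ω | X n ω ≠ a})
            ∪ ({ω | cnt X a n ω = k} ∩ {ω | X n ω = a}) := by
        ext ω
        simp only [Set.mem_setOf_eq, Set.mem_union, Set.mem_inter_iff, cnt_succ]
        by_cases h : X n ω = a <;> simp [h] <;> omega
      have hdisj : Disjoint ({ω | cnt X a n ω = k + 1} ∩ {ω | X n ω ≠ a})
          ({ω | cnt X a n ω = k} ∩ {ω | X n ω = a}) :=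
        Set.disjoint_left.mpr (fun ω h1 h2 => h1.2 h2.2)
      have hmeas2 : MeasurableSet ({ω | cnt X a n ω = k} ∩ {ω | X n ω = a}) :=
        (measurableSet_cnt_eq hXmeas a n k).inter (hXmeas n (measurableSet_singleton a))
      rw [hset, measure_union hdisj hmeas2,
        indep_cnt_event_ne hXmeas hXindep hρpos hρle1 hXdist n (k + 1),
        indep_cnt_event hXmeas hXindep a a n k, hXdist n a, ih (k + 1), ih k,
        ← ENNReal.ofReal_mul (hterm n (k + 1)), ← ENNReal.ofReal_mul (hterm n k),
        ← ENNReal.ofReal_add (mul_nonneg (hterm n (k + 1)) hq0)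
          (mul_nonneg (hterm n k) (hρpos a).le)]
      congr 1
      rcases le_or_gt (k + 1) n with hkn | hkn
      · have h1 : n - k = (n - (k + 1)) + 1 := by omega
        have h2 : n + 1 - (k + 1) = (n - (k + 1)) + 1 := by omega
        rw [Nat.choose_succ_succ n k, h1, h2]
        push_cast
        ring
      · have h1 : n.choose (k + 1) = 0 := Nat.choose_eq_zero_of_lt hkn
        have h2 : n - k = 0 := by omega
        have h3 : n + 1 - (k + 1) = n - k := by omega
        rw [Nat.choose_succ_succ n k, h1, h2, h3, h2]
        push_cast
        ring

end Binom2

open Finset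

lemma hasSum_negbinom_tail {ρ : ℝ} (h0 : 0 < ρ) (h1 : ρ ≤ 1) (k : ℕ) :
    HasSum (fun n : ℕ => (n.choose k : ℝ) * ρ ^ k * (1 - ρ) ^ (n - k)) (1 / ρ) := by
  set q : ℝ := 1 - ρ with hqdef
  have hq : ‖q‖ < 1 := by
    rw [Real.norm_eq_abs, abs_lt]; constructor <;> [linarith; linarith]
  set f : ℕ → ℝ := fun n => (n.choose k : ℝ) * ρ ^ k * q ^ (n - k) with hf
  have h := hasSum_choose_mul_geometric_of_norm_lt_one k hq
  have hmul := h.mul_left (ρ ^ k)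
  have key : (fun m => f (m + k)) = fun m => ρ ^ k * (((m + k).choose k : ℝ) * q ^ m) := by
    funext m
    rw [hf]
    simp only [Nat.add_sub_cancel]
    ring
  have hval : ρ ^ k * (1 / (1 - q) ^ (k + 1)) = 1 / ρ := by
    rw [hqdef]
    have : (1 : ℝ) - (1 - ρ) = ρ := by ring
    rw [this, pow_succ]
    field_simp
  have hshift : HasSum (fun m => f (m + k)) (1 / ρ) := by
    rw [key, ← hval]; exact hmul
  have hzero : ∑ i ∈ Finset.range k, f i = 0 := by
    apply Finset.sum_eq_zero
    intro i hi
    rw [hf]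
    simp [Nat.choose_eq_zero_of_lt (Finset.mem_range.mp hi)]
  refine (hasSum_nat_add_iff' k).mp ?_
  rwa [hzero, sub_zero]

lemma hasSum_negbinom_tail' {ρ : ℝ} (h0 : 0 < ρ) (h1 : ρ ≤ 1) (k : ℕ) :
    HasSum (fun n : ℕ => ((n : ℝ) + 1) * ((n.choose k : ℝ) * ρ ^ k * (1 - ρ) ^ (n - k)))
      (((k : ℝ) + 1) / ρ ^ 2) := by
  set q : ℝ := 1 - ρ with hqdef
  have hq : ‖q‖ < 1 := by
    rw [Real.norm_eq_abs, abs_lt]; constructor <;> [linarith; linarith]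
  set g : ℕ → ℝ := fun n => ((n : ℝ) + 1) * ((n.choose k : ℝ) * ρ ^ k * q ^ (n - k)) with hg
  have h := hasSum_choose_mul_geometric_of_norm_lt_one (k + 1) hq
  have hmul := h.mul_left (((k : ℝ) + 1) * ρ ^ k)
  have key : (fun m => g (m + k))
      = fun m => ((k : ℝ) + 1) * ρ ^ k * (((m + (k + 1)).choose (k + 1) : ℝ) * q ^ m) := by
    funext m
    rw [hg]
    simp only [Nat.add_sub_cancel]
    have hnat : (m + k + 1) * ((m + k).choose k) = ((m + (k + 1)).choose (k + 1)) * (k + 1) := by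
      have h5 := Nat.add_one_mul_choose_eq (m + k) k
      simpa [Nat.succ_eq_add_one, Nat.add_assoc] using h5
    have hcast : ((m : ℝ) + k + 1) * (((m + k).choose k : ℝ))
        = (((m + (k + 1)).choose (k + 1) : ℝ)) * ((k : ℝ) + 1) := by
      exact_mod_cast congrArg (fun x : ℕ => (x : ℝ)) hnat
    calc (((m + k : ℕ) : ℝ) + 1) * (((m + k).choose k : ℝ) * ρ ^ k * q ^ m)
        = (((m : ℝ) + k + 1) * (((m + k).choose k : ℝ))) * (ρ ^ k * q ^ m) := by
          push_cast; ring
      _ = _ := by rw [hcast]; ring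
  have hval : ((k : ℝ) + 1) * ρ ^ k * (1 / (1 - q) ^ (k + 1 + 1)) = ((k : ℝ) + 1) / ρ ^ 2 := by
    rw [hqdef]
    have h2 : (1 : ℝ) - (1 - ρ) = ρ := by ring
    rw [h2]
    have h3 : ρ ^ (k + 1 + 1) = ρ ^ k * ρ ^ 2 := by ring
    rw [h3]
    field_simp
  have hshift : HasSum (fun m => g (m + k)) (((k : ℝ) + 1) / ρ ^ 2) := by
    rw [key, ← hval]; exact hmul
  have hzero : ∑ i ∈ Finset.range k, g i = 0 := by
    apply Finset.sum_eq_zero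
    intro i hi
    rw [hg]
    simp [Nat.choose_eq_zero_of_lt (Finset.mem_range.mp hi)]
  refine (hasSum_nat_add_iff' k).mp ?_
  rwa [hzero, sub_zero]

section Stop

open Finset MeasureTheory
open scoped ENNReal

variable {Ω : Type*} [MeasurableSpace Ω] {μ : Measure Ω} [IsProbabilityMeasure μ]
variable {A : ℕ} {X : ℕ → Ω → Fin (A + 1)} {ρ : Fin (A + 1) → ℝ}

lemma cnt_zero (a : Fin (A + 1)) (ω : Ω) : cnt X a 0 ω = 0 := by simp [cnt]

lemma cnt_succ_le (a : Fin (A + 1)) (n : ℕ) (ω : Ω) :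
    cnt X a (n + 1) ω ≤ cnt X a n ω + 1 := by
  rw [cnt_succ]
  split <;> omega

lemma exists_hit {a : Fin (A + 1)} {c n : ℕ} {ω : Ω} (hc : 0 < c)
    (h : c ≤ cnt X a n ω) : ∃ m, m ≤ n ∧ cnt X a m ω = c := by
  set S := {m | c ≤ cnt X a m ω} with hS
  have hne : S.Nonempty := ⟨n, h⟩
  have hmem : sInf S ∈ S := Nat.sInf_mem hne
  have hle : sInf S ≤ n := Nat.sInf_le h
  have hpos : sInf S ≠ 0 := by
    intro h0
    rw [h0] at hmem
    simp only [hS, Set.mem_setOf_eq, cnt_zero] at hmem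
    omega
  obtain ⟨m', hm'⟩ : ∃ m', sInf S = m' + 1 := ⟨sInf S - 1, by omega⟩
  have hnotmem : m' ∉ S := Nat.notMem_of_lt_sInf (by omega)
  simp only [hS, Set.mem_setOf_eq, not_le] at hnotmem hmem
  refine ⟨sInf S, hle, ?_⟩
  have := cnt_succ_le (X := X) a m' ω
  rw [hm'] at hmem ⊢
  omega

lemma T_subset_lt {a : Fin (A + 1)} {c : ℕ} (hc : 0 < c) (n : ℕ) :
    {ω : Ω | n < sInf {m | cnt X a m ω = c}} ⊆ {ω | cnt X a n ω < c} := by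
  intro ω hω
  simp only [Set.mem_setOf_eq] at hω ⊢
  by_contra hcon
  push_neg at hcon
  obtain ⟨m, hmn, hm⟩ := exists_hit hc hcon
  have : sInf {m | cnt X a m ω = c} ≤ m := Nat.sInf_le hm
  omega

lemma lt_subset_T {a : Fin (A + 1)} {c : ℕ} (n : ℕ) :
    {ω : Ω | cnt X a n ω < c} ⊆ {ω : Ω | n < sInf {m | cnt X a m ω = c}}
      ∪ {ω | ∀ m, cnt X a m ω ≠ c} := by
  intro ω hω
  simp only [Set.mem_setOf_eq, Set.mem_union] at hω ⊢
  by_cases hbad : ∀ m, cnt X a m ω ≠ c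
  · exact Or.inr hbad
  · left
    push_neg at hbad
    have hne : {m | cnt X a m ω = c}.Nonempty := hbad
    have hmem := Nat.sInf_mem hne
    simp only [Set.mem_setOf_eq] at hmem
    by_contra hcon
    push_neg at hcon
    have := cnt_mono (X := X) a hcon ω
    omega

lemma bad_mono {a : Fin (A + 1)} {c : ℕ} (hc : 0 < c) :
    ∀ n, {ω : Ω | ∀ m, cnt X a m ω ≠ c} ⊆ {ω | cnt X a n ω < c} := by
  intro n ω hω
  simp only [Set.mem_setOf_eq] at hω ⊢
  induction n with
  | zero => rw [cnt_zero]; omega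
  | succ n ih =>
    have h1 := cnt_succ_le (X := X) a n ω
    have h2 := hω (n + 1)
    omega

lemma measure_cnt_lt (hXmeas : ∀ n, Measurable (X n))
    (hXindep : ProbabilityTheory.iIndepFun X μ)
    (hρpos : ∀ b, 0 < ρ b) {a : Fin (A + 1)} (hρle1 : ρ a ≤ 1)
    (hXdist : ∀ n b, μ {ω | X n ω = b} = ENNReal.ofReal (ρ b)) (n c : ℕ) :
    μ {ω | cnt X a n ω < c}
      = ENNReal.ofReal (∑ k ∈ Finset.range c,
          (n.choose k : ℝ) * ρ a ^ k * (1 - ρ a) ^ (n - k)) := by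
  have hq0 : 0 ≤ 1 - ρ a := by linarith
  have hset : {ω : Ω | cnt X a n ω < c} = ⋃ k ∈ Finset.range c, {ω | cnt X a n ω = k} := by
    ext ω
    simp only [Set.mem_setOf_eq, Set.mem_iUnion, Finset.mem_range]
    constructor
    · intro h; exact ⟨cnt X a n ω, h, rfl⟩
    · rintro ⟨k, hk, h⟩; omega
  rw [hset, measure_biUnion_finset ?hd (fun k _ => measurableSet_cnt_eq hXmeas a n k)]
  · rw [ENNReal.ofReal_sum_of_nonneg (fun k _ =>
      mul_nonneg (mul_nonneg (Nat.cast_nonneg _) (pow_nonneg (hρpos a).le _))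
        (pow_nonneg hq0 _))]
    exact Finset.sum_congr rfl fun k _ =>
      binom_dist hXmeas hXindep hρpos hρle1 hXdist n k
  · intro k _ l _ hkl
    apply Set.disjoint_left.mpr
    intro ω h1 h2
    simp only [Set.mem_setOf_eq] at h1 h2
    exact hkl (h1 ▸ h2 ▸ rfl)

lemma bad_null (hXmeas : ∀ n, Measurable (X n))
    (hXindep : ProbabilityTheory.iIndepFun X μ)
    (hρpos : ∀ b, 0 < ρ b) {a : Fin (A + 1)} (hρle1 : ρ a ≤ 1)
    (hXdist : ∀ n b, μ {ω | X n ω = b} = ENNReal.ofReal (ρ b)) {c : ℕ} (hc : 0 < c) :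
    μ {ω : Ω | ∀ m, cnt X a m ω ≠ c} = 0 := by
  set F : ℕ → ℝ := fun n => ∑ k ∈ Finset.range c,
    (n.choose k : ℝ) * ρ a ^ k * (1 - ρ a) ^ (n - k) with hF
  have hle : ∀ n, μ {ω : Ω | ∀ m, cnt X a m ω ≠ c} ≤ ENNReal.ofReal (F n) := by
    intro n
    rw [← measure_cnt_lt hXmeas hXindep hρpos hρle1 hXdist n c]
    exact measure_mono (bad_mono hc n)
  have htendsF : Filter.Tendsto F Filter.atTop (nhds 0) := by
    have : Filter.Tendsto (fun n => ∑ k ∈ Finset.range c,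
        (fun (k : ℕ) (n : ℕ) => (n.choose k : ℝ) * ρ a ^ k * (1 - ρ a) ^ (n - k)) k n)
        Filter.atTop (nhds (∑ k ∈ Finset.range c, (0 : ℝ))) := by
      apply tendsto_finset_sum
      intro k _
      exact (hasSum_negbinom_tail (hρpos a) hρle1 k).summable.tendsto_atTop_zero
    simpa using this
  have htends : Filter.Tendsto (fun n => ENNReal.ofReal (F n)) Filter.atTop (nhds 0) := by
    rw [← ENNReal.ofReal_zero]
    exact ENNReal.tendsto_ofReal htendsF
  have := ge_of_tendsto' htends hle
  simpa using le_antisymm (by simpa using ge_of_tendsto' htends hle) zero_le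

lemma measure_T_tail (hXmeas : ∀ n, Measurable (X n))
    (hXindep : ProbabilityTheory.iIndepFun X μ)
    (hρpos : ∀ b, 0 < ρ b) {a : Fin (A + 1)} (hρle1 : ρ a ≤ 1)
    (hXdist : ∀ n b, μ {ω | X n ω = b} = ENNReal.ofReal (ρ b)) {c : ℕ} (hc : 0 < c) (n : ℕ) :
    μ {ω : Ω | n < sInf {m | cnt X a m ω = c}}
      = ENNReal.ofReal (∑ k ∈ Finset.range c,
          (n.choose k : ℝ) * ρ a ^ k * (1 - ρ a) ^ (n - k)) := by
  rw [← measure_cnt_lt hXmeas hXindep hρpos hρle1 hXdist n c]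
  apply le_antisymm
  · exact measure_mono (T_subset_lt hc n)
  · calc μ {ω | cnt X a n ω < c}
        ≤ μ ({ω : Ω | n < sInf {m | cnt X a m ω = c}} ∪ {ω | ∀ m, cnt X a m ω ≠ c}) :=
          measure_mono (lt_subset_T n)
      _ ≤ μ {ω : Ω | n < sInf {m | cnt X a m ω = c}} + μ {ω | ∀ m, cnt X a m ω ≠ c} :=
          measure_union_le _ _
      _ = μ {ω : Ω | n < sInf {m | cnt X a m ω = c}} := by
          rw [bad_null hXmeas hXindep hρpos hρle1 hXdist hc, add_zero]

lemma measurable_T (hXmeas : ∀ n, Measurable (X n)) (a : Fin (A + 1)) {c : ℕ} (hc : 0 < c) :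
    Measurable (fun ω : Ω => sInf {m | cnt X a m ω = c}) := by
  apply measurable_to_countable'
  intro j
  have hpre : (fun ω : Ω => sInf {m | cnt X a m ω = c}) ⁻¹' {j}
      = {ω | sInf {m | cnt X a m ω = c} = j} := rfl
  rw [hpre]
  rcases Nat.eq_zero_or_pos j with hj | hj
  · subst hj
    have hset : {ω : Ω | sInf {m | cnt X a m ω = c} = 0} = ⋂ i, {ω | cnt X a i ω = c}ᶜ := by
      ext ω
      simp only [Set.mem_setOf_eq, Set.mem_iInter, Set.mem_compl_iff]
      constructor
      · intro h0 i hi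
        have hne : {m | cnt X a m ω = c}.Nonempty := ⟨i, hi⟩
        have := Nat.sInf_mem hne
        rw [h0] at this
        simp only [Set.mem_setOf_eq, cnt_zero] at this
        omega
      · intro h
        have : {m | cnt X a m ω = c} = ∅ := by
          ext m; simp only [Set.mem_setOf_eq, Set.mem_empty_iff_false, iff_false]; exact h m
        rw [this, Nat.sInf_empty]
    rw [hset]
    exact MeasurableSet.iInter fun i => (measurableSet_cnt_eq hXmeas a i c).compl
  · have hset : {ω : Ω | sInf {m | cnt X a m ω = c} = j}
        = {ω | cnt X a j ω = c} ∩ ⋂ i ∈ Set.Iio j, {ω | cnt X a i ω = c}ᶜ := by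
      ext ω
      simp only [Set.mem_setOf_eq, Set.mem_inter_iff, Set.mem_iInter, Set.mem_compl_iff,
        Set.mem_Iio]
      constructor
      · intro hj'
        have hne : {m | cnt X a m ω = c}.Nonempty := by
          by_contra hcon
          rw [Set.not_nonempty_iff_eq_empty] at hcon
          rw [hcon, Nat.sInf_empty] at hj'
          omega
        have hmem := Nat.sInf_mem hne
        rw [hj'] at hmem
        refine ⟨hmem, fun i hij hi => ?_⟩
        have := Nat.sInf_le (s := {m | cnt X a m ω = c}) hi
        omega
      · rintro ⟨hj', hmin⟩
        have h1 : sInf {m | cnt X a m ω = c} ≤ j := Nat.sInf_le hj'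
        rcases lt_or_eq_of_le h1 with h2 | h2
        · exfalso
          have hne : {m | cnt X a m ω = c}.Nonempty := ⟨j, hj'⟩
          have hmem := Nat.sInf_mem hne
          exact hmin _ h2 hmem
        · exact h2
    rw [hset]
    exact (measurableSet_cnt_eq hXmeas a j c).inter
      (MeasurableSet.biInter ((Set.to_countable _))
        fun i _ => (measurableSet_cnt_eq hXmeas a i c).compl)

end Stop

open Finset MeasureTheory
open scoped ENNReal

section Layer

variable {Ω : Type*} [MeasurableSpace Ω] {μ : Measure Ω} [IsProbabilityMeasure μ]

lemma layercake_nat (T : Ω → ℕ) (hT : Measurable T) (w : ℕ → ℝ≥0∞) :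
    ∫⁻ ω, ∑ i ∈ Finset.range (T ω), w i ∂μ = ∑' n, w n * μ {ω | n < T ω} := by
  have hpt : ∀ ω, ∑ i ∈ Finset.range (T ω), w i
      = ∑' n, Set.indicator {ω' | n < T ω'} (fun _ => w n) ω := by
    intro ω
    rw [tsum_eq_sum (s := Finset.range (T ω)) ?h]
    · apply Finset.sum_congr rfl
      intro i hi
      rw [Set.indicator_of_mem]
      exact Finset.mem_range.mp hi
    · intro n hn
      exact Set.indicator_of_notMem (by simpa using hn) _
  calc ∫⁻ ω, ∑ i ∈ Finset.range (T ω), w i ∂μ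
      = ∫⁻ ω, ∑' n, Set.indicator {ω' | n < T ω'} (fun _ => w n) ω ∂μ :=
        lintegral_congr hpt
    _ = ∑' n, ∫⁻ ω, Set.indicator {ω' | n < T ω'} (fun _ => w n) ω ∂μ :=
        lintegral_tsum fun n =>
          ((measurable_const.indicator (hT measurableSet_Ioi)).aemeasurable)
    _ = ∑' n, w n * μ {ω | n < T ω} := by
        apply tsum_congr
        intro n
        have hms : MeasurableSet {ω' | n < T ω'} := hT measurableSet_Ioi
        rw [lintegral_indicator hms _, lintegral_const,
          Measure.restrict_apply MeasurableSet.univ, Set.univ_inter]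

lemma sum_odd_nat (t : ℕ) : ∑ i ∈ Finset.range t, (2 * i + 1) = t ^ 2 := by
  induction t with
  | zero => simp
  | succ t ih => rw [Finset.sum_range_succ, ih]; ring

lemma integral_of_tails (T : Ω → ℕ) (hT : Measurable T) (F : ℕ → ℝ) {S1 : ℝ}
    (hF0 : ∀ n, 0 ≤ F n) (hFsum : HasSum F S1)
    (htail : ∀ n, μ {ω | n < T ω} = ENNReal.ofReal (F n)) :
    Integrable (fun ω => (T ω : ℝ)) μ ∧ ∫ ω, (T ω : ℝ) ∂μ = S1 := by
  have hlin : ∫⁻ ω, (T ω : ℝ≥0∞) ∂μ = ENNReal.ofReal S1 := by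
    have h1 : ∀ ω : Ω, ((T ω : ℕ) : ℝ≥0∞) = ∑ i ∈ Finset.range (T ω), (1 : ℝ≥0∞) := by
      intro ω; simp
    rw [lintegral_congr h1, layercake_nat T hT]
    simp only [one_mul, htail]
    rw [← ENNReal.ofReal_tsum_of_nonneg hF0 hFsum.summable, hFsum.tsum_eq]
  have hmeas : Measurable (fun ω => (T ω : ℝ)) := measurable_from_top.comp hT
  have hfin : HasFiniteIntegral (fun ω => (T ω : ℝ)) μ := by
    rw [hasFiniteIntegral_iff_norm]
    have : ∀ ω : Ω, ENNReal.ofReal ‖(T ω : ℝ)‖ = ((T ω : ℕ) : ℝ≥0∞) := by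
      intro ω
      rw [Real.norm_eq_abs, abs_of_nonneg (Nat.cast_nonneg _), ENNReal.ofReal_natCast]
    rw [lintegral_congr this, hlin]
    exact ENNReal.ofReal_lt_top
  have hint : Integrable (fun ω => (T ω : ℝ)) μ := ⟨hmeas.aestronglyMeasurable, hfin⟩
  refine ⟨hint, ?_⟩
  rw [integral_eq_lintegral_of_nonneg_ae (Filter.Eventually.of_forall fun ω => Nat.cast_nonneg _)
    hmeas.aestronglyMeasurable]
  have : ∀ ω : Ω, ENNReal.ofReal ((T ω : ℝ)) = ((T ω : ℕ) : ℝ≥0∞) := fun ω =>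
    ENNReal.ofReal_natCast _
  rw [lintegral_congr this, hlin, ENNReal.toReal_ofReal (hFsum.nonneg hF0)]

lemma integral_sq_of_tails (T : Ω → ℕ) (hT : Measurable T) (F : ℕ → ℝ) {S2 : ℝ}
    (hF0 : ∀ n, 0 ≤ F n) (hGsum : HasSum (fun (n : ℕ) => (2 * (n : ℝ) + 1) * F n) S2)
    (htail : ∀ n, μ {ω | n < T ω} = ENNReal.ofReal (F n)) :
    Integrable (fun ω => (T ω : ℝ) ^ 2) μ ∧ ∫ ω, (T ω : ℝ) ^ 2 ∂μ = S2 := by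
  have hG0 : ∀ n : ℕ, 0 ≤ (2 * (n : ℝ) + 1) * F n := fun n =>
    mul_nonneg (by positivity) (hF0 n)
  have hlin : ∫⁻ ω, ((T ω : ℝ≥0∞)) ^ 2 ∂μ = ENNReal.ofReal S2 := by
    have h1 : ∀ ω : Ω, ((T ω : ℝ≥0∞)) ^ 2
        = ∑ i ∈ Finset.range (T ω), ((2 * i + 1 : ℕ) : ℝ≥0∞) := by
      intro ω
      rw [← Nat.cast_sum]
      rw [sum_odd_nat (T ω)]
      push_cast
      ring
    rw [lintegral_congr h1, layercake_nat T hT]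
    have h2 : ∀ n : ℕ, ((2 * n + 1 : ℕ) : ℝ≥0∞) * μ {ω | n < T ω}
        = ENNReal.ofReal ((2 * (n : ℝ) + 1) * F n) := by
      intro n
      rw [htail n, ← ENNReal.ofReal_natCast, ← ENNReal.ofReal_mul (by positivity)]
      congr 1
      push_cast
      ring
    rw [tsum_congr h2, ← ENNReal.ofReal_tsum_of_nonneg hG0 hGsum.summable, hGsum.tsum_eq]
  have hmeas : Measurable (fun ω => (T ω : ℝ) ^ 2) := (measurable_from_top.comp hT).pow_const 2
  have hfin : HasFiniteIntegral (fun ω => (T ω : ℝ) ^ 2) μ := by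
    rw [hasFiniteIntegral_iff_norm]
    have h3 : ∀ ω : Ω, ENNReal.ofReal ‖(T ω : ℝ) ^ 2‖ = ((T ω : ℝ≥0∞)) ^ 2 := by
      intro ω
      rw [Real.norm_eq_abs, abs_of_nonneg (sq_nonneg _)]
      rw [show ((T ω : ℝ)) ^ 2 = (((T ω ^ 2 : ℕ) : ℝ)) by push_cast; ring,
        ENNReal.ofReal_natCast]
      push_cast
      ring
    rw [lintegral_congr h3, hlin]
    exact ENNReal.ofReal_lt_top
  have hint : Integrable (fun ω => (T ω : ℝ) ^ 2) μ := ⟨hmeas.aestronglyMeasurable, hfin⟩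
  refine ⟨hint, ?_⟩
  rw [integral_eq_lintegral_of_nonneg_ae (Filter.Eventually.of_forall fun ω => sq_nonneg _)
    hmeas.aestronglyMeasurable]
  have h4 : ∀ ω : Ω, ENNReal.ofReal ((T ω : ℝ) ^ 2) = ((T ω : ℝ≥0∞)) ^ 2 := by
    intro ω
    rw [show ((T ω : ℝ)) ^ 2 = (((T ω ^ 2 : ℕ) : ℝ)) by push_cast; ring,
      ENNReal.ofReal_natCast]
    push_cast
    ring
  rw [lintegral_congr h4, hlin, ENNReal.toReal_ofReal (hGsum.nonneg hG0)]

end Layer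

section Moments

open Finset MeasureTheory
open scoped ENNReal

variable {Ω : Type*} [MeasurableSpace Ω] {μ : Measure Ω} [IsProbabilityMeasure μ]
variable {A : ℕ} {X : ℕ → Ω → Fin (A + 1)} {ρ : Fin (A + 1) → ℝ}

lemma gauss_real (c : ℕ) : ∑ k ∈ Finset.range c, ((k : ℝ) + 1) = c * (c + 1) / 2 := by
  induction c with
  | zero => simp
  | succ c ih =>
    rw [Finset.sum_range_succ, ih]
    push_cast
    ring

lemma T_moments (hXmeas : ∀ n, Measurable (X n))
    (hXindep : ProbabilityTheory.iIndepFun X μ)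
    (hρpos : ∀ b, 0 < ρ b) {a : Fin (A + 1)} (hρle1 : ρ a ≤ 1)
    (hXdist : ∀ n b, μ {ω | X n ω = b} = ENNReal.ofReal (ρ b)) {c : ℕ} (hc : 0 < c) :
    (Integrable (fun ω => ((sInf {m | cnt X a m ω = c} : ℕ) : ℝ)) μ
      ∧ ∫ ω, ((sInf {m | cnt X a m ω = c} : ℕ) : ℝ) ∂μ = c / ρ a)
    ∧ (Integrable (fun ω => ((sInf {m | cnt X a m ω = c} : ℕ) : ℝ) ^ 2) μ
      ∧ ∫ ω, ((sInf {m | cnt X a m ω = c} : ℕ) : ℝ) ^ 2 ∂μ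
          = (c : ℝ) * ((c : ℝ) + 1) / ρ a ^ 2 - c / ρ a) := by
  have hq0 : 0 ≤ 1 - ρ a := by linarith
  set f : ℕ → ℕ → ℝ := fun k n => (n.choose k : ℝ) * ρ a ^ k * (1 - ρ a) ^ (n - k) with hf
  set F : ℕ → ℝ := fun n => ∑ k ∈ Finset.range c, f k n with hF
  have hF0 : ∀ n, 0 ≤ F n := fun n => Finset.sum_nonneg fun k _ =>
    mul_nonneg (mul_nonneg (Nat.cast_nonneg _) (pow_nonneg (hρpos a).le _)) (pow_nonneg hq0 _)
  have hT : Measurable (fun ω : Ω => sInf {m | cnt X a m ω = c}) := measurable_T hXmeas a hc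
  have htail : ∀ n, μ {ω | n < sInf {m | cnt X a m ω = c}} = ENNReal.ofReal (F n) :=
    fun n => measure_T_tail hXmeas hXindep hρpos hρle1 hXdist hc n
  -- first moment series
  have hFsum : HasSum F ((c : ℝ) / ρ a) := by
    have h1 : HasSum (fun n => ∑ k ∈ Finset.range c, f k n)
        (∑ k ∈ Finset.range c, 1 / ρ a) :=
      hasSum_sum fun k _ => hasSum_negbinom_tail (hρpos a) hρle1 k
    have h2 : ∑ k ∈ Finset.range c, (1 : ℝ) / ρ a = c / ρ a := by
      rw [Finset.sum_const, Finset.card_range, nsmul_eq_mul]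
      ring
    rwa [h2] at h1
  -- second moment series
  have hGsum : HasSum (fun n : ℕ => (2 * (n : ℝ) + 1) * F n)
      ((c : ℝ) * ((c : ℝ) + 1) / ρ a ^ 2 - c / ρ a) := by
    have h1 : ∀ k ∈ Finset.range c, HasSum
        (fun n : ℕ => 2 * (((n : ℝ) + 1) * f k n) - f k n)
        (2 * (((k : ℝ) + 1) / ρ a ^ 2) - 1 / ρ a) := fun k _ =>
      (HasSum.mul_left 2 (hasSum_negbinom_tail' (hρpos a) hρle1 k)).sub
        (hasSum_negbinom_tail (hρpos a) hρle1 k)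
    have h2 := hasSum_sum h1
    have h3 : (fun n : ℕ => ∑ k ∈ Finset.range c, (2 * (((n : ℝ) + 1) * f k n) - f k n))
        = fun n : ℕ => (2 * (n : ℝ) + 1) * F n := by
      funext n
      rw [Finset.sum_sub_distrib]
      have h4 : ∑ k ∈ Finset.range c, 2 * (((n : ℝ) + 1) * f k n)
          = (2 * ((n : ℝ) + 1)) * ∑ k ∈ Finset.range c, f k n := by
        rw [Finset.mul_sum]
        exact Finset.sum_congr rfl fun k _ => by ring
      rw [h4, hF]
      ring
    have h5 : ∑ k ∈ Finset.range c, (2 * (((k : ℝ) + 1) / ρ a ^ 2) - 1 / ρ a)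
        = (c : ℝ) * ((c : ℝ) + 1) / ρ a ^ 2 - c / ρ a := by
      rw [Finset.sum_sub_distrib]
      have h6 : ∑ k ∈ Finset.range c, 2 * (((k : ℝ) + 1) / ρ a ^ 2)
          = (2 / ρ a ^ 2) * ∑ k ∈ Finset.range c, ((k : ℝ) + 1) := by
        rw [Finset.mul_sum]
        exact Finset.sum_congr rfl fun k _ => by ring
      rw [h6, gauss_real, Finset.sum_const, Finset.card_range, nsmul_eq_mul]
      ring
    rw [h3, h5] at h2
    exact h2
  constructor
  · exact integral_of_tails _ hT F hF0 hFsum htail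
  · exact integral_sq_of_tails _ hT F hF0 hGsum htail

end Moments


open MeasureTheory

section Final

open Finset
open scoped ENNReal

lemma integrable_sup'_fin {Ω : Type*} [MeasurableSpace Ω] {μ : Measure Ω}
    {n : ℕ} (hne : (Finset.univ : Finset (Fin n)).Nonempty) (Y : Fin n → Ω → ℝ)
    (hYmeas : ∀ a, Measurable (Y a)) (hYint : ∀ a, Integrable (Y a) μ) :
    Integrable (fun ω => Finset.univ.sup' hne (fun a => Y a ω)) μ := by
  have hZmeas : Measurable (fun ω => Finset.univ.sup' hne (fun a => Y a ω)) := by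
    have h := Finset.measurable_sup' hne (fun a (_ : a ∈ Finset.univ) => hYmeas a)
    have he : (Finset.univ.sup' hne Y) = fun ω => Finset.univ.sup' hne fun a => Y a ω :=
      funext fun ω => Finset.sup'_apply hne Y ω
    rwa [he] at h
  have habs : Integrable (fun ω => ∑ a, |Y a ω|) μ :=
    integrable_finset_sum _ fun a _ => (hYint a).abs
  apply Integrable.mono' habs hZmeas.aestronglyMeasurable
  filter_upwards with ω
  rw [Real.norm_eq_abs, abs_le]
  constructor
  · obtain ⟨a, _⟩ := hne
    refine le_trans ?_ (Finset.le_sup' (fun b => Y b ω) (Finset.mem_univ a))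
    have h1 : |Y a ω| ≤ ∑ b, |Y b ω| :=
      Finset.single_le_sum (f := fun b => |Y b ω|) (fun b _ => abs_nonneg _) (Finset.mem_univ a)
    linarith [neg_abs_le (Y a ω)]
  · apply Finset.sup'_le
    intro a _
    exact le_trans (le_abs_self _)
      (Finset.single_le_sum (f := fun b => |Y b ω|) (fun b _ => abs_nonneg _) (Finset.mem_univ a))

end Final

/-- Lower bound on the expected onset of the left-over regime. Impressions
are assigned i.i.d. to options `a ∈ A₀ = {0,…,A}` with probabilities `ρ_a`; `N_a` is the
first time option `a` has received `C_a = ρ_a·N` impressions, and `N* = min_a N_a`. Then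
`E[N*] ≥ N − √N · K(ρ)` with `K(ρ) = √((A/(A+1)) Σ_a (1−ρ_a)/ρ_a)`. -/
theorem stmt_11 {Ω : Type*} [MeasurableSpace Ω] (μ : Measure Ω) [IsProbabilityMeasure μ]
    (A : ℕ) (ρ : Fin (A + 1) → ℝ) (hρpos : ∀ a, 0 < ρ a) (hρsum : ∑ a, ρ a = 1)
    (N : ℕ) (hN : 0 < N)
    (C : Fin (A + 1) → ℕ) (hCpos : ∀ a, 0 < C a) (hC : ∀ a, (C a : ℝ) = ρ a * N)
    (X : ℕ → Ω → Fin (A + 1)) (hXmeas : ∀ n, Measurable (X n))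
    (hXindep : ProbabilityTheory.iIndepFun X μ)
    (hXdist : ∀ n a, μ {ω | X n ω = a} = ENNReal.ofReal (ρ a)) :
    (N : ℝ) - Real.sqrt N *
        Real.sqrt (((A : ℝ) / ((A : ℝ) + 1)) * ∑ a, (1 - ρ a) / ρ a)
      ≤ ∫ ω, ((Finset.univ.inf' Finset.univ_nonempty (fun a : Fin (A + 1) =>
            sInf {n : ℕ | ((Finset.range n).filter (fun m => X m ω = a)).card = C a}) : ℕ) : ℝ) ∂μ := by
  have hρle1 : ∀ a, ρ a ≤ 1 := by
    intro a
    rw [← hρsum]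
    exact Finset.single_le_sum (f := fun b => ρ b) (fun b _ => (hρpos b).le) (Finset.mem_univ a)
  set T : Fin (A + 1) → Ω → ℕ := fun a ω => sInf {n | cnt X a n ω = C a} with hT
  have hmom : ∀ a, (Integrable (fun ω => ((T a ω : ℕ) : ℝ)) μ
      ∧ ∫ ω, ((T a ω : ℕ) : ℝ) ∂μ = (C a : ℝ) / ρ a)
    ∧ (Integrable (fun ω => ((T a ω : ℕ) : ℝ) ^ 2) μ
      ∧ ∫ ω, ((T a ω : ℕ) : ℝ) ^ 2 ∂μ
          = (C a : ℝ) * ((C a : ℝ) + 1) / ρ a ^ 2 - (C a : ℝ) / ρ a) :=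
    fun a => T_moments hXmeas hXindep hρpos (hρle1 a) hXdist (hCpos a)
  have hNR : (0 : ℝ) < N := by exact_mod_cast hN
  have hmean : ∀ a, ∫ ω, ((T a ω : ℕ) : ℝ) ∂μ = N := by
    intro a
    rw [(hmom a).1.2, hC a]
    have hρ : ρ a ≠ 0 := (hρpos a).ne'
    field_simp
  -- Y a = N - T a
  set Y : Fin (A + 1) → Ω → ℝ := fun a ω => (N : ℝ) - ((T a ω : ℕ) : ℝ) with hY
  have hTmeas : ∀ a, Measurable (fun ω => ((T a ω : ℕ) : ℝ)) := fun a =>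
    measurable_from_top.comp (measurable_T hXmeas a (hCpos a))
  have hYmeas : ∀ a, Measurable (Y a) := fun a => measurable_const.sub (hTmeas a)
  have hYint : ∀ a, Integrable (Y a) μ := fun a => (integrable_const _).sub (hmom a).1.1
  have hYmean : ∀ a, ∫ ω, Y a ω ∂μ = 0 := by
    intro a
    have : ∫ ω, Y a ω ∂μ = ∫ ω, ((N : ℝ) - ((T a ω : ℕ) : ℝ)) ∂μ := rfl
    rw [this, integral_sub (integrable_const _) (hmom a).1.1, hmean a, integral_const,
      probReal_univ, one_smul, sub_self]
  have hYsqfun : ∀ a, (fun ω => (Y a ω) ^ 2)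
      = fun ω => (((T a ω : ℕ) : ℝ) ^ 2 - 2 * (N : ℝ) * ((T a ω : ℕ) : ℝ)) + (N : ℝ) ^ 2 := by
    intro a; funext ω; show ((N : ℝ) - ((T a ω : ℕ) : ℝ)) ^ 2 = _; ring
  have hint1 : ∀ a, Integrable
      (fun ω => ((T a ω : ℕ) : ℝ) ^ 2 - 2 * (N : ℝ) * ((T a ω : ℕ) : ℝ)) μ := fun a =>
    (hmom a).2.1.sub ((hmom a).1.1.const_mul _)
  have hYsqint : ∀ a, Integrable (fun ω => (Y a ω) ^ 2) μ := by
    intro a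
    rw [hYsqfun a]
    exact (hint1 a).add (integrable_const _)
  have hYsqval : ∀ a, ∫ ω, (Y a ω) ^ 2 ∂μ = (N : ℝ) * (1 - ρ a) / ρ a := by
    intro a
    rw [hYsqfun a, integral_add (hint1 a) (integrable_const _),
      integral_sub (hmom a).2.1 ((hmom a).1.1.const_mul _),
      integral_const, probReal_univ, one_smul, integral_const_mul,
      (hmom a).2.2, hmean a, hC a]
    have hρ : ρ a ≠ 0 := (hρpos a).ne'
    field_simp
    ring
  -- Aven bound
  have hne : (Finset.univ : Finset (Fin (A + 1))).Nonempty := Finset.univ_nonempty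
  have hA := aven_expect μ hne Y hYmeas hYint hYsqint hYmean
  have hsumval : ∑ a, ∫ ω, (Y a ω) ^ 2 ∂μ = (N : ℝ) * ∑ a, (1 - ρ a) / ρ a := by
    rw [Finset.mul_sum]
    exact Finset.sum_congr rfl fun a _ => by rw [hYsqval a]; ring
  have hrhs : Real.sqrt ((((A + 1 : ℕ) : ℝ) - 1) / ((A + 1 : ℕ) : ℝ)
        * ∑ a, ∫ ω, (Y a ω) ^ 2 ∂μ)
      = Real.sqrt N * Real.sqrt (((A : ℝ) / ((A : ℝ) + 1)) * ∑ a, (1 - ρ a) / ρ a) := by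
    rw [hsumval, ← Real.sqrt_mul hNR.le]
    congr 1
    push_cast
    ring
  rw [hrhs] at hA
  -- pointwise identity
  have hpt : ∀ ω, ((Finset.univ.inf' Finset.univ_nonempty (fun a : Fin (A + 1) =>
        sInf {n : ℕ | ((Finset.range n).filter (fun m => X m ω = a)).card = C a}) : ℕ) : ℝ)
      = (N : ℝ) - Finset.univ.sup' hne (fun a => Y a ω) := by
    intro ω
    have hcast : ((Finset.univ.inf' Finset.univ_nonempty (fun a : Fin (A + 1) =>
          sInf {n : ℕ | ((Finset.range n).filter (fun m => X m ω = a)).card = C a}) : ℕ) : ℝ)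
        = Finset.univ.inf' hne (fun a => ((T a ω : ℕ) : ℝ)) := by
      rw [Finset.apply_inf'_eq_inf'_comp hne (fun x : ℕ => (x : ℝ))
        (fun x y => by simp [Nat.cast_min])]
      rfl
    rw [hcast]
    apply le_antisymm
    · obtain ⟨a, _, ha⟩ := Finset.exists_mem_eq_sup' hne (fun a => Y a ω)
      rw [ha]
      have h1 : Finset.univ.inf' hne (fun a => ((T a ω : ℕ) : ℝ)) ≤ ((T a ω : ℕ) : ℝ) :=
        Finset.inf'_le _ (Finset.mem_univ a)
      simp only [hY]
      linarith
    · apply Finset.le_inf'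
      intro a _
      have h1 : Y a ω ≤ Finset.univ.sup' hne (fun a => Y a ω) :=
        Finset.le_sup' (fun b => Y b ω) (Finset.mem_univ a)
      simp only [hY] at h1
      linarith
  have hZint : Integrable (fun ω => Finset.univ.sup' hne (fun a => Y a ω)) μ :=
    integrable_sup'_fin hne Y hYmeas hYint
  calc (N : ℝ) - Real.sqrt N * Real.sqrt (((A : ℝ) / ((A : ℝ) + 1)) * ∑ a, (1 - ρ a) / ρ a)
      ≤ (N : ℝ) - ∫ ω, Finset.univ.sup' hne (fun a => Y a ω) ∂μ := by linarith
    _ = ∫ ω, ((N : ℝ) - Finset.univ.sup' hne (fun a => Y a ω)) ∂μ := by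
        rw [integral_sub (integrable_const _) hZint, integral_const, probReal_univ,
          one_smul]
    _ = _ := by
        apply integral_congr_ae
        filter_upwards with ω
        exact (hpt ω).symm
end

section
/- Let X_1, …, X_m (m ≥ 1) be real-valued square-integrable random variables on a probability space. Then E[ min_{1≤i≤m} X_i ] ≥ min_{1≤i≤m} E[X_i] − √( ((m−1)/m) · Σ_{i=1}^m Var[X_i] ). -/
open MeasureTheory

/-- `√` of an integrable nonnegative function is integrable. -/
lemma aux_integrable_sqrt {Ω : Type*} [MeasurableSpace Ω] {μ : Measure Ω} [IsProbabilityMeasure μ]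
    {W : Ω → ℝ} (hW : Integrable W μ) (hnn : ∀ ω, 0 ≤ W ω) :
    Integrable (fun ω => Real.sqrt (W ω)) μ := by
  have hmeas : AEStronglyMeasurable (fun ω => Real.sqrt (W ω)) μ :=
    Real.continuous_sqrt.comp_aestronglyMeasurable hW.aestronglyMeasurable
  refine Integrable.mono' ((hW.add (integrable_const 1)).div_const 2) hmeas ?_
  filter_upwards with ω
  simp only [Pi.add_apply, Real.norm_eq_abs, abs_of_nonneg (Real.sqrt_nonneg _)]
  nlinarith [Real.sq_sqrt (hnn ω), Real.sqrt_nonneg (W ω), sq_nonneg (Real.sqrt (W ω) - 1)]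

/-- Jensen-type inequality: `∫ √W ≤ √(∫ W)` for nonnegative integrable `W`. -/
lemma aux_integral_sqrt_le {Ω : Type*} [MeasurableSpace Ω] {μ : Measure Ω}
    [IsProbabilityMeasure μ] {W : Ω → ℝ} (hW : Integrable W μ) (hnn : ∀ ω, 0 ≤ W ω) :
    ∫ ω, Real.sqrt (W ω) ∂μ ≤ Real.sqrt (∫ ω, W ω ∂μ) := by
  set s : ℝ := ∫ ω, W ω ∂μ with hs
  have hs0 : 0 ≤ s := integral_nonneg hnn
  rcases eq_or_lt_of_le hs0 with h0 | hpos
  · have hW0 : W =ᵐ[μ] 0 := by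
      rw [← integral_eq_zero_iff_of_nonneg hnn hW]
      exact h0.symm
    have h1 : (fun ω => Real.sqrt (W ω)) =ᵐ[μ] 0 := by
      filter_upwards [hW0] with ω hω
      simp [hω]
    rw [integral_congr_ae h1]
    simp [Real.sqrt_nonneg]
  · have hsq : 0 < Real.sqrt s := Real.sqrt_pos.mpr hpos
    have hbound : ∀ ω, Real.sqrt (W ω) ≤ (W ω + s) / (2 * Real.sqrt s) := by
      intro ω
      rw [le_div_iff₀ (by positivity)]
      nlinarith [Real.sq_sqrt (hnn ω), Real.sq_sqrt hs0,
        sq_nonneg (Real.sqrt (W ω) - Real.sqrt s)]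
    calc ∫ ω, Real.sqrt (W ω) ∂μ
        ≤ ∫ ω, (W ω + s) / (2 * Real.sqrt s) ∂μ :=
          integral_mono (aux_integrable_sqrt hW hnn)
            ((hW.add (integrable_const _)).div_const _) hbound
      _ = (s + s) / (2 * Real.sqrt s) := by
          rw [integral_div, integral_add hW (integrable_const _), integral_const]
          simp [hs]
      _ = Real.sqrt s := by
          have h2 := Real.sq_sqrt hs0
          field_simp
          nlinarith

/-- A nonempty `Finset.inf'` of integrable functions is integrable. -/
lemma aux_integrable_inf' {Ω : Type*} [MeasurableSpace Ω] {μ : Measure Ω}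
    {ι : Type*} (s : Finset ι) (hs : s.Nonempty) (X : ι → Ω → ℝ)
    (hi : ∀ i, Integrable (X i) μ) :
    Integrable (fun ω => s.inf' hs (fun i => X i ω)) μ := by
  induction hs using Finset.Nonempty.cons_induction with
  | singleton a => simpa using hi a
  | cons a t ha ht ih =>
      have heq : (fun ω => (Finset.cons a t ha).inf' (Finset.cons_nonempty ha) (fun i => X i ω))
          = (fun ω => X a ω ⊓ (t.inf' ht fun i => X i ω)) := by
        funext ω
        exact Finset.inf'_cons (H := ht) (f := fun i => X i ω)
      rw [heq]
      exact (hi a).inf ih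

/-- Samuelson-type deterministic bound: the minimum of finitely many reals is at least
the mean minus `√(((m-1)/m) · Σ zᵢ²)`. -/
lemma aux_samuelson_min {ι : Type*} [Fintype ι] [Nonempty ι] (z : ι → ℝ) :
    (∑ i, z i) / (Fintype.card ι : ℝ)
      - Real.sqrt ((((Fintype.card ι : ℝ) - 1) / (Fintype.card ι : ℝ)) * ∑ i, (z i) ^ 2)
      ≤ Finset.univ.inf' Finset.univ_nonempty z := by
  classical
  set m : ℝ := (Fintype.card ι : ℝ) with hm
  have hm1 : 1 ≤ m := by
    have h : (1 : ℕ) ≤ Fintype.card ι := Fintype.card_pos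
    rw [hm]; exact_mod_cast h
  have hm0 : 0 < m := lt_of_lt_of_le one_pos hm1
  obtain ⟨k, -, hk⟩ := Finset.exists_mem_eq_inf' Finset.univ_nonempty z
  set A : ℝ := ∑ i, z i with hA
  set Q : ℝ := ∑ i, (z i) ^ 2 with hQ
  set b : ℝ := A / m with hb
  have hQnn : 0 ≤ Q := Finset.sum_nonneg fun i _ => sq_nonneg _
  have hmb : m * b = A := by
    rw [hb]; field_simp
  have hsum_erase : ∑ i ∈ Finset.univ.erase k, (b - z i) = z k - b := by
    rw [Finset.sum_erase_eq_sub (Finset.mem_univ k), Finset.sum_sub_distrib,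
      Finset.sum_const, Finset.card_univ, nsmul_eq_mul, ← hm, ← hA, hmb]
    ring
  have hcard_erase : (((Finset.univ.erase k).card : ℕ) : ℝ) = m - 1 := by
    rw [Finset.card_erase_of_mem (Finset.mem_univ k), Finset.card_univ]
    have h1 : 1 ≤ Fintype.card ι := Fintype.card_pos
    rw [hm]
    push_cast [Nat.cast_sub h1]
    ring
  have hCS : (z k - b) ^ 2 ≤ (m - 1) * ∑ i ∈ Finset.univ.erase k, (b - z i) ^ 2 := by
    have h := Finset.sum_mul_sq_le_sq_mul_sq (Finset.univ.erase k) (fun i => b - z i)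
      (fun _ => (1 : ℝ))
    simp only [mul_one, one_pow, Finset.sum_const, nsmul_eq_mul] at h
    rw [hsum_erase] at h
    calc (z k - b) ^ 2 ≤ (∑ i ∈ Finset.univ.erase k, (b - z i) ^ 2) *
          (((Finset.univ.erase k).card : ℕ) : ℝ) := h
      _ = (m - 1) * ∑ i ∈ Finset.univ.erase k, (b - z i) ^ 2 := by
          rw [hcard_erase]; ring
  have herase_sq : ∑ i ∈ Finset.univ.erase k, (b - z i) ^ 2
      = (∑ i, (b - z i) ^ 2) - (b - z k) ^ 2 :=
    Finset.sum_erase_eq_sub (Finset.mem_univ k)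
  have hall_sq : ∑ i, (b - z i) ^ 2 = Q - m * b ^ 2 := by
    have hexp : ∀ i, (b - z i) ^ 2 = b ^ 2 - 2 * b * z i + (z i) ^ 2 := fun i => by ring
    simp_rw [hexp, Finset.sum_add_distrib, Finset.sum_sub_distrib, Finset.sum_const,
      Finset.card_univ, ← Finset.mul_sum, ← hA, ← hQ, nsmul_eq_mul, ← hm]
    have h2 : 2 * b * A = 2 * (m * b ^ 2) := by rw [← hmb]; ring
    linarith
  have hswap : (z k - b) ^ 2 = (b - z k) ^ 2 := by ring
  have hd2 : (b - z k) ^ 2 ≤ ((m - 1) / m) * Q := by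
    rw [div_mul_eq_mul_div, le_div_iff₀ hm0]
    nlinarith [hCS, herase_sq, hall_sq, hswap, sq_nonneg (b - z k),
      mul_nonneg (show (0:ℝ) ≤ m - 1 by linarith) (sq_nonneg (b - z k)),
      mul_nonneg (show (0:ℝ) ≤ m - 1 by linarith) (mul_nonneg hm0.le (sq_nonneg b))]
  have hle : b - z k ≤ Real.sqrt (((m - 1) / m) * Q) := by
    rcases le_or_gt (b - z k) 0 with h | h
    · exact h.trans (Real.sqrt_nonneg _)
    · exact (Real.le_sqrt h.le (mul_nonneg (div_nonneg (by linarith) hm0.le) hQnn)).mpr hd2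
  rw [hk]
  linarith

/-- Aven's (1985) bound: for square-integrable random variables `X_i`
(`i` ranging over a nonempty finite index set of cardinality `m`),
`E[min_i X_i] ≥ min_i E[X_i] − √(((m−1)/m) · Σ_i Var[X_i])`. No independence is assumed. -/
theorem stmt_12 {Ω : Type*} [MeasurableSpace Ω] (μ : Measure Ω) [IsProbabilityMeasure μ]
    {ι : Type*} [Fintype ι] [Nonempty ι]
    (X : ι → Ω → ℝ) (hXmeas : ∀ i, Measurable (X i))
    (hXL2 : ∀ i, MemLp (X i) 2 μ) :
    (Finset.univ.inf' Finset.univ_nonempty (fun i => ∫ ω, X i ω ∂μ))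
        - Real.sqrt ((((Fintype.card ι : ℝ) - 1) / (Fintype.card ι : ℝ))
            * ∑ i, ProbabilityTheory.variance (X i) μ)
      ≤ ∫ ω, Finset.univ.inf' Finset.univ_nonempty (fun i => X i ω) ∂μ := by
  classical
  have hm1 : (1 : ℝ) ≤ (Fintype.card ι : ℝ) := by
    have h : (1 : ℕ) ≤ Fintype.card ι := Fintype.card_pos
    exact_mod_cast h
  have hm0 : (0 : ℝ) < (Fintype.card ι : ℝ) := lt_of_lt_of_le one_pos hm1
  set c : ℝ := ((Fintype.card ι : ℝ) - 1) / (Fintype.card ι : ℝ) with hc_def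
  have hc : 0 ≤ c := div_nonneg (by linarith) hm0.le
  set E : ι → ℝ := fun i => ∫ ω, X i ω ∂μ with hE
  set Z : ι → Ω → ℝ := fun i ω => X i ω - E i with hZ
  have hXint : ∀ i, Integrable (X i) μ := fun i => (hXL2 i).integrable one_le_two
  have hZL2 : ∀ i, MemLp (Z i) 2 μ := fun i => (hXL2 i).sub (memLp_const (E i))
  have hZsq_int : ∀ i, Integrable (fun ω => (Z i ω) ^ 2) μ := fun i => (hZL2 i).integrable_sq
  have hZint : ∀ i, Integrable (Z i) μ := fun i => (hXint i).sub (integrable_const _)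
  have hZmean : ∀ i, ∫ ω, Z i ω ∂μ = 0 := by
    intro i
    simp only [hZ]
    rw [integral_sub (hXint i) (integrable_const _), integral_const, probReal_univ]
    simp [hE]
  set W : Ω → ℝ := fun ω => c * ∑ i, (Z i ω) ^ 2 with hWdef
  have hWnn : ∀ ω, 0 ≤ W ω := fun ω =>
    mul_nonneg hc (Finset.sum_nonneg fun i _ => sq_nonneg _)
  have hWint : Integrable W μ :=
    (integrable_finset_sum _ fun i _ => hZsq_int i).const_mul c
  set infE : ℝ := Finset.univ.inf' Finset.univ_nonempty E with hinfE
  -- pointwise bound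
  have hpt : ∀ ω, infE + (∑ i, Z i ω) / (Fintype.card ι : ℝ) - Real.sqrt (W ω)
      ≤ Finset.univ.inf' Finset.univ_nonempty (fun i => X i ω) := by
    intro ω
    have h1 := aux_samuelson_min (fun i => Z i ω)
    rw [← hc_def] at h1
    have h2 : infE + (Finset.univ.inf' Finset.univ_nonempty fun i => Z i ω)
        ≤ Finset.univ.inf' Finset.univ_nonempty (fun i => X i ω) := by
      apply Finset.le_inf'
      intro i _
      have ha : infE ≤ E i := Finset.inf'_le _ (Finset.mem_univ i)
      have hb : (Finset.univ.inf' Finset.univ_nonempty fun i => Z i ω) ≤ Z i ω :=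
        Finset.inf'_le _ (Finset.mem_univ i)
      have hx : Z i ω = X i ω - E i := by simp [hZ]
      linarith
    simp only [hWdef]
    linarith
  -- integrability of both sides
  have hF_int : Integrable (fun ω => Real.sqrt (W ω)) μ := aux_integrable_sqrt hWint hWnn
  have hsum_int : Integrable (fun ω => ∑ i, Z i ω) μ :=
    integrable_finset_sum _ fun i _ => hZint i
  have hg_int : Integrable
      (fun ω => infE + (∑ i, Z i ω) / (Fintype.card ι : ℝ) - Real.sqrt (W ω)) μ :=
    ((integrable_const infE).add (hsum_int.div_const _)).sub hF_int
  have hinf_int : Integrable (fun ω => Finset.univ.inf' Finset.univ_nonempty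
      (fun i => X i ω)) μ :=
    aux_integrable_inf' _ _ X hXint
  have hmono := integral_mono hg_int hinf_int hpt
  -- compute the integral of the lower bound
  have hgval : ∫ ω, (infE + (∑ i, Z i ω) / (Fintype.card ι : ℝ) - Real.sqrt (W ω)) ∂μ
      = infE - ∫ ω, Real.sqrt (W ω) ∂μ := by
    have hdiv : Integrable (fun ω => (∑ i, Z i ω) / (Fintype.card ι : ℝ)) μ :=
      hsum_int.div_const _
    have hA : Integrable (fun ω => infE + (∑ i, Z i ω) / (Fintype.card ι : ℝ)) μ :=
      (integrable_const infE).add hdiv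
    rw [integral_sub hA hF_int, integral_add (integrable_const infE) hdiv, integral_const,
      probReal_univ, integral_div, integral_finset_sum _ fun i _ => hZint i]
    simp [hZmean]
  -- the variance identity
  have hvar : ∀ i, ProbabilityTheory.variance (X i) μ = ∫ ω, (Z i ω) ^ 2 ∂μ := by
    intro i
    rw [ProbabilityTheory.variance_eq_integral (hXmeas i).aemeasurable]
  have hWval : ∫ ω, W ω ∂μ = c * ∑ i, ProbabilityTheory.variance (X i) μ := by
    simp only [hWdef]
    rw [integral_const_mul, integral_finset_sum _ fun i _ => hZsq_int i]
    congr 1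
    exact Finset.sum_congr rfl fun i _ => (hvar i).symm
  have hFle : ∫ ω, Real.sqrt (W ω) ∂μ
      ≤ Real.sqrt (c * ∑ i, ProbabilityTheory.variance (X i) μ) := by
    have := aux_integral_sqrt_le hWint hWnn
    rwa [hWval] at this
  rw [hgval] at hmono
  linarith
end

section
/- Let A₀ = {0, 1, …, A} and ρ_a > 0 with Σ_{a∈A₀} ρ_a = 1. Let N be a positive integer such that C_a := ρ_a·N is a positive integer for every a ∈ A₀, let (X_n)_{n≥1} be i.i.d. A₀-valued random variables with P(X_n = a) = ρ_a, let N_a = inf{ n ≥ 1 : #{ i ≤ n : X_i = a } = C_a } and N* = min_{a∈A₀} N_a. Then for every ε ∈ (0,1): P{ N − N* ≥ εN } ≤ Σ_{a∈A₀} exp( −2 ε² ρ_a² N ). -/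
open MeasureTheory ProbabilityTheory Real
open scoped ENNReal
open MeasureTheory

section Aux

lemma bern_mgf_le' (p : ℝ) (hp0 : 0 ≤ p) (hp1 : p ≤ 1) (t : ℝ) (ht : 0 ≤ t) :
    1 - p + p * Real.exp t ≤ Real.exp (p * t + t ^ 2 / 8) := by
  set g : ℝ → ℝ := fun s => 1 - p + p * Real.exp s with hgdef
  have hgpos : ∀ s, 0 < g s := by
    intro s
    rcases eq_or_lt_of_le hp0 with h | h
    · simp [hgdef, ← h]
    · have : g s = 1 - p + p * Real.exp s := rfl
      rw [this]
      nlinarith [mul_pos h (Real.exp_pos s)]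
  have hg' : ∀ s, HasDerivAt g (p * Real.exp s) s := fun s =>
    ((Real.hasDerivAt_exp s).const_mul p).const_add (1 - p)
  set f' : ℝ → ℝ := fun s => (p + s / 4) - p * Real.exp s / g s with hf'def
  set f : ℝ → ℝ := fun s => (p * s + s ^ 2 / 8) - Real.log (g s) with hfdef
  have hf : ∀ s, HasDerivAt f (f' s) s := by
    intro s
    have h1 : HasDerivAt (fun x : ℝ => p * x) p s := by
      simpa using (hasDerivAt_id s).const_mul p
    have h2 : HasDerivAt (fun x : ℝ => x ^ 2 / 8) (s / 4) s := by
      have := (hasDerivAt_pow 2 s).div_const 8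
      exact this.congr_deriv (by ring)
    have h3 : HasDerivAt (fun x => Real.log (g x)) (p * Real.exp s / g s) s :=
      (hg' s).log (hgpos s).ne'
    exact (h1.add h2).sub h3
  have hf' : ∀ s, HasDerivAt f' (1 / 4 - p * Real.exp s * (1 - p) / (g s) ^ 2) s := by
    intro s
    have h1 : HasDerivAt (fun x : ℝ => p + x / 4) (1 / 4) s := by
      simpa using ((hasDerivAt_id s).div_const 4).const_add p
    have h2 : HasDerivAt (fun x => p * Real.exp x / g x)
        ((p * Real.exp s * g s - p * Real.exp s * (p * Real.exp s)) / (g s) ^ 2) s :=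
      ((Real.hasDerivAt_exp s).const_mul p).div (hg' s) (hgpos s).ne'
    have := h1.sub h2
    refine this.congr_deriv ?_
    have : g s = 1 - p + p * Real.exp s := rfl
    rw [this]
    ring_nf
  have hmono : Monotone f' := by
    apply monotone_of_deriv_nonneg (fun s => (hf' s).differentiableAt)
    intro s
    rw [(hf' s).deriv]
    have hgs := hgpos s
    simp only [hgdef] at hgs ⊢
    rw [sub_nonneg, div_le_iff₀ (pow_pos hgs 2)]
    nlinarith [sq_nonneg ((1 - p) - p * Real.exp s)]
  have hf'0 : f' 0 = 0 := by
    have : g 0 = 1 := by simp [hgdef]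
    simp [hf'def, this]
  have hf'nonneg : ∀ s ∈ interior (Set.Ici (0:ℝ)), 0 ≤ deriv f s := by
    intro s hs
    rw [(hf s).deriv]
    rw [interior_Ici] at hs
    have := hmono (le_of_lt hs)
    rw [hf'0] at this
    exact this
  have hmonof : MonotoneOn f (Set.Ici 0) :=
    monotoneOn_of_deriv_nonneg (convex_Ici 0)
      (fun s _ => (hf s).differentiableAt.continuousAt.continuousWithinAt)
      (fun s hs => ((hf s).differentiableAt).differentiableWithinAt) hf'nonneg
  have hf0 : f 0 = 0 := by
    have : g 0 = 1 := by simp [hgdef]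
    simp [hfdef, this]
  have hft : 0 ≤ f t := by
    have := hmonof (Set.self_mem_Ici) (Set.mem_Ici.mpr ht) ht
    rwa [hf0] at this
  have hlog : Real.log (g t) ≤ p * t + t ^ 2 / 8 := by
    simp only [hfdef] at hft; linarith
  calc 1 - p + p * Real.exp t = Real.exp (Real.log (g t)) := by
        rw [Real.exp_log (hgpos t)]
      _ ≤ _ := Real.exp_le_exp.mpr hlog

lemma indicator_mgf' {Ω : Type*} [MeasurableSpace Ω] (μ : Measure Ω) [IsProbabilityMeasure μ]
    {P : Ω → Prop} [DecidablePred P] (hs : MeasurableSet {ω | P ω}) (p : ℝ) (hp0 : 0 ≤ p)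
    (hμs : μ {ω | P ω} = ENNReal.ofReal p) (t : ℝ) :
    mgf (fun ω => if P ω then (1:ℝ) else 0) μ t = 1 - p + p * Real.exp t := by
  have hfun : (fun ω => Real.exp (t * if P ω then (1:ℝ) else 0))
      = fun ω => Set.indicator {ω | P ω} (fun _ => Real.exp t - 1) ω + 1 := by
    funext ω
    by_cases h : P ω <;>
      simp [h, Set.indicator_of_mem, Set.indicator_of_notMem, Set.mem_setOf_eq]
  rw [mgf, hfun, integral_add ((integrable_const _).indicator hs) (integrable_const 1),
    integral_indicator_const _ hs, integral_const, probReal_univ, measureReal_def, hμs]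
  simp [ENNReal.toReal_ofReal hp0]
  ring

lemma bern_sum_tail' {Ω : Type*} [MeasurableSpace Ω] (μ : Measure Ω) [IsProbabilityMeasure μ]
    (Y : ℕ → Ω → ℝ) (hmeas : ∀ i, Measurable (Y i))
    (hbdd : ∀ i ω, Y i ω ∈ Set.Icc (0:ℝ) 1)
    (hind : ProbabilityTheory.iIndepFun Y μ)
    (p : ℝ) (hp0 : 0 ≤ p) (hp1 : p ≤ 1)
    (hmgf : ∀ i t, mgf (Y i) μ t = 1 - p + p * Real.exp t)
    (M : ℕ) (hM : 0 < M) (c : ℝ) (hc : (M:ℝ) * p < c) :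
    (μ {ω | c ≤ ∑ i ∈ Finset.range M, Y i ω}).toReal
      ≤ Real.exp (-2 * (c - M * p) ^ 2 / M) := by
  set t : ℝ := 4 * (c - M * p) / M with htdef
  have hMpos : (0:ℝ) < M := Nat.cast_pos.mpr hM
  have htpos : 0 ≤ t := by
    apply div_nonneg _ hMpos.le
    linarith
  set S : Ω → ℝ := ∑ i ∈ Finset.range M, Y i with hSdef
  have hSapp : ∀ ω, S ω = ∑ i ∈ Finset.range M, Y i ω := by
    intro ω; simp [hSdef]
  have hSmeas : Measurable S := by
    have : Measurable fun ω => ∑ i ∈ Finset.range M, Y i ω :=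
      Finset.measurable_sum _ fun i _ => hmeas i
    have he : S = fun ω => ∑ i ∈ Finset.range M, Y i ω := funext hSapp
    rw [he]; exact this
  have hint : Integrable (fun ω => Real.exp (t * S ω)) μ := by
    apply Integrable.mono' (integrable_const (Real.exp (t * M)))
      ((hSmeas.const_mul t).exp.aestronglyMeasurable)
    refine Filter.Eventually.of_forall fun ω => ?_
    rw [Real.norm_eq_abs, Real.abs_exp, Real.exp_le_exp]
    apply mul_le_mul_of_nonneg_left _ htpos
    rw [hSapp]
    calc ∑ i ∈ Finset.range M, Y i ω ≤ ∑ i ∈ Finset.range M, 1 :=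
          Finset.sum_le_sum fun i _ => (hbdd i ω).2
      _ = (M:ℝ) := by simp
  have h1 : (μ {ω | c ≤ S ω}).toReal ≤ Real.exp (-t * c) * mgf S μ t :=
    measure_ge_le_exp_mul_mgf c htpos hint
  have h2 : mgf S μ t = (1 - p + p * Real.exp t) ^ M := by
    rw [hSdef, hind.mgf_sum hmeas]
    simp [hmgf]
  have hbase : 0 ≤ 1 - p + p * Real.exp t := by nlinarith [Real.exp_pos t, mul_nonneg hp0 (Real.exp_pos t).le]
  have h3 : (1 - p + p * Real.exp t) ^ M ≤ Real.exp (M * (p * t + t ^ 2 / 8)) := by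
    calc (1 - p + p * Real.exp t) ^ M ≤ (Real.exp (p * t + t ^ 2 / 8)) ^ M :=
          pow_le_pow_left₀ hbase (bern_mgf_le' p hp0 hp1 t htpos) M
      _ = Real.exp (M * (p * t + t ^ 2 / 8)) := by
          rw [← Real.exp_nat_mul]
  have h4 : Real.exp (-t * c) * mgf S μ t ≤ Real.exp (-t * c + M * (p * t + t ^ 2 / 8)) := by
    rw [Real.exp_add, h2]
    exact mul_le_mul_of_nonneg_left h3 (Real.exp_pos _).le
  have h5 : -t * c + M * (p * t + t ^ 2 / 8) = -2 * (c - M * p) ^ 2 / M := by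
    rw [htdef]
    field_simp
    ring
  have hset : {ω | c ≤ ∑ i ∈ Finset.range M, Y i ω} = {ω | c ≤ S ω} := by
    ext ω; rw [Set.mem_setOf_eq, Set.mem_setOf_eq, hSapp]
  rw [hset]
  calc (μ {ω | c ≤ S ω}).toReal ≤ Real.exp (-t * c) * mgf S μ t := h1
    _ ≤ Real.exp (-t * c + M * (p * t + t ^ 2 / 8)) := h4
    _ = Real.exp (-2 * (c - M * p) ^ 2 / M) := by rw [h5]

lemma filt_mono' {P : ℕ → Prop} [DecidablePred P] {m n : ℕ} (h : m ≤ n) :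
    ((Finset.range m).filter P).card ≤ ((Finset.range n).filter P).card :=
  Finset.card_le_card (Finset.filter_subset_filter _ (Finset.range_subset_range.mpr h))

lemma filt_succ' {P : ℕ → Prop} [DecidablePred P] (n : ℕ) :
    ((Finset.range (n+1)).filter P).card ≤ ((Finset.range n).filter P).card + 1 := by
  rw [Finset.range_add_one, Finset.filter_insert]
  split
  · exact Finset.card_insert_le _ _
  · exact Nat.le_succ _

lemma filt_succ_of' {P : ℕ → Prop} [DecidablePred P] {n : ℕ} (h : P n) :
    ((Finset.range (n+1)).filter P).card = ((Finset.range n).filter P).card + 1 := by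
  rw [Finset.range_add_one, Finset.filter_insert, if_pos h,
    Finset.card_insert_of_notMem (by simp)]

lemma filt_unbounded' {P : ℕ → Prop} [DecidablePred P]
    (h : ∀ m, ∃ i, m ≤ i ∧ P i) (k : ℕ) :
    ∃ n, k ≤ ((Finset.range n).filter P).card := by
  induction k with
  | zero => exact ⟨0, Nat.zero_le _⟩
  | succ k ih =>
    obtain ⟨n, hn⟩ := ih
    obtain ⟨i, hni, hPi⟩ := h n
    refine ⟨i + 1, ?_⟩
    rw [filt_succ_of' hPi]
    exact Nat.succ_le_succ (le_trans hn (filt_mono' hni))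

end Aux

/-- Exponential tail bound for the length of the left-over regime.
With the setup of the i.i.d. assignment process (options `a ∈ A₀ = {0,…,A}` with
probabilities `ρ_a`, fulfillment times `N_a`, `N* = min_a N_a`), for every `ε ∈ (0,1)`,
`P{N − N* ≥ εN} ≤ Σ_a exp(−2 ε² ρ_a² N)`. -/
theorem stmt_13 {Ω : Type*} [MeasurableSpace Ω] (μ : Measure Ω) [IsProbabilityMeasure μ]
    (A : ℕ) (ρ : Fin (A + 1) → ℝ) (hρpos : ∀ a, 0 < ρ a) (hρsum : ∑ a, ρ a = 1)
    (N : ℕ) (hN : 0 < N)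
    (C : Fin (A + 1) → ℕ) (hCpos : ∀ a, 0 < C a) (hC : ∀ a, (C a : ℝ) = ρ a * N)
    (X : ℕ → Ω → Fin (A + 1)) (hXmeas : ∀ n, Measurable (X n))
    (hXindep : ProbabilityTheory.iIndepFun X μ)
    (hXdist : ∀ n a, μ {ω | X n ω = a} = ENNReal.ofReal (ρ a))
    (ε : ℝ) (hε : ε ∈ Set.Ioo (0:ℝ) 1) :
    (μ {ω | ε * N ≤ (N : ℝ) -
        ((Finset.univ.inf' Finset.univ_nonempty (fun a : Fin (A + 1) =>
          sInf {n : ℕ | ((Finset.range n).filter (fun m => X m ω = a)).card = C a}) : ℕ) : ℝ)}).toReal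
      ≤ ∑ a, Real.exp (-2 * ε ^ 2 * ρ a ^ 2 * N) := by
  classical
  obtain ⟨hε0, hε1⟩ := hε
  have hNpos : (0:ℝ) < N := Nat.cast_pos.mpr hN
  set M : ℕ := ⌊(1 - ε) * N⌋₊ with hMdef
  have hMle : (M:ℝ) ≤ (1 - ε) * N := Nat.floor_le (by nlinarith)
  have hMN : (M:ℝ) ≤ N := by nlinarith
  set E : Fin (A+1) → Set Ω :=
    fun a => {ω | C a ≤ ((Finset.range M).filter (fun m => X m ω = a)).card} with hE
  set F : Fin (A+1) → Set Ω :=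
    fun a => {ω | ∀ n, ((Finset.range n).filter (fun m => X m ω = a)).card < C a} with hF
  have hρle1 : ∀ a, ρ a ≤ 1 := by
    intro a
    rw [← hρsum]
    exact Finset.single_le_sum (fun b _ => (hρpos b).le) (Finset.mem_univ a)
  -- inclusion of the event in the union
  have hsub : {ω | ε * N ≤ (N : ℝ) -
        ((Finset.univ.inf' Finset.univ_nonempty (fun a : Fin (A + 1) =>
          sInf {n : ℕ | ((Finset.range n).filter (fun m => X m ω = a)).card = C a}) : ℕ) : ℝ)}
      ⊆ ⋃ a, E a ∪ F a := by
    intro ω hω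
    simp only [Set.mem_setOf_eq] at hω
    obtain ⟨a, -, ha⟩ := Finset.exists_mem_eq_inf' Finset.univ_nonempty
      (fun a : Fin (A+1) =>
        sInf {n : ℕ | ((Finset.range n).filter (fun m => X m ω = a)).card = C a})
    have hNsM : sInf {n : ℕ | ((Finset.range n).filter (fun m => X m ω = a)).card = C a} ≤ M := by
      rw [← ha]
      apply Nat.le_floor
      set Ns := Finset.univ.inf' Finset.univ_nonempty (fun a : Fin (A+1) =>
        sInf {n : ℕ | ((Finset.range n).filter (fun m => X m ω = a)).card = C a})
      push_cast
      nlinarith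
    rw [Set.mem_iUnion]
    refine ⟨a, ?_⟩
    by_cases hne : {n : ℕ | ((Finset.range n).filter (fun m => X m ω = a)).card = C a}.Nonempty
    · left
      have hmem := Nat.sInf_mem hne
      simp only [Set.mem_setOf_eq] at hmem
      show C a ≤ _
      calc C a = _ := hmem.symm
        _ ≤ ((Finset.range M).filter (fun m => X m ω = a)).card := filt_mono' hNsM
    · right
      have hnn : ∀ n, ((Finset.range n).filter (fun m => X m ω = a)).card ≠ C a :=
        fun n hn => hne ⟨n, hn⟩
      intro n
      induction n with
      | zero => simpa using hCpos a
      | succ n ih =>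
        have h2 := filt_succ' (P := fun m => X m ω = a) n
        exact lt_of_le_of_ne (by omega) (hnn (n+1))
  -- the escape events are null
  have hF0 : ∀ a, μ (F a) = 0 := by
    intro a
    set G : ℕ → Set Ω := fun m => {ω | ∀ i, m ≤ i → X i ω ≠ a} with hG
    have hGnull : ∀ m, μ (G m) = 0 := by
      intro m
      set q : ℝ≥0∞ := 1 - ENNReal.ofReal (ρ a) with hq
      have hqt : q ≠ ⊤ := (lt_of_le_of_lt tsub_le_self ENNReal.one_lt_top).ne
      have hq1 : q < 1 :=
        ENNReal.sub_lt_self ENNReal.one_ne_top one_ne_zero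
          (by simp [ENNReal.ofReal_eq_zero, not_le]; exact hρpos a)
      have hbound : ∀ k, μ (G m) ≤ q ^ k := by
        intro k
        have hsubk : G m ⊆ ⋂ i ∈ Finset.Ico m (m + k), X i ⁻¹' {a}ᶜ := by
          intro ω hω
          simp only [hG, Set.mem_setOf_eq] at hω
          simp only [Set.mem_iInter, Finset.mem_Ico, Set.mem_preimage, Set.mem_compl_iff,
            Set.mem_singleton_iff]
          exact fun i hi => hω i hi.1
        have hprod : μ (⋂ i ∈ Finset.Ico m (m+k), X i ⁻¹' {a}ᶜ)
            = ∏ i ∈ Finset.Ico m (m+k), μ (X i ⁻¹' {a}ᶜ) :=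
          hXindep.meas_biInter (fun i _ => ⟨{a}ᶜ, (measurableSet_singleton a).compl, rfl⟩)
        have hμc : ∀ i : ℕ, μ (X i ⁻¹' {a}ᶜ) = q := by
          intro i
          have he : X i ⁻¹' {a}ᶜ = {ω | X i ω = a}ᶜ := by
            ext ω; simp [Set.mem_preimage]
          rw [he, measure_compl (show MeasurableSet {ω | X i ω = a} from
              (hXmeas i) (measurableSet_singleton a)) (measure_ne_top μ _),
            measure_univ, hXdist i a]
        calc μ (G m) ≤ μ (⋂ i ∈ Finset.Ico m (m+k), X i ⁻¹' {a}ᶜ) := measure_mono hsubk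
          _ = ∏ i ∈ Finset.Ico m (m+k), μ (X i ⁻¹' {a}ᶜ) := hprod
          _ = q ^ k := by
              rw [Finset.prod_congr rfl fun i _ => hμc i, Finset.prod_const, Nat.card_Ico]
              simp
      have hr : ∀ k, (μ (G m)).toReal ≤ q.toReal ^ k := by
        intro k
        calc (μ (G m)).toReal ≤ (q ^ k).toReal :=
              ENNReal.toReal_mono (ENNReal.pow_ne_top hqt) (hbound k)
          _ = q.toReal ^ k := ENNReal.toReal_pow _ _
      have hq1r : q.toReal < 1 := by
        have := (ENNReal.toReal_lt_toReal hqt ENNReal.one_ne_top).mpr hq1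
        simpa using this
      have h0 : (μ (G m)).toReal ≤ 0 :=
        ge_of_tendsto' (tendsto_pow_atTop_nhds_zero_of_lt_one ENNReal.toReal_nonneg hq1r) hr
      have := le_antisymm h0 ENNReal.toReal_nonneg
      exact (ENNReal.toReal_eq_zero_iff _).mp this |>.resolve_right (measure_ne_top μ _)
    have hFG : F a ⊆ ⋃ m, G m := by
      intro ω hω
      simp only [hF, Set.mem_setOf_eq] at hω
      by_contra hcon
      simp only [Set.mem_iUnion, hG, Set.mem_setOf_eq] at hcon
      push_neg at hcon
      obtain ⟨n, hn⟩ := filt_unbounded' hcon (C a)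
      exact absurd hn (not_le.mpr (hω n))
    exact measure_mono_null hFG (measure_iUnion_null hGnull)
  -- Chernoff bound for each main event
  have hEbound : ∀ a, (μ (E a)).toReal ≤ Real.exp (-2 * ε ^ 2 * ρ a ^ 2 * N) := by
    intro a
    rcases Nat.eq_zero_or_pos M with hM0 | hMpos
    · have hEempty : E a = ∅ := by
        ext ω
        simp only [hE, Set.mem_setOf_eq, hM0, Set.mem_empty_iff_false, iff_false, not_le]
        simpa using hCpos a
      rw [hEempty]
      simp [Real.exp_nonneg]
    · set Y : ℕ → Ω → ℝ := fun i ω => if X i ω = a then 1 else 0 with hY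
      have hmeasY : ∀ i, Measurable (Y i) := by
        intro i
        exact Measurable.ite ((hXmeas i) (measurableSet_singleton a))
          measurable_const measurable_const
      have hbddY : ∀ i ω, Y i ω ∈ Set.Icc (0:ℝ) 1 := by
        intro i ω
        by_cases h : X i ω = a <;> simp [hY, h]
      have hindY : ProbabilityTheory.iIndepFun Y μ := by
        have := hXindep.comp (fun _ (b : Fin (A+1)) => if b = a then (1:ℝ) else 0)
          (fun _ => measurable_of_countable _)
        exact this
      have hmgfY : ∀ i t, mgf (Y i) μ t = 1 - ρ a + ρ a * Real.exp t := by
        intro i t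
        exact indicator_mgf' μ (P := fun ω => X i ω = a)
          ((hXmeas i) (measurableSet_singleton a)) (ρ a) (hρpos a).le (hXdist i a) t
      have hMltN : (M:ℝ) < N := by nlinarith
      have hc : (M:ℝ) * ρ a < C a := by
        rw [hC a]
        nlinarith [hρpos a]
      have hEeq : E a = {ω | (C a : ℝ) ≤ ∑ i ∈ Finset.range M, Y i ω} := by
        ext ω
        simp only [hE, Set.mem_setOf_eq, hY, Finset.sum_boole]
        exact_mod_cast Iff.symm Nat.cast_le
      have hmain := bern_sum_tail' μ Y hmeasY hbddY hindY (ρ a) (hρpos a).le (hρle1 a)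
        hmgfY M hMpos (C a) hc
      rw [hEeq]
      refine le_trans hmain (Real.exp_le_exp.mpr ?_)
      have hMposR : (0:ℝ) < M := Nat.cast_pos.mpr hMpos
      rw [div_le_iff₀ hMposR]
      have hδ : ρ a * (ε * N) ≤ (C a : ℝ) - M * ρ a := by
        rw [hC a]
        nlinarith [hρpos a]
      have hδ0 : 0 ≤ ρ a * (ε * N) := mul_nonneg (hρpos a).le (by positivity)
      nlinarith [mul_le_mul hδ hδ hδ0 (le_trans hδ0 hδ), sq_nonneg (ε * ρ a),
        mul_le_mul_of_nonneg_left hMN (by positivity : (0:ℝ) ≤ ε^2 * ρ a^2 * N)]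
  -- assembly
  have hmeasle : μ {ω | ε * N ≤ (N : ℝ) -
        ((Finset.univ.inf' Finset.univ_nonempty (fun a : Fin (A + 1) =>
          sInf {n : ℕ | ((Finset.range n).filter (fun m => X m ω = a)).card = C a}) : ℕ) : ℝ)}
      ≤ ∑ a, μ (E a) := by
    calc μ _ ≤ μ (⋃ a, E a ∪ F a) := measure_mono hsub
      _ ≤ ∑ a, μ (E a ∪ F a) := measure_iUnion_fintype_le _ _
      _ ≤ ∑ a, μ (E a) := by
          refine Finset.sum_le_sum fun a _ => ?_
          calc μ (E a ∪ F a) ≤ μ (E a) + μ (F a) := measure_union_le _ _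
            _ = μ (E a) := by rw [hF0 a, add_zero]
  calc (μ _).toReal ≤ (∑ a, μ (E a)).toReal :=
        ENNReal.toReal_mono (by
          exact (ENNReal.sum_lt_top.mpr fun a _ => measure_lt_top μ _).ne) hmeasle
    _ = ∑ a, (μ (E a)).toReal := ENNReal.toReal_sum fun a _ => measure_ne_top μ _
    _ ≤ ∑ a, Real.exp (-2 * ε ^ 2 * ρ a ^ 2 * N) := Finset.sum_le_sum fun a _ => hEbound a
end
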